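/- arXiv:1404.4708 — 12 statements merged into one kernel-verified Lean document; each statement's English description precedes it below -/
import Mathlib

section
/- Let X and Y be Banach spaces over ℂ, S : X → Y and T : Y → X bounded linear operators such that (S,T) is a Fredholm pair. Then R(S) and N(T) + R(S) are closed subspaces of Y, and R(T) and N(S) + R(T) are closed subspaces of X. -/
open Module

/-- The space `A / (A ∩ B)` for submodules `A B` of a module, realized as the quotient of `A`
by the preimage of `B` under the inclusion of `A`. -/
abbrev relQuot {X : Type*} [AddCommGroup X] [Module ℂ X] (A B : Submodule ℂ X) : Type _ :=
  ↥A ⧸ (B.comap A.subtype)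

/-- The dimension of `A / (A ∩ B)`. -/
noncomputable def relDim {X : Type*} [AddCommGroup X] [Module ℂ X] (A B : Submodule ℂ X) : ℕ :=
  finrank ℂ (relQuot A B)

/-- `(S, T)` is a Fredholm pair: the four quotients `N(S)/(N(S) ∩ R(T))`,
`R(T)/(N(S) ∩ R(T))`, `N(T)/(N(T) ∩ R(S))` and `R(S)/(N(T) ∩ R(S))` are all
finite dimensional. -/
def IsFredholmPair {X Y : Type*} [SeminormedAddCommGroup X] [NormedSpace ℂ X]
    [SeminormedAddCommGroup Y] [NormedSpace ℂ Y] (S : X →L[ℂ] Y) (T : Y →L[ℂ] X) : Prop :=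
  FiniteDimensional ℂ (relQuot (LinearMap.ker (S : X →ₗ[ℂ] Y)) (LinearMap.range (T : Y →ₗ[ℂ] X))) ∧
  FiniteDimensional ℂ (relQuot (LinearMap.range (T : Y →ₗ[ℂ] X)) (LinearMap.ker (S : X →ₗ[ℂ] Y))) ∧
  FiniteDimensional ℂ (relQuot (LinearMap.ker (T : Y →ₗ[ℂ] X)) (LinearMap.range (S : X →ₗ[ℂ] Y))) ∧
  FiniteDimensional ℂ (relQuot (LinearMap.range (S : X →ₗ[ℂ] Y)) (LinearMap.ker (T : Y →ₗ[ℂ] X)))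


section Aux

variable {E F : Type*} [NormedAddCommGroup E] [NormedSpace ℂ E]
  [NormedAddCommGroup F] [NormedSpace ℂ F]

/-- The continuous lift of `f` to `E ⧸ ker f`. -/
noncomputable def cLiftQ (f : E →L[ℂ] F) : (E ⧸ f.ker) →L[ℂ] F :=
  LinearMap.mkContinuous ((f.ker).liftQ (f : E →ₗ[ℂ] F) le_rfl) ‖f‖ (by
    intro x
    refine le_of_forall_pos_le_add fun ε hε => ?_
    have hδ : (0:ℝ) < ε / (‖f‖ + 1) := by positivity
    obtain ⟨m, hm, hm'⟩ := Submodule.Quotient.norm_mk_lt x hδ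
    have h0 : (0:ℝ) ≤ ‖f‖ := norm_nonneg f
    have h1 : ‖f‖ * (ε / (‖f‖ + 1)) ≤ ε := by
      have h2 : ‖f‖ / (‖f‖ + 1) ≤ 1 :=
        (div_le_one (by positivity)).mpr (by linarith)
      calc ‖f‖ * (ε / (‖f‖ + 1)) = (‖f‖ / (‖f‖ + 1)) * ε := by ring
        _ ≤ 1 * ε := mul_le_mul_of_nonneg_right h2 hε.le
        _ = ε := one_mul ε
    calc ‖(f.ker).liftQ (f : E →ₗ[ℂ] F) le_rfl x‖
        = ‖f m‖ := by rw [← hm, Submodule.liftQ_apply]; rfl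
      _ ≤ ‖f‖ * ‖m‖ := f.le_opNorm m
      _ ≤ ‖f‖ * (‖x‖ + ε / (‖f‖ + 1)) :=
          mul_le_mul_of_nonneg_left hm'.le h0
      _ ≤ ‖f‖ * ‖x‖ + ε := by rw [mul_add]; linarith)

theorem cLiftQ_range (f : E →L[ℂ] F) :
    (cLiftQ f).range = f.range := by
  exact Submodule.range_liftQ (f.ker) (f : E →ₗ[ℂ] F) le_rfl

theorem cLiftQ_ker (f : E →L[ℂ] F) : (cLiftQ f).ker = ⊥ :=
  Submodule.ker_liftQ_eq_bot _ _ _ le_rfl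

/-- A continuous linear map between Banach spaces whose range has finite codimension has
closed range. -/
theorem isClosed_range_of_finiteDimensional_quotient [CompleteSpace E] [CompleteSpace F]
    (f : E →L[ℂ] F) (h : FiniteDimensional ℂ (F ⧸ f.range)) :
    IsClosed ((f.range : Submodule ℂ F) : Set F) := by
  haveI : IsClosed ((f.ker : Submodule ℂ E) : Set E) := ContinuousLinearMap.isClosed_ker f
  obtain ⟨G, hG⟩ := Submodule.exists_isCompl (f.range)
  haveI : FiniteDimensional ℂ G :=
    (Submodule.quotientEquivOfIsCompl _ G hG).finiteDimensional
  have hGc : IsClosed ((G : Submodule ℂ F) : Set F) := G.closed_of_finiteDimensional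
  have hG' : IsCompl ((cLiftQ f).range) G := by rw [cLiftQ_range]; exact hG
  have := (cLiftQ f).closed_complemented_range_of_isCompl_of_ker_eq_bot G hG' hGc (cLiftQ_ker f)
  rwa [cLiftQ_range] at this

/-- The sup of a closed submodule and a finite-dimensional submodule is closed. -/
theorem isClosed_sup_of_finiteDimensional [CompleteSpace F] {A B : Submodule ℂ F}
    (hA : IsClosed (A : Set F)) [FiniteDimensional ℂ B] :
    IsClosed ((A ⊔ B : Submodule ℂ F) : Set F) := by
  haveI : IsClosed ((A : Submodule ℂ F) : Set F) := hA
  let π : F →L[ℂ] F ⧸ A :=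
    LinearMap.mkContinuous A.mkQ 1 (fun x => by
      simpa using Submodule.Quotient.norm_mk_le A x)
  have hBc : IsClosed ((B.map A.mkQ : Submodule ℂ (F ⧸ A)) : Set (F ⧸ A)) :=
    (B.map A.mkQ).closed_of_finiteDimensional
  have hset : ((A ⊔ B : Submodule ℂ F) : Set F) = π ⁻¹' (B.map A.mkQ : Set (F ⧸ A)) := by
    have := Submodule.comap_map_mkQ A B
    rw [← this]
    rfl
  rw [hset]
  exact hBc.preimage π.continuous

end Aux

/-- One half of the Fredholm pair range-closedness theorem. -/
theorem aux_one_side {X Y : Type*} [NormedAddCommGroup X] [NormedSpace ℂ X]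
    [CompleteSpace X] [NormedAddCommGroup Y] [NormedSpace ℂ Y] [CompleteSpace Y]
    (S : X →L[ℂ] Y) (T : Y →L[ℂ] X)
    (h1 : FiniteDimensional ℂ (↥(T.ker) ⧸
      ((S.range).comap (T.ker).subtype)))
    (h2 : FiniteDimensional ℂ (↥(S.range) ⧸
      ((T.ker).comap (S.range).subtype))) :
    IsClosed ((S.range : Submodule ℂ Y) : Set Y) ∧
    IsClosed ((T.ker ⊔ S.range : Submodule ℂ Y) : Set Y) := by
  set NT := T.ker with hNT
  set RS := S.range with hRS
  have hNTc : IsClosed ((NT : Submodule ℂ Y) : Set Y) := ContinuousLinearMap.isClosed_ker T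
  haveI : CompleteSpace NT := hNTc.completeSpace_coe
  set M := (T.comp S).ker with hM
  have hMc : IsClosed ((M : Submodule ℂ X) : Set X) := ContinuousLinearMap.isClosed_ker (T.comp S)
  haveI : CompleteSpace M := hMc.completeSpace_coe
  -- the restriction of S to M, viewed as a map into NT
  let S₀ : M →L[ℂ] NT := (S.comp M.subtypeL).codRestrict NT (fun x => x.2)
  have hrange₀ : S₀.range = RS.comap NT.subtype := by
    ext y
    constructor
    · rintro ⟨x, rfl⟩
      exact ⟨(x : X), rfl⟩
    · rintro ⟨x, hx⟩
      have hxM : x ∈ M := by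
        show T (S x) = 0
        rw [show S x = (y : Y) from hx]
        exact y.2
      exact ⟨⟨x, hxM⟩, Subtype.ext hx⟩
  haveI hfd₀ : FiniteDimensional ℂ (↥NT ⧸ S₀.range) := by
    rw [hrange₀]; exact h1
  have hclosed₀ : IsClosed ((S₀.range : Submodule ℂ NT) : Set NT) :=
    isClosed_range_of_finiteDimensional_quotient S₀ hfd₀
  -- RS ⊓ NT is closed in Y
  have hinter : IsClosed ((NT ⊓ RS : Submodule ℂ Y) : Set Y) := by
    have himg : ((NT ⊓ RS : Submodule ℂ Y) : Set Y)
        = Subtype.val '' ((S₀.range : Submodule ℂ NT) : Set NT) := by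
      rw [hrange₀]
      have := Submodule.map_comap_subtype NT RS
      rw [← this]
      rfl
    rw [himg]
    exact (hNTc.isClosedEmbedding_subtypeVal).isClosedMap _ hclosed₀
  -- find a finite-dimensional complement F with (NT ⊓ RS) ⊔ F = RS
  obtain ⟨C, hC⟩ := Submodule.exists_isCompl (NT.comap RS.subtype)
  haveI : FiniteDimensional ℂ C :=
    (Submodule.quotientEquivOfIsCompl _ C hC).finiteDimensional
  set Fsub := C.map RS.subtype with hF
  haveI : FiniteDimensional ℂ Fsub := Module.Finite.map _ _
  have hsup : (NT ⊓ RS) ⊔ Fsub = RS := by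
    have h3 : (NT.comap RS.subtype ⊔ C).map RS.subtype = RS := by
      rw [hC.sup_eq_top, Submodule.map_subtype_top]
    rw [Submodule.map_sup, Submodule.map_comap_subtype] at h3
    rwa [inf_comm] at h3
  have hRSclosed : IsClosed ((RS : Submodule ℂ Y) : Set Y) := by
    rw [← hsup]
    exact isClosed_sup_of_finiteDimensional hinter
  refine ⟨hRSclosed, ?_⟩
  have hsup2 : NT ⊔ RS = NT ⊔ Fsub := by
    rw [← hsup, ← sup_assoc, sup_inf_self]
  rw [hsup2]
  exact isClosed_sup_of_finiteDimensional hNTc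


/-- For a Fredholm pair `(S,T)`, the ranges `R(S)`, `R(T)` and the sums `N(T) + R(S)`,
`N(S) + R(T)` are closed subspaces. -/
theorem fredholmPair_ranges_closed {X Y : Type*} [NormedAddCommGroup X] [NormedSpace ℂ X]
    [CompleteSpace X] [NormedAddCommGroup Y] [NormedSpace ℂ Y] [CompleteSpace Y]
    (S : X →L[ℂ] Y) (T : Y →L[ℂ] X) (h : IsFredholmPair S T) :
    IsClosed ((LinearMap.range (S : X →ₗ[ℂ] Y) : Submodule ℂ Y) : Set Y) ∧
    IsClosed (((LinearMap.ker (T : Y →ₗ[ℂ] X) ⊔ LinearMap.range (S : X →ₗ[ℂ] Y) : Submodule ℂ Y) : Submodule ℂ Y) : Set Y) ∧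
    IsClosed ((LinearMap.range (T : Y →ₗ[ℂ] X) : Submodule ℂ X) : Set X) ∧
    IsClosed (((LinearMap.ker (S : X →ₗ[ℂ] Y) ⊔ LinearMap.range (T : Y →ₗ[ℂ] X) : Submodule ℂ X) : Submodule ℂ X) : Set X) := by
  obtain ⟨h1, h2, h3, h4⟩ := h
  obtain ⟨hc1, hc2⟩ := aux_one_side S T h3 h4
  obtain ⟨hc3, hc4⟩ := aux_one_side T S h1 h2
  exact ⟨hc1, hc2, hc3, hc4⟩
end

section
/- Let X and Y be Banach spaces over ℂ, S : X → Y and T : Y → X bounded linear operators such that (S,T) is a Fredholm pair. Then the following four assertions are equivalent: (i) R(T) is a complemented subspace of X (i.e., admits a closed complement); (ii) N(S) is a complemented subspace of X; (iii) N(S) + R(T) is a complemented subspace of X; (iv) N(S) ∩ R(T) is a complemented subspace of X. -/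
open Module

/-- A subspace `M` of a Banach space is complemented if there exists a closed
subspace `W` with `Z = M ⊕ W`. -/
def HasClosedComplement {Z : Type*} [NormedAddCommGroup Z] [NormedSpace ℂ Z]
    (M : Submodule ℂ Z) : Prop :=
  ∃ W : Submodule ℂ Z, IsClosed (W : Set Z) ∧ IsCompl M W

/-- Sum of a closed subspace and a finite dimensional subspace is closed. -/
private lemma isClosed_sup_fd {Z : Type*} [NormedAddCommGroup Z] [NormedSpace ℂ Z]
    (W F : Submodule ℂ Z) (hW : IsClosed (W : Set Z)) (hF : FiniteDimensional ℂ F) :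
    IsClosed ((W ⊔ F : Submodule ℂ Z) : Set Z) := by
  haveI := hW
  haveI := hF
  have hcont : Continuous W.mkQ :=
    AddMonoidHomClass.continuous_of_bound W.mkQ 1 fun x => by
      simpa using Submodule.Quotient.norm_mk_le (S := W) x
  have hclosed : IsClosed ((F.map W.mkQ : Submodule ℂ (Z ⧸ W)) : Set (Z ⧸ W)) :=
    Submodule.closed_of_finiteDimensional _
  have hkey : ((W ⊔ F : Submodule ℂ Z) : Set Z) = W.mkQ ⁻¹' (F.map W.mkQ) := by
    ext x
    simp only [Set.mem_preimage, SetLike.mem_coe, Submodule.mem_map]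
    constructor
    · intro hx
      rcases Submodule.mem_sup.1 hx with ⟨w, hw, f, hf, rfl⟩
      refine ⟨f, hf, ?_⟩
      have : W.mkQ w = 0 := (Submodule.Quotient.mk_eq_zero W).2 hw
      simp [Submodule.mkQ_apply, Submodule.Quotient.mk_add, this,
        (Submodule.Quotient.mk_eq_zero W).2 hw]
    · rintro ⟨f, hf, hfx⟩
      have hxf : x - f ∈ W := by
        have : W.mkQ (x - f) = 0 := by
          simp only [map_sub, hfx, sub_self]
        exact (Submodule.Quotient.mk_eq_zero W).1 this
      have : x = (x - f) + f := by abel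
      rw [this]
      exact Submodule.add_mem_sup hxf hf
  rw [hkey]
  exact hclosed.preimage hcont

/-- Complementedness passes between a subspace and a finite-codimensional extension. -/
private lemma hcc_iff {Z : Type*} [NormedAddCommGroup Z] [NormedSpace ℂ Z] [CompleteSpace Z]
    {M M' : Submodule ℂ Z} (hle : M ≤ M')
    (hfd : FiniteDimensional ℂ (↥M' ⧸ M.comap M'.subtype)) :
    HasClosedComplement M ↔ HasClosedComplement M' := by
  constructor
  · rintro ⟨W, hWc, hW⟩
    -- F := M' ⊓ W is finite dimensional
    set F : Submodule ℂ Z := M' ⊓ W with hFdef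
    have hFM' : F ≤ M' := inf_le_left
    have hFW : F ≤ W := inf_le_right
    have hinj : Function.Injective
        ((M.comap M'.subtype).mkQ ∘ₗ Submodule.inclusion hFM') := by
      rw [← LinearMap.ker_eq_bot, LinearMap.ker_eq_bot']
      intro x hx
      have hxM : (x : Z) ∈ M := by
        have := (Submodule.Quotient.mk_eq_zero _).1 hx
        simpa [Submodule.mem_comap] using this
      have hxW : (x : Z) ∈ W := hFW x.2
      have : (x : Z) ∈ M ⊓ W := ⟨hxM, hxW⟩
      rw [hW.inf_eq_bot] at this
      exact Subtype.ext this
    haveI hFfd : FiniteDimensional ℂ F := FiniteDimensional.of_injective _ hinj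
    -- get a continuous projection onto F
    obtain ⟨f, hf⟩ := Submodule.ClosedComplemented.of_finiteDimensional F
    refine ⟨W ⊓ LinearMap.ker (f : Z →ₗ[ℂ] F), ?_, ?_, ?_⟩
    · exact hWc.inter (ContinuousLinearMap.isClosed_ker f)
    · rw [disjoint_iff]
      ext x
      simp only [Submodule.mem_inf, Submodule.mem_bot, LinearMap.mem_ker]
      constructor
      · rintro ⟨hxM', hxW, hxf⟩
        have hxF : x ∈ F := ⟨hxM', hxW⟩
        have := hf ⟨x, hxF⟩
        rw [show f ((⟨x, hxF⟩ : F) : Z) = 0 from hxf] at this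
        simpa using congrArg (Subtype.val) this.symm
      · rintro rfl
        simp
    · rw [codisjoint_iff, eq_top_iff]
      intro z _
      have hz : z ∈ M ⊔ W := by rw [hW.sup_eq_top]; trivial
      rcases Submodule.mem_sup.1 hz with ⟨m, hm, w, hw, rfl⟩
      have hfwF : ((f w : F) : Z) ∈ F := (f w).2
      have hfw0 : f (w - (f w : Z)) = 0 := by
        have := hf (f w)
        simp [map_sub, this]
      refine Submodule.mem_sup.2 ⟨m + (f w : Z), ?_, w - (f w : Z), ?_, by abel⟩
      · exact M'.add_mem (hle hm) (hFM' hfwF)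
      · exact ⟨W.sub_mem hw (hFW hfwF), hfw0⟩
  · rintro ⟨W, hWc, hW⟩
    set p : Submodule ℂ ↥M' := M.comap M'.subtype with hpdef
    obtain ⟨q, hq⟩ := p.exists_isCompl
    set F : Submodule ℂ Z := q.map M'.subtype with hFdef
    haveI : FiniteDimensional ℂ q :=
      LinearEquiv.finiteDimensional (Submodule.quotientEquivOfIsCompl p q hq)
    haveI hFfd : FiniteDimensional ℂ F :=
      LinearEquiv.finiteDimensional (Submodule.equivMapOfInjective _ M'.injective_subtype q)
    have hmapp : p.map M'.subtype = M := by
      rw [hpdef, Submodule.map_comap_subtype, inf_eq_right.2 hle]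
    have hMF : M ⊔ F = M' := by
      rw [← hmapp, hFdef, ← Submodule.map_sup, hq.sup_eq_top, Submodule.map_top,
        Submodule.range_subtype]
    have hMFbot : M ⊓ F = ⊥ := by
      rw [← hmapp, hFdef, ← Submodule.map_inf _ M'.injective_subtype, hq.inf_eq_bot,
        Submodule.map_bot]
    have hFM' : F ≤ M' := hMF ▸ le_sup_right
    refine ⟨W ⊔ F, isClosed_sup_fd W F hWc hFfd, ?_, ?_⟩
    · rw [disjoint_iff, eq_bot_iff]
      rintro x ⟨hxM, hxWF⟩
      rcases Submodule.mem_sup.1 hxWF with ⟨w, hw, f, hf, rfl⟩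
      have hwM' : w ∈ M' := by
        have : w = (w + f) - f := by abel
        rw [this]
        exact M'.sub_mem (hle hxM) (hFM' hf)
      have hw0 : w = 0 := by
        have : w ∈ M' ⊓ W := ⟨hwM', hw⟩
        rwa [hW.inf_eq_bot, Submodule.mem_bot] at this
      subst hw0
      have : f ∈ M ⊓ F := ⟨by simpa using hxM, hf⟩
      rw [hMFbot] at this
      simpa using this
    · rw [codisjoint_iff, sup_comm W F, ← sup_assoc, hMF, hW.sup_eq_top]

lemma comap_subtype_inf_left {Z : Type*} [NormedAddCommGroup Z] [NormedSpace ℂ Z]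
    (A B : Submodule ℂ Z) : (A ⊓ B).comap A.subtype = B.comap A.subtype := by
  rw [Submodule.comap_inf, Submodule.comap_subtype_self, top_inf_eq]

/-- For a Fredholm pair `(S,T)` the following are equivalent: `R(T)` is complemented,
`N(S)` is complemented, `N(S) + R(T)` is complemented, `N(S) ∩ R(T)` is complemented. -/
theorem fredholmPair_complemented_tfae {X Y : Type*} [NormedAddCommGroup X] [NormedSpace ℂ X]
    [CompleteSpace X] [NormedAddCommGroup Y] [NormedSpace ℂ Y] [CompleteSpace Y]
    (S : X →L[ℂ] Y) (T : Y →L[ℂ] X) (h : IsFredholmPair S T) :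
    List.TFAE [HasClosedComplement (LinearMap.range (T : Y →ₗ[ℂ] X)),
      HasClosedComplement (LinearMap.ker (S : X →ₗ[ℂ] Y)),
      HasClosedComplement (LinearMap.ker (S : X →ₗ[ℂ] Y) ⊔ LinearMap.range (T : Y →ₗ[ℂ] X)),
      HasClosedComplement (LinearMap.ker (S : X →ₗ[ℂ] Y) ⊓ LinearMap.range (T : Y →ₗ[ℂ] X))] := by
  set K : Submodule ℂ X := LinearMap.ker (S : X →ₗ[ℂ] Y) with hK
  set R : Submodule ℂ X := LinearMap.range (T : Y →ₗ[ℂ] X) with hR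
  -- finite dimensionality of K / (K ⊓ R)
  have h1 : FiniteDimensional ℂ (↥K ⧸ (K ⊓ R).comap K.subtype) := by
    rw [comap_subtype_inf_left]; exact h.1
  -- finite dimensionality of R / (R ⊓ K)
  have h2 : FiniteDimensional ℂ (↥R ⧸ (R ⊓ K).comap R.subtype) := by
    rw [comap_subtype_inf_left]; exact h.2.1
  -- finite dimensionality of (K ⊔ R) / K via the second isomorphism theorem
  have h3 : FiniteDimensional ℂ (↥(K ⊔ R) ⧸ K.comap (K ⊔ R).subtype) := by
    rw [sup_comm K R]
    haveI : FiniteDimensional ℂ (↥R ⧸ R.comap R.subtype ⊓ K.comap R.subtype) := by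
      rw [← Submodule.comap_inf]; exact h2
    exact (LinearMap.quotientInfEquivSupQuotient R K).finiteDimensional
  have h2' : FiniteDimensional ℂ (↥R ⧸ (K ⊓ R).comap R.subtype) := by
    rw [inf_comm K R]; exact h2
  tfae_have 1 ↔ 4 := (hcc_iff inf_le_right h2').symm
  tfae_have 2 ↔ 4 := (hcc_iff inf_le_left h1).symm
  tfae_have 2 ↔ 3 := hcc_iff le_sup_left h3
  tfae_finish
end

section
/- Let X and Y be Hilbert spaces over ℂ, S : X → Y and T : Y → X bounded linear operators such that (S,T) is a Fredholm pair. Then (S,T) is a regular Fredholm pair, i.e., both S and T are regular operators. -/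
open Module

/-- A bounded operator `S` is regular if it has a generalized inverse `S'`
with `S = S ∘ S' ∘ S`. -/
def IsRegularOp {X Y : Type*} [SeminormedAddCommGroup X] [NormedSpace ℂ X]
    [SeminormedAddCommGroup Y] [NormedSpace ℂ Y] (S : X →L[ℂ] Y) : Prop :=
  ∃ S' : Y →L[ℂ] X, S.comp (S'.comp S) = S

section AuxLemmas

open LinearMap (ker range)

/-- A continuous linear map between Banach spaces whose cokernel is finite dimensional
has closed range. -/
theorem isClosed_range_of_quot_finiteDimensional {E F : Type*}
    [NormedAddCommGroup E] [NormedSpace ℂ E] [CompleteSpace E]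
    [NormedAddCommGroup F] [NormedSpace ℂ F] [CompleteSpace F]
    (u : E →L[ℂ] F) (h : FiniteDimensional ℂ (F ⧸ LinearMap.range u.toLinearMap)) :
    IsClosed ((LinearMap.range u.toLinearMap : Submodule ℂ F) : Set F) := by
  haveI : IsClosed ((LinearMap.ker u.toLinearMap : Submodule ℂ E) : Set E) := ContinuousLinearMap.isClosed_ker u
  set K := LinearMap.ker u.toLinearMap with hK
  let uq : (E ⧸ K) →ₗ[ℂ] F := K.liftQ (u : E →ₗ[ℂ] F) le_rfl
  have hbound : ∀ x : E ⧸ K, ‖uq x‖ ≤ ‖u‖ * ‖x‖ := by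
    intro x
    refine le_of_forall_pos_le_add fun ε hε => ?_
    have hu1 : (0:ℝ) < ‖u‖ + 1 := by positivity
    obtain ⟨m, hm, hm'⟩ := Submodule.Quotient.norm_mk_lt x (div_pos hε hu1)
    have hval : uq x = u m := by rw [← hm]; rfl
    have hdiv : ‖u‖ * (ε / (‖u‖ + 1)) ≤ ε := by
      rw [mul_div_assoc', div_le_iff₀ hu1]
      nlinarith [norm_nonneg u, hε.le]
    calc ‖uq x‖ = ‖u m‖ := by rw [hval]
      _ ≤ ‖u‖ * ‖m‖ := u.le_opNorm m
      _ ≤ ‖u‖ * (‖x‖ + ε / (‖u‖ + 1)) :=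
          mul_le_mul_of_nonneg_left hm'.le (norm_nonneg u)
      _ = ‖u‖ * ‖x‖ + ‖u‖ * (ε / (‖u‖ + 1)) := by ring
      _ ≤ ‖u‖ * ‖x‖ + ε := by linarith
  let uqL : (E ⧸ K) →L[ℂ] F := uq.mkContinuous ‖u‖ hbound
  have happ : ∀ m : E, uqL (Submodule.Quotient.mk m) = u m := fun m => rfl
  have hrange : LinearMap.range uqL.toLinearMap = LinearMap.range u.toLinearMap := by
    ext y
    constructor
    · rintro ⟨q, rfl⟩
      obtain ⟨m, rfl⟩ := Submodule.Quotient.mk_surjective K q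
      exact ⟨m, (happ m).symm⟩
    · rintro ⟨m, rfl⟩
      exact ⟨Submodule.Quotient.mk m, happ m⟩
  have hker : LinearMap.ker uqL.toLinearMap = ⊥ := by
    rw [LinearMap.ker_eq_bot']
    intro q hq
    obtain ⟨m, rfl⟩ := Submodule.Quotient.mk_surjective K q
    have hm : m ∈ K := by
      have : u m = 0 := (happ m).symm.trans hq
      exact this
    exact (Submodule.Quotient.mk_eq_zero K).2 hm
  obtain ⟨G, hG⟩ := Submodule.exists_isCompl (LinearMap.range uqL.toLinearMap)
  haveI : FiniteDimensional ℂ ((F ⧸ LinearMap.range uqL.toLinearMap)) := by rwa [hrange]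
  haveI : FiniteDimensional ℂ G :=
    (Submodule.quotientEquivOfIsCompl _ G hG).finiteDimensional
  have hGc : IsClosed (G : Set F) := Submodule.closed_of_finiteDimensional G
  have := uqL.closed_complemented_range_of_isCompl_of_ker_eq_bot G hG hGc hker
  rwa [hrange] at this

/-- The sum of a closed submodule and a finite dimensional submodule is closed. -/
theorem isClosed_sup_of_finiteDimensional_s5 {F : Type*}
    [NormedAddCommGroup F] [NormedSpace ℂ F]
    (M G : Submodule ℂ F) (hM : IsClosed (M : Set F)) [FiniteDimensional ℂ G] :
    IsClosed ((M ⊔ G : Submodule ℂ F) : Set F) := by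
  haveI : IsClosed (M : Set F) := hM
  let π : F →L[ℂ] F ⧸ M := M.mkQ.mkContinuous 1
    (fun x => by simpa using Submodule.Quotient.norm_mk_le M x)
  haveI : FiniteDimensional ℂ (G.map M.mkQ) := Module.Finite.map G M.mkQ
  have h1 : IsClosed ((G.map M.mkQ : Submodule ℂ (F ⧸ M)) : Set (F ⧸ M)) :=
    Submodule.closed_of_finiteDimensional _
  have h2 : ((M ⊔ G : Submodule ℂ F) : Set F) = π ⁻¹' (G.map M.mkQ : Set (F ⧸ M)) := by
    rw [← Submodule.comap_map_mkQ]
    rfl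
  rw [h2]
  exact h1.preimage π.continuous

/-- The range of `S` in a Fredholm-type pair is closed. -/
theorem isClosed_range_of_pair {X Y : Type*}
    [NormedAddCommGroup X] [NormedSpace ℂ X] [CompleteSpace X]
    [NormedAddCommGroup Y] [NormedSpace ℂ Y] [CompleteSpace Y]
    (S : X →L[ℂ] Y) (T : Y →L[ℂ] X)
    (hc : FiniteDimensional ℂ (relQuot (LinearMap.ker T.toLinearMap) (LinearMap.range S.toLinearMap)))
    (hd : FiniteDimensional ℂ (relQuot (LinearMap.range S.toLinearMap) (LinearMap.ker T.toLinearMap))) :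
    IsClosed ((LinearMap.range S.toLinearMap : Submodule ℂ Y) : Set Y) := by
  -- the restriction of `S` to `ker (T ∘ S)`, valued in `ker T`
  haveI : CompleteSpace (LinearMap.ker (T.comp S).toLinearMap) :=
    (ContinuousLinearMap.isClosed_ker (T.comp S)).completeSpace_coe
  let S₀ : (LinearMap.ker (T.comp S).toLinearMap) →L[ℂ] (LinearMap.ker T.toLinearMap) :=
    (S.comp (LinearMap.ker (T.comp S).toLinearMap).subtypeL).codRestrict (LinearMap.ker T.toLinearMap)
      (fun x => by
        have hx := x.2
        simp only [LinearMap.mem_ker, ContinuousLinearMap.comp_apply] at hx ⊢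
        exact hx)
  have hrange : LinearMap.range S₀.toLinearMap =
      (LinearMap.range S.toLinearMap).comap (LinearMap.ker T.toLinearMap).subtype := by
    ext z
    constructor
    · rintro ⟨x, rfl⟩
      exact ⟨x.1, rfl⟩
    · rintro ⟨x, hx⟩
      have hxk : x ∈ LinearMap.ker (T.comp S).toLinearMap := by
        have hz := z.2
        simp only [LinearMap.mem_ker, ContinuousLinearMap.comp_apply]
        change T (S x) = 0
        rw [show S x = z from hx]
        exact hz
      exact ⟨⟨x, hxk⟩, Subtype.ext hx⟩
  haveI : FiniteDimensional ℂ
      ((LinearMap.ker T.toLinearMap : Submodule ℂ Y) ⧸ LinearMap.range S₀.toLinearMap) := by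
    rw [hrange]; exact hc
  have hM0 : IsClosed ((LinearMap.range S₀.toLinearMap :
      Submodule ℂ (LinearMap.ker T.toLinearMap)) : Set (LinearMap.ker T.toLinearMap)) :=
    isClosed_range_of_quot_finiteDimensional S₀ this
  have hsub : IsClosed ((LinearMap.ker T.toLinearMap : Submodule ℂ Y) : Set Y) := ContinuousLinearMap.isClosed_ker T
  have hMclosed : IsClosed
      (((LinearMap.range S₀.toLinearMap).map (LinearMap.ker T.toLinearMap).subtype : Submodule ℂ Y) : Set Y) := by
    rw [Submodule.map_coe]
    exact hsub.isClosedEmbedding_subtypeVal.isClosedMap _ hM0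
  -- finite dimensional complement inside the range of `S`
  obtain ⟨C, hC⟩ :=
    Submodule.exists_isCompl ((LinearMap.ker T.toLinearMap).comap (LinearMap.range S.toLinearMap).subtype)
  haveI : FiniteDimensional ℂ
      ((LinearMap.range S.toLinearMap : Submodule ℂ Y) ⧸
        (LinearMap.ker T.toLinearMap).comap (LinearMap.range S.toLinearMap).subtype) := hd
  haveI : FiniteDimensional ℂ C :=
    (Submodule.quotientEquivOfIsCompl _ C hC).finiteDimensional
  haveI : FiniteDimensional ℂ (C.map (LinearMap.range S.toLinearMap).subtype) :=
    Module.Finite.map C _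
  have hQ : (LinearMap.range S.toLinearMap : Submodule ℂ Y) =
      ((LinearMap.range S₀.toLinearMap).map (LinearMap.ker T.toLinearMap).subtype) ⊔
        (C.map (LinearMap.range S.toLinearMap).subtype) := by
    rw [hrange, Submodule.map_comap_subtype]
    have h1 : ((LinearMap.ker T.toLinearMap).comap (LinearMap.range S.toLinearMap).subtype).map
        (LinearMap.range S.toLinearMap).subtype = LinearMap.range S.toLinearMap ⊓ LinearMap.ker T.toLinearMap :=
      Submodule.map_comap_subtype _ _
    calc (LinearMap.range S.toLinearMap : Submodule ℂ Y)
        = (((LinearMap.ker T.toLinearMap).comap (LinearMap.range S.toLinearMap).subtype) ⊔ C).map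
            (LinearMap.range S.toLinearMap).subtype := by
          rw [hC.sup_eq_top, Submodule.map_top, Submodule.range_subtype]
      _ = (LinearMap.ker T.toLinearMap ⊓ LinearMap.range S.toLinearMap) ⊔ C.map (LinearMap.range S.toLinearMap).subtype := by
          rw [Submodule.map_sup, h1, inf_comm]
  rw [hQ]
  exact isClosed_sup_of_finiteDimensional_s5 _ _ hMclosed

/-- A continuous linear map between Hilbert spaces with closed range is regular. -/
theorem isRegularOp_of_isClosed_range {X Y : Type*} [NormedAddCommGroup X]
    [InnerProductSpace ℂ X] [CompleteSpace X] [NormedAddCommGroup Y]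
    [InnerProductSpace ℂ Y] [CompleteSpace Y] (S : X →L[ℂ] Y)
    (hR : IsClosed ((LinearMap.range S.toLinearMap : Submodule ℂ Y) : Set Y)) :
    IsRegularOp S := by
  haveI : CompleteSpace (LinearMap.range S.toLinearMap) := hR.completeSpace_coe
  haveI : CompleteSpace ((LinearMap.ker S.toLinearMap)ᗮ : Submodule ℂ X) :=
    (Submodule.isClosed_orthogonal _).completeSpace_coe
  haveI : CompleteSpace (LinearMap.ker S.toLinearMap) := (ContinuousLinearMap.isClosed_ker S).completeSpace_coe
  let S₁ : ((LinearMap.ker S.toLinearMap)ᗮ : Submodule ℂ X) →L[ℂ] (LinearMap.range S.toLinearMap) :=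
    (S.comp (LinearMap.ker S.toLinearMap)ᗮ.subtypeL).codRestrict (LinearMap.range S.toLinearMap)
      (fun x => LinearMap.mem_range_self _ _)
  have hker : LinearMap.ker S₁.toLinearMap = ⊥ := by
    rw [LinearMap.ker_eq_bot']
    intro x hx
    have hx1 : S x.1 = 0 := congrArg Subtype.val hx
    have hmem : x.1 ∈ LinearMap.ker S.toLinearMap ⊓ (LinearMap.ker S.toLinearMap)ᗮ := ⟨hx1, x.2⟩
    rw [(LinearMap.ker S.toLinearMap).orthogonal_disjoint.eq_bot] at hmem
    exact Subtype.ext hmem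
  have hsurj : LinearMap.range S₁.toLinearMap = ⊤ := by
    rw [LinearMap.range_eq_top]
    rintro ⟨y, hy⟩
    obtain ⟨x, rfl⟩ := hy
    have hx : x ∈ (LinearMap.ker S.toLinearMap) ⊔ (LinearMap.ker S.toLinearMap)ᗮ := by
      rw [Submodule.sup_orthogonal_of_hasOrthogonalProjection]; trivial
    obtain ⟨p, hp, q, hq, rfl⟩ := Submodule.mem_sup.1 hx
    refine ⟨⟨q, hq⟩, Subtype.ext ?_⟩
    show S q = S (p + q)
    have hp0 : S p = 0 := hp
    rw [map_add, hp0, zero_add]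
  let e := ContinuousLinearEquiv.ofBijective S₁ hker hsurj
  let S' : Y →L[ℂ] X :=
    (LinearMap.ker S.toLinearMap)ᗮ.subtypeL.comp
      ((e.symm : (LinearMap.range S.toLinearMap : Submodule ℂ Y) →L[ℂ] _).comp
        (Submodule.orthogonalProjection (LinearMap.range S.toLinearMap)))
  refine ⟨S', ?_⟩
  ext x
  have h1 : Submodule.orthogonalProjection (LinearMap.range S.toLinearMap) (S x) =
      ⟨S x, LinearMap.mem_range_self _ _⟩ :=
    Subtype.ext ((Submodule.starProjection_eq_self_iff (K := LinearMap.range S.toLinearMap)).2 (LinearMap.mem_range_self _ _))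
  simp only [ContinuousLinearMap.comp_apply, ContinuousLinearMap.coe_coe, S', h1]
  have h2 : ∀ z : ((LinearMap.ker S.toLinearMap)ᗮ : Submodule ℂ X),
      S ((LinearMap.ker S.toLinearMap)ᗮ.subtypeL z) = (e z : Y) := fun z => rfl
  rw [h2]
  simp only [ContinuousLinearEquiv.coe_coe]
  rw [e.apply_symm_apply]

end AuxLemmas

/-- A Fredholm pair of operators between Hilbert spaces is a regular Fredholm pair. -/
theorem fredholmPair_hilbert_regular {X Y : Type*} [NormedAddCommGroup X]
    [InnerProductSpace ℂ X] [CompleteSpace X] [NormedAddCommGroup Y]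
    [InnerProductSpace ℂ Y] [CompleteSpace Y]
    (S : X →L[ℂ] Y) (T : Y →L[ℂ] X) (h : IsFredholmPair S T) :
    IsRegularOp S ∧ IsRegularOp T := by
  obtain ⟨ha, hb, hc, hd⟩ := h
  exact ⟨isRegularOp_of_isClosed_range S (isClosed_range_of_pair S T hc hd),
    isRegularOp_of_isClosed_range T (isClosed_range_of_pair T S ha hb)⟩
end

section
/- Let X and Y be Banach spaces over ℂ and let (S,T) be a regular Fredholm pair, S : X → Y, T : Y → X. Then there exist bounded linear operators S' : Y → X and T' : X → Y such that: (i) S' and T' are normalized generalized inverses of S and T respectively, i.e., S = S S' S, S' = S' S S', T = T T' T, and T' = T' T T'; (ii) (S',T') is a regular Fredholm pair (of operators Y → X and X → Y); and (iii) ind(S',T') = − ind(S,T). -/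
open Module

/-- The index of a Fredholm pair: `ind (S,T) = a - b - c + d`. -/
noncomputable def fpIndex {X Y : Type*} [SeminormedAddCommGroup X] [NormedSpace ℂ X]
    [SeminormedAddCommGroup Y] [NormedSpace ℂ Y] (S : X →L[ℂ] Y) (T : Y →L[ℂ] X) : ℤ :=
  (relDim (LinearMap.ker (S : X →ₗ[ℂ] Y)) (LinearMap.range (T : Y →ₗ[ℂ] X)) : ℤ)
    - (relDim (LinearMap.range (T : Y →ₗ[ℂ] X)) (LinearMap.ker (S : X →ₗ[ℂ] Y)) : ℤ)
    - (relDim (LinearMap.ker (T : Y →ₗ[ℂ] X)) (LinearMap.range (S : X →ₗ[ℂ] Y)) : ℤ)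
    + (relDim (LinearMap.range (S : X →ₗ[ℂ] Y)) (LinearMap.ker (T : Y →ₗ[ℂ] X)) : ℤ)


lemma finDim_relQuot_congr {X : Type*} [AddCommGroup X] [Module ℂ X]
    {A A' B B' : Submodule ℂ X} (hA : A = A') (hB : B = B')
    (h : FiniteDimensional ℂ (relQuot A B)) : FiniteDimensional ℂ (relQuot A' B') := by
  subst hA; subst hB; exact h

lemma relDim_congr {X : Type*} [AddCommGroup X] [Module ℂ X]
    {A A' B B' : Submodule ℂ X} (hA : A = A') (hB : B = B') :
    relDim A B = relDim A' B' := by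
  subst hA; subst hB; rfl

lemma key {Z : Type*} [NormedAddCommGroup Z] [NormedSpace ℂ Z]
    (q r : Z →L[ℂ] Z) (hq : ∀ x, q (q x) = q x) (hr : ∀ x, r (r x) = r x)
    (h1 : FiniteDimensional ℂ (relQuot (LinearMap.range (r : Z →ₗ[ℂ] Z)) (LinearMap.range (q : Z →ₗ[ℂ] Z))))
    (h2 : FiniteDimensional ℂ (relQuot (LinearMap.range (q : Z →ₗ[ℂ] Z)) (LinearMap.range (r : Z →ₗ[ℂ] Z)))) :
    ∃ (P : Z →L[ℂ] Z) (k : ℕ), (∀ x, P (P x) = P x) ∧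
      LinearMap.ker (P : Z →ₗ[ℂ] Z) = LinearMap.range (r : Z →ₗ[ℂ] Z) ∧
      FiniteDimensional ℂ (relQuot (LinearMap.ker (q : Z →ₗ[ℂ] Z)) (LinearMap.range (P : Z →ₗ[ℂ] Z))) ∧
      FiniteDimensional ℂ (relQuot (LinearMap.range (P : Z →ₗ[ℂ] Z)) (LinearMap.ker (q : Z →ₗ[ℂ] Z))) ∧
      relDim (LinearMap.ker (q : Z →ₗ[ℂ] Z)) (LinearMap.range (P : Z →ₗ[ℂ] Z)) + k
        = relDim (LinearMap.range (r : Z →ₗ[ℂ] Z)) (LinearMap.range (q : Z →ₗ[ℂ] Z)) ∧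
      relDim (LinearMap.range (P : Z →ₗ[ℂ] Z)) (LinearMap.ker (q : Z →ₗ[ℂ] Z)) + k
        = relDim (LinearMap.range (q : Z →ₗ[ℂ] Z)) (LinearMap.range (r : Z →ₗ[ℂ] Z)) := by
  set N := LinearMap.range (r : Z →ₗ[ℂ] Z) with hN
  set Rg := LinearMap.range (q : Z →ₗ[ℂ] Z) with hRg
  -- the map `n ↦ n - q n` on `N`, whose range is `C₁`
  set gN : ↥N →ₗ[ℂ] Z :=
    ((ContinuousLinearMap.id ℂ Z - q : Z →L[ℂ] Z) : Z →ₗ[ℂ] Z).comp N.subtype with hgN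
  set C₁ := LinearMap.range gN with hC₁
  have hgN_apply : ∀ n : ↥N, gN n = (n : Z) - q n := by
    intro n; simp [hgN]
  have hqRg : ∀ x ∈ Rg, q x = x := by
    rintro x ⟨y, rfl⟩; exact hq y
  have hrN : ∀ x ∈ N, r x = x := by
    rintro x ⟨y, rfl⟩; exact hr y
  have hkergN : LinearMap.ker gN = Rg.comap N.subtype := by
    ext n
    simp only [LinearMap.mem_ker, hgN_apply, Submodule.mem_comap, Submodule.coe_subtype,
      sub_eq_zero]
    constructor
    · intro h; exact h ▸ ⟨(n : Z), rfl⟩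
    · intro h; exact (hqRg _ h).symm
  -- C₁ ≃ relQuot N Rg
  have isoC : relQuot N Rg ≃ₗ[ℂ] ↥C₁ :=
    (Submodule.quotEquivOfEq _ _ hkergN.symm).trans gN.quotKerEquivRange
  haveI hC₁fin : FiniteDimensional ℂ ↥C₁ := Module.Finite.equiv isoC
  have hfinrankC : finrank ℂ ↥C₁ = relDim N Rg := (isoC.finrank_eq).symm
  -- membership lemmas for C₁
  have hC1mem : ∀ x ∈ N, x - q x ∈ C₁ := fun x hx => ⟨⟨x, hx⟩, hgN_apply ⟨x, hx⟩⟩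
  have hC1elim : ∀ c ∈ C₁, ∃ n ∈ N, c = n - q n := by
    rintro c ⟨n, rfl⟩; exact ⟨n, n.2, (hgN_apply n)⟩
  have hqC : ∀ c ∈ C₁, q c = 0 := by
    intro c hc
    obtain ⟨n, _, rfl⟩ := hC1elim c hc
    simp [map_sub, hq]
  -- the projection σ onto C₁
  obtain ⟨f, hf⟩ := (Submodule.ClosedComplemented.of_finiteDimensional C₁ : C₁.ClosedComplemented)
  set σ : Z →L[ℂ] Z := C₁.subtypeL.comp f with hσ
  have hσmem : ∀ z, σ z ∈ C₁ := fun z => (f z).2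
  have hσfix : ∀ c ∈ C₁, σ c = c := by
    intro c hc
    have := hf ⟨c, hc⟩
    simpa [hσ] using congrArg (Subtype.val) this
  have hqσ : ∀ z, q (σ z) = 0 := fun z => hqC _ (hσmem z)
  have hσσ : ∀ z, σ (σ z) = σ z := fun z => hσfix _ (hσmem z)
  -- D₁
  set gR : ↥Rg →ₗ[ℂ] Z :=
    ((ContinuousLinearMap.id ℂ Z - r : Z →L[ℂ] Z) : Z →ₗ[ℂ] Z).comp Rg.subtype with hgR
  set D₁ := LinearMap.range gR with hD₁
  have hgR_apply : ∀ x : ↥Rg, gR x = (x : Z) - r x := by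
    intro x; simp [hgR]
  have hkergR : LinearMap.ker gR = N.comap Rg.subtype := by
    ext x
    simp only [LinearMap.mem_ker, hgR_apply, Submodule.mem_comap, Submodule.coe_subtype,
      sub_eq_zero]
    constructor
    · intro h; exact h ▸ ⟨(x : Z), rfl⟩
    · intro h; exact (hrN _ h).symm
  have isoD : relQuot Rg N ≃ₗ[ℂ] ↥D₁ :=
    (Submodule.quotEquivOfEq _ _ hkergR.symm).trans gR.quotKerEquivRange
  haveI hD₁fin : FiniteDimensional ℂ ↥D₁ := Module.Finite.equiv isoD
  have hfinrankD : finrank ℂ ↥D₁ = relDim Rg N := (isoD.finrank_eq).symm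
  have hD1mem : ∀ x ∈ Rg, x - r x ∈ D₁ := fun x hx => ⟨⟨x, hx⟩, hgR_apply ⟨x, hx⟩⟩
  have hD1elim : ∀ d ∈ D₁, ∃ x ∈ Rg, d = x - r x := by
    rintro d ⟨x, rfl⟩; exact ⟨x, x.2, (hgR_apply x)⟩
  have hrD : ∀ d ∈ D₁, r d = 0 := by
    intro d hd
    obtain ⟨x, _, rfl⟩ := hD1elim d hd
    simp [map_sub, hr]
  -- for c ∈ C₁ : c - r c ∈ D₁
  have hCD : ∀ c ∈ C₁, c - r c ∈ D₁ := by
    intro c hc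
    obtain ⟨n, hn, rfl⟩ := hC1elim c hc
    have h1 : r n = n := hrN n hn
    have h2 : q n - r (q n) ∈ D₁ := hD1mem (q n) ⟨n, rfl⟩
    have h3 : (n - q n) - r (n - q n) = -(q n - r (q n)) := by
      rw [map_sub, h1]; abel
    rw [h3]
    exact D₁.neg_mem h2
  -- for d ∈ D₁ : d - q d ∈ C₁
  have hDC : ∀ d ∈ D₁, d - q d ∈ C₁ := by
    intro d hd
    obtain ⟨x, hx, rfl⟩ := hD1elim d hd
    have h1 : q x = x := hqRg x hx
    have h2 : r x - q (r x) ∈ C₁ := hC1mem (r x) ⟨x, rfl⟩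
    have h3 : (x - r x) - q (x - r x) = -(r x - q (r x)) := by
      rw [map_sub, h1]; abel
    rw [h3]
    exact C₁.neg_mem h2
  -- the operators
  set Pe : Z →L[ℂ] Z :=
    (ContinuousLinearMap.id ℂ Z - σ).comp (ContinuousLinearMap.id ℂ Z - q) with hPe
  have hPe_apply : ∀ z, Pe z = (z - q z) - σ (z - q z) := by
    intro z; simp [hPe]; abel
  set P : Z →L[ℂ] Z :=
    (ContinuousLinearMap.id ℂ Z - r).comp (ContinuousLinearMap.id ℂ Z - Pe) + Pe with hP
  have hP_apply : ∀ z, P z = ((z - Pe z) - r (z - Pe z)) + Pe z := by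
    intro z; simp [hP]; abel
  have hqPe : ∀ z, q (Pe z) = 0 := by
    intro z; rw [hPe_apply]; simp [map_sub, hq, hqσ]
  have hσPe : ∀ z, σ (Pe z) = 0 := by
    intro z; rw [hPe_apply]; simp [map_sub, hσσ]
  have hPeD : ∀ d ∈ D₁, Pe d = 0 := by
    intro d hd
    have h1 : d - q d ∈ C₁ := hDC d hd
    rw [hPe_apply, hσfix _ h1, sub_self]
  have hPD : ∀ d ∈ D₁, P d = d := by
    intro d hd
    rw [hP_apply, hPeD d hd, sub_zero, hrD d hd, sub_zero, add_zero]
  have hPE : ∀ z, q z = 0 → σ z = 0 → P z = z := by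
    intro z h1 h2
    have hz : Pe z = z := by rw [hPe_apply, h1, sub_zero, h2, sub_zero]
    rw [hP_apply, hz, sub_self, map_zero, sub_zero, zero_add]
  -- `G z := z - Pe z`; for `q z = 0` we have `G z = σ z`
  have hG : ∀ z, q z = 0 → z - Pe z = σ z := by
    intro z h1
    rw [hPe_apply, h1, sub_zero]; abel
  -- `u z := (z - Pe z) - r (z - Pe z) ∈ D₁`
  have hu : ∀ z, (z - Pe z) - r (z - Pe z) ∈ D₁ := by
    intro z
    have hGz : z - Pe z = q z + σ (z - q z) := by
      rw [hPe_apply]; abel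
    rw [hGz]
    have h1 : q z - r (q z) ∈ D₁ := hD1mem (q z) ⟨z, rfl⟩
    have h2 : σ (z - q z) - r (σ (z - q z)) ∈ D₁ := hCD _ (hσmem _)
    have h3 : q z + σ (z - q z) - r (q z + σ (z - q z))
        = (q z - r (q z)) + (σ (z - q z) - r (σ (z - q z))) := by
      rw [map_add]; abel
    rw [h3]
    exact D₁.add_mem h1 h2
  -- idempotency of P
  have hPP : ∀ z, P (P z) = P z := by
    intro z
    rw [hP_apply z, map_add, hPD _ (hu z), hPE (Pe z) (hqPe z) (hσPe z)]
  -- D₁ ∩ ker q ⊆ C₁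
  have hDkq : ∀ x ∈ D₁, q x = 0 → x ∈ C₁ := by
    intro x hx h0
    have := hDC x hx
    rwa [h0, sub_zero] at this
  -- kernel of P is N
  have hkerP : LinearMap.ker (P : Z →ₗ[ℂ] Z) = N := by
    ext z
    simp only [LinearMap.mem_ker, ContinuousLinearMap.coe_coe]
    constructor
    · intro h0
      rw [hP_apply z] at h0
      have hA := eq_neg_of_add_eq_zero_left h0
      have hPeD₁ : Pe z ∈ D₁ := by
        have := D₁.neg_mem (hu z)
        rwa [hA, neg_neg] at this
      have hPeC₁ : Pe z ∈ C₁ := hDkq _ hPeD₁ (hqPe z)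
      have hPe0 : Pe z = 0 := by
        have := hσfix _ hPeC₁
        rw [hσPe z] at this
        exact this.symm
      rw [hPe0] at h0
      simp only [sub_zero, add_zero] at h0
      have : z = r z := by rwa [sub_eq_zero] at h0
      exact ⟨z, this.symm⟩
    · intro hz
      have h1 : z - q z ∈ C₁ := hC1mem z hz
      have hPez : Pe z = 0 := by rw [hPe_apply, hσfix _ h1, sub_self]
      rw [hP_apply, hPez]
      simp [hrN z hz]
  -- Pe ∘ P = Pe
  have hPeP : ∀ z, Pe (P z) = Pe z := by
    intro z
    rw [hP_apply z, map_add, hPeD _ (hu z), zero_add,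
      hPe_apply (Pe z), hqPe z, sub_zero, hσPe z, sub_zero]
  have hVD : ∀ v ∈ LinearMap.range (P : Z →ₗ[ℂ] Z), v - Pe v ∈ D₁ := by
    rintro v ⟨z, rfl⟩
    simp only [ContinuousLinearMap.coe_coe]
    rw [hPeP z]
    have h3 : P z - Pe z = (z - Pe z) - r (z - Pe z) := by rw [hP_apply z]; abel
    rw [h3]
    exact hu z
  -- characterization of membership in range P, for z with q z = 0
  have hAmem : ∀ w, q w = 0 → ((w ∈ LinearMap.range (P : Z →ₗ[ℂ] Z)) ↔ σ w ∈ D₁) := by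
    intro w hw
    constructor
    · intro hwP
      have h1 : w - Pe w ∈ D₁ := hVD w hwP
      rwa [hG w hw] at h1
    · intro hσD
      have h1 : σ w ∈ LinearMap.range (P : Z →ₗ[ℂ] Z) := ⟨σ w, hPD _ hσD⟩
      have h2 : w - σ w ∈ LinearMap.range (P : Z →ₗ[ℂ] Z) := by
        refine ⟨w - σ w, hPE _ ?_ ?_⟩
        · rw [map_sub, hw, hqσ, sub_self]
        · rw [map_sub, hσσ, sub_self]
      have h3 := (LinearMap.range (P : Z →ₗ[ℂ] Z)).add_mem h1 h2
      have h4 : σ w + (w - σ w) = w := by abel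
      rwa [h4] at h3
  -- characterization of membership in ker q, for v ∈ range P
  have hBmem : ∀ v, (v ∈ LinearMap.range (P : Z →ₗ[ℂ] Z)) → (q v = 0 ↔ v - Pe v ∈ C₁) := by
    intro v _
    constructor
    · intro h; rw [hG v h]; exact hσmem v
    · intro hC
      have h1 : q (v - Pe v) = 0 := hqC _ hC
      rw [map_sub, hqPe, sub_zero] at h1; exact h1
  -- the quotient maps
  set φ₀ : ↥(LinearMap.ker (q : Z →ₗ[ℂ] Z)) →ₗ[ℂ] ↥C₁ :=
    LinearMap.codRestrict C₁ ((σ : Z →ₗ[ℂ] Z) ∘ₗ (LinearMap.ker (q : Z →ₗ[ℂ] Z)).subtype)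
      (fun w => hσmem w) with hφ₀
  set φ : ↥(LinearMap.ker (q : Z →ₗ[ℂ] Z)) →ₗ[ℂ] (↥C₁ ⧸ (D₁.comap C₁.subtype)) :=
    (D₁.comap C₁.subtype).mkQ ∘ₗ φ₀ with hφ
  have hφ₀_apply : ∀ w : ↥(LinearMap.ker (q : Z →ₗ[ℂ] Z)), ((φ₀ w : Z)) = σ w := by
    intro w; rfl
  have hφsurj : Function.Surjective φ := by
    intro x
    obtain ⟨c, rfl⟩ := Submodule.mkQ_surjective _ x
    refine ⟨⟨(c : Z), LinearMap.mem_ker.mpr (hqC _ c.2)⟩, ?_⟩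
    have h5 : φ₀ ⟨(c : Z), LinearMap.mem_ker.mpr (hqC _ c.2)⟩ = c :=
      Subtype.ext (by rw [hφ₀_apply]; exact hσfix _ c.2)
    simp [hφ, h5]
  have hφker : LinearMap.ker φ = (LinearMap.range (P : Z →ₗ[ℂ] Z)).comap (LinearMap.ker (q : Z →ₗ[ℂ] Z)).subtype := by
    ext w
    have hw : q (w : Z) = 0 := w.2
    simp only [hφ, LinearMap.mem_ker, LinearMap.comp_apply, Submodule.mkQ_apply,
      Submodule.Quotient.mk_eq_zero, Submodule.mem_comap, Submodule.coe_subtype, hφ₀_apply]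
    exact (hAmem _ hw).symm
  have equivA : relQuot (LinearMap.ker (q : Z →ₗ[ℂ] Z)) (LinearMap.range (P : Z →ₗ[ℂ] Z))
      ≃ₗ[ℂ] (↥C₁ ⧸ (D₁.comap C₁.subtype)) :=
    (Submodule.quotEquivOfEq _ _ hφker.symm).trans (φ.quotKerEquivOfSurjective hφsurj)
  haveI finA : FiniteDimensional ℂ (relQuot (LinearMap.ker (q : Z →ₗ[ℂ] Z)) (LinearMap.range (P : Z →ₗ[ℂ] Z))) :=
    Module.Finite.equiv equivA.symm
  have hdimA : relDim (LinearMap.ker (q : Z →ₗ[ℂ] Z)) (LinearMap.range (P : Z →ₗ[ℂ] Z))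
      + finrank ℂ ↥(D₁.comap C₁.subtype) = relDim N Rg := by
    rw [← hfinrankC, relDim, equivA.finrank_eq]
    exact Submodule.finrank_quotient_add_finrank _
  -- the second quotient map
  set ψ₀ : ↥(LinearMap.range (P : Z →ₗ[ℂ] Z)) →ₗ[ℂ] ↥D₁ :=
    LinearMap.codRestrict D₁
      (((ContinuousLinearMap.id ℂ Z - Pe : Z →L[ℂ] Z) : Z →ₗ[ℂ] Z)
        ∘ₗ (LinearMap.range (P : Z →ₗ[ℂ] Z)).subtype)
      (fun v => hVD v v.2) with hψ₀
  set ψ : ↥(LinearMap.range (P : Z →ₗ[ℂ] Z)) →ₗ[ℂ] (↥D₁ ⧸ (C₁.comap D₁.subtype)) :=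
    (C₁.comap D₁.subtype).mkQ ∘ₗ ψ₀ with hψ
  have hψ₀_apply : ∀ v : ↥(LinearMap.range (P : Z →ₗ[ℂ] Z)), ((ψ₀ v : Z)) = (v : Z) - Pe v := by
    intro v; simp [hψ₀]
  have hψsurj : Function.Surjective ψ := by
    intro x
    obtain ⟨d, rfl⟩ := Submodule.mkQ_surjective _ x
    refine ⟨⟨(d : Z), ⟨(d : Z), hPD _ d.2⟩⟩, ?_⟩
    have h5 : ψ₀ ⟨(d : Z), ⟨(d : Z), hPD _ d.2⟩⟩ = d :=
      Subtype.ext (by rw [hψ₀_apply]; simp [hPeD _ d.2])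
    simp [hψ, h5]
  have hψker : LinearMap.ker ψ = (LinearMap.ker (q : Z →ₗ[ℂ] Z)).comap (LinearMap.range (P : Z →ₗ[ℂ] Z)).subtype := by
    ext v
    simp only [hψ, LinearMap.mem_ker, LinearMap.comp_apply, Submodule.mkQ_apply,
      Submodule.Quotient.mk_eq_zero, Submodule.mem_comap, Submodule.coe_subtype, hψ₀_apply]
    exact (hBmem _ v.2).symm
  have equivB : relQuot (LinearMap.range (P : Z →ₗ[ℂ] Z)) (LinearMap.ker (q : Z →ₗ[ℂ] Z))
      ≃ₗ[ℂ] (↥D₁ ⧸ (C₁.comap D₁.subtype)) :=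
    (Submodule.quotEquivOfEq _ _ hψker.symm).trans (ψ.quotKerEquivOfSurjective hψsurj)
  haveI finB : FiniteDimensional ℂ (relQuot (LinearMap.range (P : Z →ₗ[ℂ] Z)) (LinearMap.ker (q : Z →ₗ[ℂ] Z))) :=
    Module.Finite.equiv equivB.symm
  have hdimB : relDim (LinearMap.range (P : Z →ₗ[ℂ] Z)) (LinearMap.ker (q : Z →ₗ[ℂ] Z))
      + finrank ℂ ↥(C₁.comap D₁.subtype) = relDim Rg N := by
    rw [← hfinrankD, relDim, equivB.finrank_eq]
    exact Submodule.finrank_quotient_add_finrank _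
  -- the two correction terms agree
  have hk1 : finrank ℂ ↥(D₁.comap C₁.subtype) = finrank ℂ ↥(C₁ ⊓ D₁) := by
    have he : D₁.comap C₁.subtype = (C₁ ⊓ D₁).comap C₁.subtype := by
      ext x
      simp [Submodule.mem_comap, x.2]
    rw [he]
    exact (Submodule.comapSubtypeEquivOfLe inf_le_left).finrank_eq
  have hk2 : finrank ℂ ↥(C₁.comap D₁.subtype) = finrank ℂ ↥(C₁ ⊓ D₁) := by
    have he : C₁.comap D₁.subtype = (C₁ ⊓ D₁).comap D₁.subtype := by
      ext x
      simp [Submodule.mem_comap, x.2]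
    rw [he]
    exact (Submodule.comapSubtypeEquivOfLe inf_le_right).finrank_eq
  exact ⟨P, finrank ℂ ↥(C₁ ⊓ D₁), hPP, hkerP, finA, finB,
    by rw [← hk1]; exact hdimA, by rw [← hk2]; exact hdimB⟩


/-- For a regular Fredholm pair `(S,T)` there exist normalized generalized inverses
`S'`, `T'` of `S`, `T` such that `(S',T')` is a regular Fredholm pair with
`ind (S',T') = - ind (S,T)`. -/
theorem regularFredholmPair_exists_normalized_inverse_pair {X Y : Type*}
    [NormedAddCommGroup X] [NormedSpace ℂ X] [CompleteSpace X]
    [NormedAddCommGroup Y] [NormedSpace ℂ Y] [CompleteSpace Y]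
    (S : X →L[ℂ] Y) (T : Y →L[ℂ] X) (h : IsFredholmPair S T)
    (hS : IsRegularOp S) (hT : IsRegularOp T) :
    ∃ (S' : Y →L[ℂ] X) (T' : X →L[ℂ] Y),
      S.comp (S'.comp S) = S ∧ S'.comp (S.comp S') = S' ∧
      T.comp (T'.comp T) = T ∧ T'.comp (T.comp T') = T' ∧
      IsFredholmPair S' T' ∧ IsRegularOp S' ∧ IsRegularOp T' ∧
      fpIndex S' T' = - fpIndex S T := by
  obtain ⟨S₀, hS₀⟩ := hS
  obtain ⟨T₀, hT₀⟩ := hT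
  have hS₀' : ∀ x, S (S₀ (S x)) = S x := by
    intro x
    have := DFunLike.congr_fun hS₀ x
    simpa using this
  have hT₀' : ∀ y, T (T₀ (T y)) = T y := by
    intro y
    have := DFunLike.congr_fun hT₀ y
    simpa using this
  -- the idempotents on Y
  set qY : Y →L[ℂ] Y := S.comp S₀ with hqYdef
  set rY : Y →L[ℂ] Y := ContinuousLinearMap.id ℂ Y - T₀.comp T with hrYdef
  have hqY_apply : ∀ y, qY y = S (S₀ y) := fun y => rfl
  have hrY_apply : ∀ y, rY y = y - T₀ (T y) := fun y => rfl
  have hqY : ∀ y, qY (qY y) = qY y := by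
    intro y; exact hS₀' (S₀ y)
  have hTrY : ∀ y, T (rY y) = 0 := by
    intro y
    simp only [hrY_apply, map_sub, hT₀' y, sub_self]
  have hrY : ∀ y, rY (rY y) = rY y := by
    intro y
    simp only [hrY_apply (rY y), hTrY y, map_zero, sub_zero]
  have hRrY : LinearMap.range (rY : Y →ₗ[ℂ] Y) = LinearMap.ker (T : Y →ₗ[ℂ] X) := by
    ext y
    constructor
    · rintro ⟨z, rfl⟩; exact hTrY z
    · intro hy
      refine ⟨y, ?_⟩
      simp only [ContinuousLinearMap.coe_coe, hrY_apply, (show T y = 0 from LinearMap.mem_ker.mp hy), map_zero, sub_zero]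
  have hRqY : LinearMap.range (qY : Y →ₗ[ℂ] Y) = LinearMap.range (S : X →ₗ[ℂ] Y) := by
    ext y
    constructor
    · rintro ⟨z, rfl⟩; exact ⟨S₀ z, rfl⟩
    · rintro ⟨x, rfl⟩; exact ⟨S x, hS₀' x⟩
  -- the idempotents on X
  set qX : X →L[ℂ] X := T.comp T₀ with hqXdef
  set rX : X →L[ℂ] X := ContinuousLinearMap.id ℂ X - S₀.comp S with hrXdef
  have hqX_apply : ∀ x, qX x = T (T₀ x) := fun x => rfl
  have hrX_apply : ∀ x, rX x = x - S₀ (S x) := fun x => rfl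
  have hqX : ∀ x, qX (qX x) = qX x := by
    intro x; exact hT₀' (T₀ x)
  have hSrX : ∀ x, S (rX x) = 0 := by
    intro x
    simp only [hrX_apply, map_sub, hS₀' x, sub_self]
  have hrX : ∀ x, rX (rX x) = rX x := by
    intro x
    simp only [hrX_apply (rX x), hSrX x, map_zero, sub_zero]
  have hRrX : LinearMap.range (rX : X →ₗ[ℂ] X) = LinearMap.ker (S : X →ₗ[ℂ] Y) := by
    ext x
    constructor
    · rintro ⟨z, rfl⟩; exact hSrX z
    · intro hx
      refine ⟨x, ?_⟩
      simp only [ContinuousLinearMap.coe_coe, hrX_apply, (show S x = 0 from LinearMap.mem_ker.mp hx), map_zero, sub_zero]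
  have hRqX : LinearMap.range (qX : X →ₗ[ℂ] X) = LinearMap.range (T : Y →ₗ[ℂ] X) := by
    ext x
    constructor
    · rintro ⟨z, rfl⟩; exact ⟨T₀ z, rfl⟩
    · rintro ⟨y, rfl⟩; exact ⟨T y, hT₀' y⟩
  -- apply the key lemma on both sides
  obtain ⟨PY, kY, hPYidem, hPYker, finY1, finY2, dimY1, dimY2⟩ :=
    key qY rY hqY hrY
      (finDim_relQuot_congr hRrY.symm hRqY.symm h.2.2.1)
      (finDim_relQuot_congr hRqY.symm hRrY.symm h.2.2.2)
  obtain ⟨PX, kX, hPXidem, hPXker, finX1, finX2, dimX1, dimX2⟩ :=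
    key qX rX hqX hrX
      (finDim_relQuot_congr hRrX.symm hRqX.symm h.1)
      (finDim_relQuot_congr hRqX.symm hRrX.symm h.2.1)
  have hPXkerS : LinearMap.ker (PX : X →ₗ[ℂ] X) = LinearMap.ker (S : X →ₗ[ℂ] Y) := by rw [hPXker, hRrX]
  have hPYkerT : LinearMap.ker (PY : Y →ₗ[ℂ] Y) = LinearMap.ker (T : Y →ₗ[ℂ] X) := by rw [hPYker, hRrY]
  have hSPX : ∀ x, S (PX x) = S x := by
    intro x
    have h1 : PX (x - PX x) = 0 := by rw [map_sub, hPXidem, sub_self]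
    have h2 : x - PX x ∈ LinearMap.ker (S : X →ₗ[ℂ] Y) := hPXkerS ▸ LinearMap.mem_ker.mpr h1
    have h3 : S (x - PX x) = 0 := LinearMap.mem_ker.mp h2
    rw [map_sub, sub_eq_zero] at h3
    exact h3.symm
  have hTPY : ∀ y, T (PY y) = T y := by
    intro y
    have h1 : PY (y - PY y) = 0 := by rw [map_sub, hPYidem, sub_self]
    have h2 : y - PY y ∈ LinearMap.ker (T : Y →ₗ[ℂ] X) := hPYkerT ▸ LinearMap.mem_ker.mpr h1
    have h3 : T (y - PY y) = 0 := LinearMap.mem_ker.mp h2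
    rw [map_sub, sub_eq_zero] at h3
    exact h3.symm
  have hPXS₀S : ∀ x, PX (S₀ (S x)) = PX x := by
    intro x
    have h1 : S (x - S₀ (S x)) = 0 := by rw [map_sub, hS₀', sub_self]
    have h2 : x - S₀ (S x) ∈ LinearMap.ker (PX : X →ₗ[ℂ] X) := hPXkerS.symm ▸ LinearMap.mem_ker.mpr h1
    have h3 : PX (x - S₀ (S x)) = 0 := LinearMap.mem_ker.mp h2
    rw [map_sub, sub_eq_zero] at h3
    exact h3.symm
  have hPYT₀T : ∀ y, PY (T₀ (T y)) = PY y := by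
    intro y
    have h1 : T (y - T₀ (T y)) = 0 := by rw [map_sub, hT₀', sub_self]
    have h2 : y - T₀ (T y) ∈ LinearMap.ker (PY : Y →ₗ[ℂ] Y) := hPYkerT.symm ▸ LinearMap.mem_ker.mpr h1
    have h3 : PY (y - T₀ (T y)) = 0 := LinearMap.mem_ker.mp h2
    rw [map_sub, sub_eq_zero] at h3
    exact h3.symm
  -- the normalized generalized inverses
  set S' : Y →L[ℂ] X := (PX.comp S₀).comp qY with hS'def
  set T' : X →L[ℂ] Y := (PY.comp T₀).comp qX with hT'def
  have hS'_apply : ∀ y, S' y = PX (S₀ (S (S₀ y))) := fun y => rfl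
  have hT'_apply : ∀ x, T' x = PY (T₀ (T (T₀ x))) := fun x => rfl
  -- normalization identities
  have goal1 : S.comp (S'.comp S) = S := by
    ext x
    simp only [ContinuousLinearMap.comp_apply, hS'_apply]
    rw [hS₀', hSPX, hS₀']
  have hSS' : ∀ y, S (S' y) = S (S₀ y) := by
    intro y
    rw [hS'_apply, hSPX, hS₀']
  have goal2 : S'.comp (S.comp S') = S' := by
    ext y
    simp only [ContinuousLinearMap.comp_apply]
    rw [hSS', hS'_apply, hS'_apply, hS₀']
  have goal3 : T.comp (T'.comp T) = T := by
    ext y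
    simp only [ContinuousLinearMap.comp_apply, hT'_apply]
    rw [hT₀', hTPY, hT₀']
  have hTT' : ∀ x, T (T' x) = T (T₀ x) := by
    intro x
    rw [hT'_apply, hTPY, hT₀']
  have goal4 : T'.comp (T.comp T') = T' := by
    ext x
    simp only [ContinuousLinearMap.comp_apply]
    rw [hTT', hT'_apply, hT'_apply, hT₀']
  -- kernels and ranges of S', T'
  have hkS' : LinearMap.ker (S' : Y →ₗ[ℂ] X) = LinearMap.ker (qY : Y →ₗ[ℂ] Y) := by
    ext y
    simp only [LinearMap.mem_ker, ContinuousLinearMap.coe_coe]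
    constructor
    · intro h0
      have := hSS' y
      rw [h0, map_zero] at this
      exact (hqY_apply y) ▸ this.symm
    · intro h0
      rw [hS'_apply]
      have : S (S₀ y) = 0 := h0
      rw [this, map_zero, map_zero]
  have hrS' : LinearMap.range (S' : Y →ₗ[ℂ] X) = LinearMap.range (PX : X →ₗ[ℂ] X) := by
    ext x
    constructor
    · rintro ⟨y, rfl⟩; exact ⟨S₀ (S (S₀ y)), rfl⟩
    · rintro ⟨z, rfl⟩
      refine ⟨S (z), ?_⟩
      simp only [ContinuousLinearMap.coe_coe]
      rw [hS'_apply, hS₀', hPXS₀S]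
  have hkT' : LinearMap.ker (T' : X →ₗ[ℂ] Y) = LinearMap.ker (qX : X →ₗ[ℂ] X) := by
    ext x
    simp only [LinearMap.mem_ker, ContinuousLinearMap.coe_coe]
    constructor
    · intro h0
      have := hTT' x
      rw [h0, map_zero] at this
      exact (hqX_apply x) ▸ this.symm
    · intro h0
      rw [hT'_apply]
      have : T (T₀ x) = 0 := h0
      rw [this, map_zero, map_zero]
  have hrT' : LinearMap.range (T' : X →ₗ[ℂ] Y) = LinearMap.range (PY : Y →ₗ[ℂ] Y) := by
    ext y
    constructor
    · rintro ⟨x, rfl⟩; exact ⟨T₀ (T (T₀ x)), rfl⟩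
    · rintro ⟨z, rfl⟩
      refine ⟨T (z), ?_⟩
      simp only [ContinuousLinearMap.coe_coe]
      rw [hT'_apply, hT₀', hPYT₀T]
  -- finish
  refine ⟨S', T', goal1, goal2, goal3, goal4, ?_, ⟨S, goal2⟩, ⟨T, goal4⟩, ?_⟩
  · exact ⟨finDim_relQuot_congr hkS'.symm hrT'.symm finY1,
      finDim_relQuot_congr hrT'.symm hkS'.symm finY2,
      finDim_relQuot_congr hkT'.symm hrS'.symm finX1,
      finDim_relQuot_congr hrS'.symm hkT'.symm finX2⟩
  · rw [relDim_congr hRrY hRqY] at dimY1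
    rw [relDim_congr hRqY hRrY] at dimY2
    rw [relDim_congr hRrX hRqX] at dimX1
    rw [relDim_congr hRqX hRrX] at dimX2
    simp only [fpIndex]
    rw [relDim_congr hkS' hrT', relDim_congr hrT' hkS',
      relDim_congr hkT' hrS', relDim_congr hrS' hkT']
    omega
end

section
/- There exist Banach spaces X and Y over ℂ, a regular Fredholm pair (S,T) with S : X → Y and T : Y → X, and bounded linear operators S' : Y → X and T' : X → Y with S = S S' S and T = T T' T (i.e., S' and T' are generalized inverses of S and T), such that (S',T') is NOT a Fredholm pair; specifically, the quotient R(S')/(N(T')∩R(S')) is infinite-dimensional. -/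
open Module

-- auxiliary
noncomputable abbrev myV : Type := lp (fun _ : ℕ => ℂ) 2

noncomputable def myCoeLM : myV →ₗ[ℂ] (ℕ → ℂ) where
  toFun f := ⇑f
  map_add' := lp.coeFn_add
  map_smul' := lp.coeFn_smul

lemma myV_not_fd : ¬ FiniteDimensional ℂ myV := by
  intro h
  have li0 : LinearIndependent ℂ (fun n : ℕ => (Pi.single n 1 : ℕ → ℂ)) := by
    rw [linearIndependent_iff']
    intro s g hsum i hi
    have := congrFun hsum i
    simpa [Pi.single_apply, Finset.sum_ite_eq' s i g, hi] using this
  have li : LinearIndependent ℂ (fun n : ℕ => lp.single 2 n (1 : ℂ)) := by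
    apply LinearIndependent.of_comp myCoeLM
    have he : (⇑myCoeLM ∘ fun n => lp.single 2 n (1 : ℂ))
        = fun n : ℕ => (Pi.single n 1 : ℕ → ℂ) := by
      funext n
      funext m
      by_cases hmn : m = n
      · subst hmn; simp [myCoeLM, lp.single_apply_self]
      · simp [myCoeLM, lp.single_apply_ne 2 n _ hmn, Pi.single_apply, hmn]
    rw [he]
    exact li0
  haveI : Finite ℕ := li.finite
  exact not_finite ℕ

lemma fd_of_le {X : Type*} [AddCommGroup X] [Module ℂ X] {A B : Submodule ℂ X}
    (h : A ≤ B) : FiniteDimensional ℂ (relQuot A B) := by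
  have ht : B.comap A.subtype = ⊤ := Submodule.comap_subtype_eq_top.mpr h
  haveI : Subsingleton (relQuot A B) :=
    Submodule.Quotient.subsingleton_iff.mpr ht
  infer_instance

/-- There exist Banach spaces `X`, `Y`, a regular Fredholm pair `(S,T)` and generalized
inverses `S'`, `T'` of `S`, `T` such that `(S',T')` is not a Fredholm pair; in fact
`R(S')/(N(T') ∩ R(S'))` is infinite dimensional. -/
theorem exists_regularFredholmPair_inverses_not_fredholmPair :
    ∃ (X Y : Type) (_ : NormedAddCommGroup X) (_ : NormedAddCommGroup Y)
      (_ : NormedSpace ℂ X) (_ : NormedSpace ℂ Y),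
      CompleteSpace X ∧ CompleteSpace Y ∧
      ∃ (S : X →L[ℂ] Y) (T : Y →L[ℂ] X) (S' : Y →L[ℂ] X) (T' : X →L[ℂ] Y),
        IsFredholmPair S T ∧ IsRegularOp S ∧ IsRegularOp T ∧
        S.comp (S'.comp S) = S ∧ T.comp (T'.comp T) = T ∧
        ¬ IsFredholmPair S' T' ∧
        ¬ FiniteDimensional ℂ (relQuot (LinearMap.range (S' : Y →ₗ[ℂ] X)) (LinearMap.ker (T' : X →ₗ[ℂ] Y))) := by
  classical
  refine ⟨myV × myV, myV × myV, inferInstance, inferInstance, inferInstance, inferInstance,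
    inferInstance, inferInstance, ?_⟩
  set V := myV
  let S : V × V →L[ℂ] V × V := (ContinuousLinearMap.fst ℂ V V).prod 0
  let T : V × V →L[ℂ] V × V := (0 : V × V →L[ℂ] V).prod (ContinuousLinearMap.snd ℂ V V)
  let S' : V × V →L[ℂ] V × V := (ContinuousLinearMap.fst ℂ V V).prod (ContinuousLinearMap.fst ℂ V V)
  have hnot : ¬ FiniteDimensional ℂ (relQuot (LinearMap.range (S' : V × V →ₗ[ℂ] V × V)) (LinearMap.ker (T : V × V →ₗ[ℂ] V × V))) := by
    intro hfd
    haveI := hfd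
    have hbot : (LinearMap.ker (T : V × V →ₗ[ℂ] V × V)).comap (LinearMap.range (S' : V × V →ₗ[ℂ] V × V)).subtype = ⊥ := by
      ext ⟨⟨x, y⟩, hmem⟩
      simp only [Submodule.mem_comap, Submodule.coe_subtype, LinearMap.mem_ker,
        Submodule.mem_bot, Submodule.mk_eq_zero]
      obtain ⟨⟨a, b⟩, hab⟩ := hmem
      simp only [S', ContinuousLinearMap.prod_apply, ContinuousLinearMap.coe_fst'] at hab
      obtain ⟨rfl, rfl⟩ := Prod.mk.injEq .. ▸ (Prod.ext_iff.mp hab)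
      constructor
      · intro h
        have hx : x = 0 := by simpa [T, Prod.ext_iff] using h
        simp [hx]
      · intro h
        have hx : x = 0 := by simpa [Prod.ext_iff] using h
        simp [T, Prod.ext_iff, hx]
    haveI : FiniteDimensional ℂ ↥(LinearMap.range (S' : V × V →ₗ[ℂ] V × V)) :=
      (Submodule.quotEquivOfEqBot _ hbot).finiteDimensional
    let j : V →ₗ[ℂ] ↥(LinearMap.range (S' : V × V →ₗ[ℂ] V × V)) :=
      LinearMap.codRestrict _ (LinearMap.prod LinearMap.id LinearMap.id)
        (fun x => ⟨(x, 0), by simp [S', Prod.ext_iff]⟩)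
    have hj : Function.Injective j := by
      intro a b hab
      have h1 : ((j a : V × V)).1 = ((j b : V × V)).1 := by
        rw [Subtype.ext_iff.mp hab]
      exact h1
    exact myV_not_fd (FiniteDimensional.of_injective j hj)
  refine ⟨S, T, S', T, ?_, ?_, ?_, ?_, ?_, ?_, ?_⟩
  · -- IsFredholmPair S T
    have h1 : LinearMap.ker (S : V × V →ₗ[ℂ] V × V) = LinearMap.range (T : V × V →ₗ[ℂ] V × V) := by
      ext ⟨x, y⟩
      constructor
      · intro h
        have hx : x = 0 := by
          simpa [S, Prod.ext_iff] using h
        exact ⟨(0, y), by simp [T, hx]⟩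
      · rintro ⟨⟨a, b⟩, hab⟩
        simp only [T, ContinuousLinearMap.prod_apply, ContinuousLinearMap.zero_apply,
          ContinuousLinearMap.coe_snd'] at hab
        simp [S, ← hab, Prod.ext_iff]
    have h2 : LinearMap.ker (T : V × V →ₗ[ℂ] V × V) = LinearMap.range (S : V × V →ₗ[ℂ] V × V) := by
      ext ⟨x, y⟩
      constructor
      · intro h
        have hy : y = 0 := by
          simpa [T, Prod.ext_iff] using h
        exact ⟨(x, 0), by simp [S, hy]⟩
      · rintro ⟨⟨a, b⟩, hab⟩
        simp only [S, ContinuousLinearMap.prod_apply, ContinuousLinearMap.zero_apply,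
          ContinuousLinearMap.coe_fst'] at hab
        simp [T, ← hab, Prod.ext_iff]
    exact ⟨fd_of_le h1.le, fd_of_le h1.ge, fd_of_le h2.le, fd_of_le h2.ge⟩
  · exact ⟨S, by ext ⟨x, y⟩ <;> simp [S]⟩
  · exact ⟨T, by ext ⟨x, y⟩ <;> simp [T]⟩
  · ext ⟨x, y⟩ <;> simp [S, S']
  · ext ⟨x, y⟩ <;> simp [T]
  · exact fun hP => hnot hP.2.2.2
  · exact hnot
end

section
/- Let X and Y be Banach spaces over ℂ and let (S,T) be a regular Fredholm pair, S : X → Y, T : Y → X. Define the subspaces R_{S,n} ⊆ Y and R_{T,n} ⊆ X by R_{S,0} = Y, R_{T,0} = X, R_{S,n+1} = S(R_{T,n}) and R_{T,n+1} = T(R_{S,n}). Then (R_{S,n}) and (R_{T,n}) are decreasing sequences of subspaces of Y and X respectively, and for every n ≥ 2 the subspaces R_{S,n} and R_{T,n} are finite-dimensional. -/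
open Module

lemma mapFinite_of_relQuot {X Y : Type*} [AddCommGroup X] [Module ℂ X]
    [AddCommGroup Y] [Module ℂ Y] (S : X →ₗ[ℂ] Y) (A : Submodule ℂ X)
    (hfd : FiniteDimensional ℂ (↥A ⧸ ((LinearMap.ker S).comap A.subtype))) :
    FiniteDimensional ℂ ↥(A.map S) := by
  have e := (S.comp A.subtype).quotKerEquivRange
  rw [LinearMap.ker_comp, LinearMap.range_comp, Submodule.range_subtype] at e
  exact Module.Finite.equiv e

/-- For a regular Fredholm pair `(S,T)` the sequences `R_{S,n}`, `R_{T,n}` defined by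
`R_{S,0} = Y`, `R_{T,0} = X`, `R_{S,n+1} = S(R_{T,n})`, `R_{T,n+1} = T(R_{S,n})` are
decreasing, and for `n ≥ 2` they are finite dimensional. -/
theorem regularFredholmPair_ranges_antitone_finiteDim {X Y : Type*}
    [NormedAddCommGroup X] [NormedSpace ℂ X] [CompleteSpace X]
    [NormedAddCommGroup Y] [NormedSpace ℂ Y] [CompleteSpace Y]
    (S : X →L[ℂ] Y) (T : Y →L[ℂ] X) (h : IsFredholmPair S T)
    (hS : IsRegularOp S) (hT : IsRegularOp T)
    (RS : ℕ → Submodule ℂ Y) (RT : ℕ → Submodule ℂ X)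
    (hRS0 : RS 0 = ⊤) (hRT0 : RT 0 = ⊤)
    (hRS : ∀ n, RS (n + 1) = Submodule.map (S : X →ₗ[ℂ] Y) (RT n))
    (hRT : ∀ n, RT (n + 1) = Submodule.map (T : Y →ₗ[ℂ] X) (RS n)) :
    (∀ n, RS (n + 1) ≤ RS n) ∧ (∀ n, RT (n + 1) ≤ RT n) ∧
    (∀ n, 2 ≤ n → FiniteDimensional ℂ ↥(RS n) ∧ FiniteDimensional ℂ ↥(RT n)) := by
  have step : ∀ n, RS (n + 1) ≤ RS n ∧ RT (n + 1) ≤ RT n := by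
    intro n
    induction n with
    | zero =>
      constructor
      · rw [hRS0]; exact le_top
      · rw [hRT0]; exact le_top
    | succ n ih =>
      constructor
      · rw [hRS (n + 1), hRS n]; exact Submodule.map_mono ih.2
      · rw [hRT (n + 1), hRT n]; exact Submodule.map_mono ih.1
  have hRSa : Antitone RS := antitone_nat_of_succ_le fun n => (step n).1
  have hRTa : Antitone RT := antitone_nat_of_succ_le fun n => (step n).2
  have hRS2 : FiniteDimensional ℂ ↥(RS 2) := by
    have h2 : RS 2 = Submodule.map (S : X →ₗ[ℂ] Y) (LinearMap.range (T : Y →ₗ[ℂ] X)) := by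
      rw [hRS 1, hRT 0, hRS0, Submodule.map_top]
    rw [h2]
    exact mapFinite_of_relQuot _ _ h.2.1
  have hRT2 : FiniteDimensional ℂ ↥(RT 2) := by
    have h2 : RT 2 = Submodule.map (T : Y →ₗ[ℂ] X) (LinearMap.range (S : X →ₗ[ℂ] Y)) := by
      rw [hRT 1, hRS 0, hRT0, Submodule.map_top]
    rw [h2]
    exact mapFinite_of_relQuot _ _ h.2.2.2
  refine ⟨fun n => (step n).1, fun n => (step n).2, fun n hn => ?_⟩
  exact ⟨Submodule.finiteDimensional_of_le (hRSa hn),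
    Submodule.finiteDimensional_of_le (hRTa hn)⟩
end

section
/- Let X and Y be Banach spaces over ℂ and let (S,T) be a regular Fredholm pair, S : X → Y, T : Y → X. Define R_{S,0} = Y, R_{T,0} = X, R_{S,n+1} = S(R_{T,n}), R_{T,n+1} = T(R_{S,n}). Then there exist p, q ∈ ℕ, p, q ≥ 1, such that R_{S,p} = R_{S,p+k} for all k ≥ 0 and R_{T,q} = R_{T,q+k} for all k ≥ 0. Moreover, if p and q are chosen minimal with these properties, then |p − q| ≤ 1. -/
open Module

private lemma aux_stabilize {Z : Type*} [AddCommGroup Z] [Module ℂ Z]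
    (R : ℕ → Submodule ℂ Z) (hanti : Antitone R) (hfin : ∀ n, FiniteDimensional ℂ (R (n+2))) :
    ∃ p : ℕ, 1 ≤ p ∧ ∀ k, R (p + k) = R p := by
    have hne : (Set.range (fun n => finrank ℂ (R (n+2)))).Nonempty := ⟨_, 0, rfl⟩
    obtain ⟨N, hNeq⟩ := Nat.sInf_mem hne
    refine ⟨N + 2, by omega, fun k => ?_⟩
    have hle : R (N + 2 + k) ≤ R (N + 2) := hanti (by omega)
    haveI := hfin N
    refine Submodule.eq_of_le_of_finrank_le hle ?_
    have h1 : finrank ℂ (R (N + 2)) = sInf (Set.range fun n => finrank ℂ (R (n+2))) := hNeq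
    have h2 : sInf (Set.range fun n => finrank ℂ (R (n+2))) ≤ finrank ℂ (R (N + k + 2)) :=
      Nat.sInf_le ⟨N + k, rfl⟩
    have h3 : N + k + 2 = N + 2 + k := by omega
    rw [h1]; rw [h3] at h2; exact h2

/-- For a regular Fredholm pair `(S,T)` the sequences `R_{S,n}` and `R_{T,n}` stabilize
from some indices `p, q ≥ 1` on; moreover the minimal such indices differ by at most 1. -/
theorem regularFredholmPair_stabilizes {X Y : Type*}
    [NormedAddCommGroup X] [NormedSpace ℂ X] [CompleteSpace X]
    [NormedAddCommGroup Y] [NormedSpace ℂ Y] [CompleteSpace Y]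
    (S : X →L[ℂ] Y) (T : Y →L[ℂ] X) (h : IsFredholmPair S T)
    (hS : IsRegularOp S) (hT : IsRegularOp T)
    (RS : ℕ → Submodule ℂ Y) (RT : ℕ → Submodule ℂ X)
    (hRS0 : RS 0 = ⊤) (hRT0 : RT 0 = ⊤)
    (hRS : ∀ n, RS (n + 1) = Submodule.map (S : X →ₗ[ℂ] Y) (RT n))
    (hRT : ∀ n, RT (n + 1) = Submodule.map (T : Y →ₗ[ℂ] X) (RS n)) :
    (∃ p q : ℕ, 1 ≤ p ∧ 1 ≤ q ∧ (∀ k, RS (p + k) = RS p) ∧ (∀ k, RT (q + k) = RT q)) ∧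
    (∀ p q : ℕ,
      IsLeast {n : ℕ | 1 ≤ n ∧ ∀ k, RS (n + k) = RS n} p →
      IsLeast {n : ℕ | 1 ≤ n ∧ ∀ k, RT (n + k) = RT n} q →
      p ≤ q + 1 ∧ q ≤ p + 1) := by
  obtain ⟨hb, hSfin, hd, hTfin⟩ := h
  -- antitone
  have step : ∀ n, RS (n+1) ≤ RS n ∧ RT (n+1) ≤ RT n := by
    intro n
    induction n with
    | zero => exact ⟨hRS0 ▸ le_top, hRT0 ▸ le_top⟩
    | succ n ih =>
      refine ⟨?_, ?_⟩
      · rw [hRS (n+1), hRS n]; exact Submodule.map_mono ih.2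
      · rw [hRT (n+1), hRT n]; exact Submodule.map_mono ih.1
  have hSanti : Antitone RS := antitone_nat_of_succ_le fun n => (step n).1
  have hTanti : Antitone RT := antitone_nat_of_succ_le fun n => (step n).2
  -- RS 2 is finite dimensional
  have hRS2eq : RS 2 = Submodule.map (S : X →ₗ[ℂ] Y) (LinearMap.range (T : Y →ₗ[ℂ] X)) := by
    rw [hRS 1, hRT 0, hRS0, Submodule.map_top]
  have hRT2eq : RT 2 = Submodule.map (T : Y →ₗ[ℂ] X) (LinearMap.range (S : X →ₗ[ℂ] Y)) := by
    rw [hRT 1, hRS 0, hRT0, Submodule.map_top]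
  have hRS2 : FiniteDimensional ℂ (RS 2) := by
    rw [hRS2eq]
    set f := (S : X →ₗ[ℂ] Y).comp (LinearMap.range (T : Y →ₗ[ℂ] X)).subtype with hf
    have hker : LinearMap.ker f = (LinearMap.ker (S : X →ₗ[ℂ] Y)).comap (LinearMap.range (T : Y →ₗ[ℂ] X)).subtype := by
      rw [hf, LinearMap.ker_comp]
    have hrange : LinearMap.range f = Submodule.map (S : X →ₗ[ℂ] Y) (LinearMap.range (T : Y →ₗ[ℂ] X)) := by
      rw [hf, LinearMap.range_comp, Submodule.range_subtype]
    have e := (f.quotKerEquivRange).symm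
    rw [hker, hrange] at e
    exact FiniteDimensional.of_injective e.toLinearMap e.injective
  have hRT2 : FiniteDimensional ℂ (RT 2) := by
    rw [hRT2eq]
    set f := (T : Y →ₗ[ℂ] X).comp (LinearMap.range (S : X →ₗ[ℂ] Y)).subtype with hf
    have hker : LinearMap.ker f = (LinearMap.ker (T : Y →ₗ[ℂ] X)).comap (LinearMap.range (S : X →ₗ[ℂ] Y)).subtype := by
      rw [hf, LinearMap.ker_comp]
    have hrange : LinearMap.range f = Submodule.map (T : Y →ₗ[ℂ] X) (LinearMap.range (S : X →ₗ[ℂ] Y)) := by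
      rw [hf, LinearMap.range_comp, Submodule.range_subtype]
    have e := (f.quotKerEquivRange).symm
    rw [hker, hrange] at e
    exact FiniteDimensional.of_injective e.toLinearMap e.injective
  have hRSfin : ∀ n, FiniteDimensional ℂ (RS (n+2)) := fun n =>
    Submodule.finiteDimensional_of_le (hSanti (by omega : 2 ≤ n + 2))
  have hRTfin : ∀ n, FiniteDimensional ℂ (RT (n+2)) := fun n =>
    Submodule.finiteDimensional_of_le (hTanti (by omega : 2 ≤ n + 2))
  obtain ⟨p₀, hp₀1, hp₀⟩ := aux_stabilize RS hSanti hRSfin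
  obtain ⟨q₀, hq₀1, hq₀⟩ := aux_stabilize RT hTanti hRTfin
  refine ⟨⟨p₀, q₀, hp₀1, hq₀1, hp₀, hq₀⟩, ?_⟩
  intro p q hp hq
  constructor
  · refine hp.2 ⟨by omega, fun k => ?_⟩
    calc RS (q + 1 + k) = RS ((q + k) + 1) := by ring_nf
      _ = Submodule.map (S : X →ₗ[ℂ] Y) (RT (q + k)) := hRS _
      _ = Submodule.map (S : X →ₗ[ℂ] Y) (RT q) := by rw [hq.1.2 k]
      _ = RS (q + 1) := (hRS q).symm
  · refine hq.2 ⟨by omega, fun k => ?_⟩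
    calc RT (p + 1 + k) = RT ((p + k) + 1) := by ring_nf
      _ = Submodule.map (T : Y →ₗ[ℂ] X) (RS (p + k)) := hRT _
      _ = Submodule.map (T : Y →ₗ[ℂ] X) (RS p) := by rw [hp.1.2 k]
      _ = RT (p + 1) := (hRT p).symm
end

section
/- Let X and Y be Banach spaces over ℂ and let (S,T) be a regular Fredholm pair, S : X → Y, T : Y → X. Define R_{S,0} = Y, R_{T,0} = X, R_{S,n+1} = S(R_{T,n}), R_{T,n+1} = T(R_{S,n}). Then there exist sequences of subspaces (X_2^n)_{n≥1} of X and (Y_2^n)_{n≥1} of Y such that for all n ≥ 1: (i) R_{S,n} = (R_{S,n} ∩ N(T)) ⊕ Y_2^n and R_{T,n} = (R_{T,n} ∩ N(S)) ⊕ X_2^n; (ii) X_2^n and Y_2^n are finite-dimensional and X_2^{n+1} ⊆ X_2^n, Y_2^{n+1} ⊆ Y_2^n; (iii) Y_2^n = R_{S,n} ∩ Y_2^1 and X_2^n = R_{T,n} ∩ X_2^1; (iv) the subspaces R_{S,n} ∩ N(T) and R_{T,n} ∩ N(S) are decreasing in n and are finite-dimensional for n ≥ 2; (v) S restricts to a linear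 isomorphism from X_2^n onto R_{S,n+1}, and T restricts to a linear isomorphism from Y_2^n onto R_{T,n+1}. -/
open Module

section aux
variable {V W : Type*} [AddCommGroup V] [Module ℂ V] [AddCommGroup W] [Module ℂ W]

/-- Image of a submodule is finite dimensional if the corresponding relative quotient is. -/
lemma fd_map_of_quot (f : V →ₗ[ℂ] W) (p : Submodule ℂ V)
    (h : FiniteDimensional ℂ (↥p ⧸ ((LinearMap.ker f).comap p.subtype))) :
    FiniteDimensional ℂ ↥(p.map f) := by
  have hker : LinearMap.ker (f.domRestrict p) = (LinearMap.ker f).comap p.subtype := rfl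
  have hrange : LinearMap.range (f.domRestrict p) = p.map f := by
    ext y
    simp [LinearMap.mem_range, Submodule.mem_map, LinearMap.domRestrict_apply]
  have e := (f.domRestrict p).quotKerEquivRange
  rw [hker, hrange] at e
  exact e.finiteDimensional

/-- Complement extension lemma. -/
lemma exists_compl_in (r p q : Submodule ℂ V) (hp : p ≤ r) (hq : q ≤ r) (hpq : p ⊓ q = ⊥) :
    ∃ F : Submodule ℂ V, q ≤ F ∧ F ≤ r ∧ p ⊓ F = ⊥ ∧ p ⊔ F = r := by
  obtain ⟨c, hc⟩ := Submodule.exists_isCompl ((p ⊔ q).comap r.subtype)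
  set C : Submodule ℂ V := c.map r.subtype with hC
  have hCr : C ≤ r := Submodule.map_subtype_le r c
  have hinf : (p ⊔ q) ⊓ C = ⊥ := by
    have := congrArg (Submodule.map r.subtype) hc.inf_eq_bot
    rwa [Submodule.map_inf _ r.injective_subtype, Submodule.map_comap_subtype,
      Submodule.map_bot, inf_eq_right.mpr (sup_le hp hq)] at this
  have hsup : (p ⊔ q) ⊔ C = r := by
    have := congrArg (Submodule.map r.subtype) hc.sup_eq_top
    rwa [Submodule.map_sup, Submodule.map_comap_subtype, Submodule.map_subtype_top,
      inf_eq_right.mpr (sup_le hp hq)] at this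
  refine ⟨q ⊔ C, le_sup_left, sup_le hq hCr, ?_, by rw [← sup_assoc, ← hsup, sup_assoc]⟩
  rw [eq_bot_iff]
  rintro x ⟨hxp, hxqC⟩
  obtain ⟨y, hy, z, hz, rfl⟩ := Submodule.mem_sup.mp hxqC
  have hz0 : z ∈ (p ⊔ q) ⊓ C := ⟨by
    have : z = (y + z) - y := by abel
    rw [this]
    exact Submodule.sub_mem _ (Submodule.mem_sup_left hxp) (Submodule.mem_sup_right hy), hz⟩
  rw [hinf] at hz0
  simp only [Submodule.mem_bot] at hz0
  subst hz0
  have : y + 0 ∈ p ⊓ q := ⟨by simpa using hxp, by simpa using hy⟩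
  rw [hpq] at this
  simpa using this

end aux

section chain
variable {V : Type*} [AddCommGroup V] [Module ℂ V]

/-- Compatible chain of complements: given a decreasing chain `A` stabilizing at `N`
with `A N ⊓ K = ⊥`, build a complement at every level compatible with all later levels. -/
lemma exists_chain_compl (A : ℕ → Submodule ℂ V) (hA : ∀ n, A (n + 1) ≤ A n)
    (K : Submodule ℂ V) (N : ℕ) (hstab : ∀ n, N ≤ n → A n = A N) (hbot : A N ⊓ K = ⊥)
    (k : ℕ) : ∃ F : Submodule ℂ V, F ≤ A k ∧ K ⊓ F = ⊥ ∧
      ∀ n, k ≤ n → (A n ⊓ K) ⊔ (A n ⊓ F) = A n := by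
  have hmono : Antitone A := antitone_nat_of_succ_le hA
  set P : ℕ → Prop := fun k => ∃ F : Submodule ℂ V, F ≤ A k ∧ K ⊓ F = ⊥ ∧
      ∀ n, k ≤ n → (A n ⊓ K) ⊔ (A n ⊓ F) = A n with hPdef
  have hbase : ∀ k, N ≤ k → P k := by
    intro k hk
    refine ⟨A N, (hstab k hk).ge, by rw [inf_comm]; exact hbot, fun n hn => ?_⟩
    rw [hstab n (hk.trans hn), hbot, inf_idem, bot_sup_eq]
  suffices hall : ∀ j, P (N - j) by
    rcases le_or_gt N k with hk | hk
    · exact hbase k hk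
    · have := hall (N - k)
      rwa [Nat.sub_sub_self hk.le] at this
  intro j
  induction j with
  | zero => exact hbase N (by omega)
  | succ j ih =>
    rcases le_or_gt N j with hNj | hjN
    · rw [show N - (j + 1) = N - j by omega]; exact ih
    · set k' := N - (j + 1) with hk'
      have hsucc : k' + 1 = N - j := by omega
      obtain ⟨F', hF'le, hKF', hF'⟩ := ih
      have hF'le' : F' ≤ A k' := le_trans hF'le (by rw [← hsucc]; exact hA k')
      have hpq : (A k' ⊓ K) ⊓ F' = ⊥ := by
        rw [eq_bot_iff, ← hKF']
        exact inf_le_inf_right F' inf_le_right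
      obtain ⟨F, hqF, hFr, hpF, hpsup⟩ :=
        exists_compl_in (A k') (A k' ⊓ K) F' inf_le_left hF'le' hpq
      have hKF : K ⊓ F = ⊥ := by
        rw [eq_bot_iff, ← hpF]
        exact le_inf (le_inf (le_trans inf_le_right hFr) inf_le_left) inf_le_right
      refine ⟨F, hFr, hKF, fun n hn => ?_⟩
      rcases eq_or_lt_of_le hn with hn' | hn'
      · rw [← hn', inf_eq_right.mpr hFr, hpsup]
      · have hnNj : N - j ≤ n := by omega
        have hAF : A n ⊓ F = A n ⊓ F' := by
          apply le_antisymm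
          · rintro x ⟨hxA, hxF⟩
            have hx1 : x ∈ A (N - j) := hmono hnNj hxA
            rw [← hF' (N - j) le_rfl] at hx1
            obtain ⟨u, hu, v, hv, huv⟩ := Submodule.mem_sup.mp hx1
            have hvF : v ∈ F := hqF hv.2
            have huF : u ∈ F := by
              have : u = x - v := by rw [← huv]; abel
              rw [this]; exact Submodule.sub_mem _ hxF hvF
            have hu0 : u ∈ K ⊓ F := ⟨hu.2, huF⟩
            rw [hKF] at hu0
            simp only [Submodule.mem_bot] at hu0
            refine ⟨hxA, ?_⟩
            rw [← huv, hu0, zero_add]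
            exact hv.2
          · exact inf_le_inf_left (A n) hqF
        rw [hAF]
        exact hF' n hnNj

end chain

/-- Structure theorem for the sequences `R_{S,n}`, `R_{T,n}` of a regular Fredholm pair:
there are (finite dimensional, decreasing) subspaces `X₂ⁿ`, `Y₂ⁿ` with
`R_{S,n} = (R_{S,n} ∩ N(T)) ⊕ Y₂ⁿ`, `R_{T,n} = (R_{T,n} ∩ N(S)) ⊕ X₂ⁿ`,
`Y₂ⁿ = R_{S,n} ∩ Y₂¹`, `X₂ⁿ = R_{T,n} ∩ X₂¹`; the subspaces `R_{S,n} ∩ N(T)` and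
`R_{T,n} ∩ N(S)` are decreasing and finite dimensional for `n ≥ 2`; and `S`, `T`
restrict to linear isomorphisms `X₂ⁿ ≅ R_{S,n+1}`, `Y₂ⁿ ≅ R_{T,n+1}`. -/
theorem regularFredholmPair_structure {X Y : Type*}
    [NormedAddCommGroup X] [NormedSpace ℂ X] [CompleteSpace X]
    [NormedAddCommGroup Y] [NormedSpace ℂ Y] [CompleteSpace Y]
    (S : X →L[ℂ] Y) (T : Y →L[ℂ] X) (h : IsFredholmPair S T)
    (hS : IsRegularOp S) (hT : IsRegularOp T)
    (RS : ℕ → Submodule ℂ Y) (RT : ℕ → Submodule ℂ X)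
    (hRS0 : RS 0 = ⊤) (hRT0 : RT 0 = ⊤)
    (hRS : ∀ n, RS (n + 1) = Submodule.map (S : X →ₗ[ℂ] Y) (RT n))
    (hRT : ∀ n, RT (n + 1) = Submodule.map (T : Y →ₗ[ℂ] X) (RS n)) :
    ∃ (X2 : ℕ → Submodule ℂ X) (Y2 : ℕ → Submodule ℂ Y),
      ∀ n, 1 ≤ n →
        -- (i) direct sum decompositions
        (Disjoint (RS n ⊓ LinearMap.ker (T : Y →ₗ[ℂ] X)) (Y2 n) ∧
          (RS n ⊓ LinearMap.ker (T : Y →ₗ[ℂ] X)) ⊔ Y2 n = RS n ∧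
          Disjoint (RT n ⊓ LinearMap.ker (S : X →ₗ[ℂ] Y)) (X2 n) ∧
          (RT n ⊓ LinearMap.ker (S : X →ₗ[ℂ] Y)) ⊔ X2 n = RT n) ∧
        -- (ii) finite dimensionality and monotonicity
        (FiniteDimensional ℂ ↥(X2 n) ∧ FiniteDimensional ℂ ↥(Y2 n) ∧
          X2 (n + 1) ≤ X2 n ∧ Y2 (n + 1) ≤ Y2 n) ∧
        -- (iii) description via the first terms
        (Y2 n = RS n ⊓ Y2 1 ∧ X2 n = RT n ⊓ X2 1) ∧
        -- (iv) the kernel parts are decreasing and finite dimensional for n ≥ 2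
        (RS (n + 1) ⊓ LinearMap.ker (T : Y →ₗ[ℂ] X) ≤ RS n ⊓ LinearMap.ker (T : Y →ₗ[ℂ] X) ∧
          RT (n + 1) ⊓ LinearMap.ker (S : X →ₗ[ℂ] Y) ≤ RT n ⊓ LinearMap.ker (S : X →ₗ[ℂ] Y) ∧
          (2 ≤ n → FiniteDimensional ℂ ↥(RS n ⊓ LinearMap.ker (T : Y →ₗ[ℂ] X)) ∧
            FiniteDimensional ℂ ↥(RT n ⊓ LinearMap.ker (S : X →ₗ[ℂ] Y)))) ∧
        -- (v) S and T restrict to isomorphisms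
        (Submodule.map (S : X →ₗ[ℂ] Y) (X2 n) = RS (n + 1) ∧ Disjoint (LinearMap.ker (S : X →ₗ[ℂ] Y)) (X2 n) ∧
          Submodule.map (T : Y →ₗ[ℂ] X) (Y2 n) = RT (n + 1) ∧ Disjoint (LinearMap.ker (T : Y →ₗ[ℂ] X)) (Y2 n)) := by
  classical
  -- monotonicity
  have hmono : ∀ n, RS (n + 1) ≤ RS n ∧ RT (n + 1) ≤ RT n := by
    intro n
    induction n with
    | zero => exact ⟨by rw [hRS0]; exact le_top, by rw [hRT0]; exact le_top⟩
    | succ n ih =>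
      exact ⟨by rw [hRS (n + 1), hRS n]; exact Submodule.map_mono ih.2,
        by rw [hRT (n + 1), hRT n]; exact Submodule.map_mono ih.1⟩
  have hRSa : Antitone RS := antitone_nat_of_succ_le fun n => (hmono n).1
  have hRTa : Antitone RT := antitone_nat_of_succ_le fun n => (hmono n).2
  have hRS1 : RS 1 = LinearMap.range (S : X →ₗ[ℂ] Y) := by rw [hRS 0, hRT0, Submodule.map_top]
  have hRT1 : RT 1 = LinearMap.range (T : Y →ₗ[ℂ] X) := by rw [hRT 0, hRS0, Submodule.map_top]
  -- finite dimensionality from level 2 on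
  have fd2S : FiniteDimensional ℂ ↥(RS 2) := by
    rw [hRS 1, hRT1]
    exact fd_map_of_quot S.toLinearMap (LinearMap.range (T : Y →ₗ[ℂ] X)) h.2.1
  have fd2T : FiniteDimensional ℂ ↥(RT 2) := by
    rw [hRT 1, hRS1]
    exact fd_map_of_quot T.toLinearMap (LinearMap.range (S : X →ₗ[ℂ] Y)) h.2.2.2
  have fdS : ∀ n, 2 ≤ n → FiniteDimensional ℂ ↥(RS n) := fun n hn =>
    Submodule.finiteDimensional_of_le (hRSa hn)
  have fdT : ∀ n, 2 ≤ n → FiniteDimensional ℂ ↥(RT n) := fun n hn =>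
    Submodule.finiteDimensional_of_le (hRTa hn)
  -- stabilization
  have hstab : ∃ N, 2 ≤ N ∧ (∀ n, N ≤ n → RS n = RS N) ∧ (∀ n, N ≤ n → RT n = RT N) := by
    set f : ℕ → ℕ := fun n =>
      finrank ℂ ↥(RS (n + 2)) + finrank ℂ ↥(RT (n + 2)) with hf
    have hfmono : ∀ {m n : ℕ}, m ≤ n →
        finrank ℂ ↥(RS (n + 2)) ≤ finrank ℂ ↥(RS (m + 2)) ∧
        finrank ℂ ↥(RT (n + 2)) ≤ finrank ℂ ↥(RT (m + 2)) := by
      intro m n hmn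
      have := fdS (m + 2) (by omega)
      have := fdT (m + 2) (by omega)
      exact ⟨Submodule.finrank_mono (hRSa (by omega)),
        Submodule.finrank_mono (hRTa (by omega))⟩
    obtain ⟨n₀, hn₀⟩ : ∃ n₀, f n₀ = sInf (Set.range f) :=
      (Nat.sInf_mem (Set.range_nonempty f) : sInf (Set.range f) ∈ Set.range f)
    have key : ∀ n, n₀ + 2 ≤ n → finrank ℂ ↥(RS (n₀ + 2)) ≤ finrank ℂ ↥(RS n) ∧
        finrank ℂ ↥(RT (n₀ + 2)) ≤ finrank ℂ ↥(RT n) := by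
      intro n hn
      have h1 := (hfmono (show n₀ ≤ n - 2 by omega)).1
      have h2 := (hfmono (show n₀ ≤ n - 2 by omega)).2
      have h3 : f n₀ ≤ f (n - 2) := hn₀ ▸ Nat.sInf_le ⟨n - 2, rfl⟩
      have hn2 : n - 2 + 2 = n := by omega
      rw [hn2] at h1 h2
      simp only [hf] at h3
      rw [hn2] at h3
      omega
    refine ⟨n₀ + 2, by omega, ?_, ?_⟩ <;> intro n hn
    · have := fdS (n₀ + 2) (by omega)
      exact Submodule.eq_of_le_of_finrank_le (hRSa hn) (key n hn).1
    · have := fdT (n₀ + 2) (by omega)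
      exact Submodule.eq_of_le_of_finrank_le (hRTa hn) (key n hn).2
  obtain ⟨N, hN2, hstabS, hstabT⟩ := hstab
  haveI : FiniteDimensional ℂ ↥(RS N) := fdS N hN2
  haveI : FiniteDimensional ℂ ↥(RT N) := fdT N hN2
  -- the stable parts meet the kernels trivially
  have hTmem : ∀ x ∈ RS N, T x ∈ RT N := by
    intro x hx
    have : T x ∈ Submodule.map (T : Y →ₗ[ℂ] X) (RS N) := ⟨x, hx, rfl⟩
    rw [← hRT N] at this
    rwa [hstabT (N + 1) (by omega)] at this
  have hSmem : ∀ x ∈ RT N, S x ∈ RS N := by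
    intro x hx
    have : S x ∈ Submodule.map (S : X →ₗ[ℂ] Y) (RT N) := ⟨x, hx, rfl⟩
    rw [← hRS N] at this
    rwa [hstabS (N + 1) (by omega)] at this
  set gT : ↥(RS N) →ₗ[ℂ] ↥(RT N) := (T.toLinearMap).restrict hTmem with hgT
  set gS : ↥(RT N) →ₗ[ℂ] ↥(RS N) := (S.toLinearMap).restrict hSmem with hgS
  have hgTsurj : Function.Surjective gT := by
    rintro ⟨z, hz⟩
    have : z ∈ Submodule.map (T : Y →ₗ[ℂ] X) (RS N) := by
      rw [← hRT N, hstabT (N + 1) (by omega)]; exact hz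
    obtain ⟨y, hy, hyz⟩ := this
    exact ⟨⟨y, hy⟩, Subtype.ext hyz⟩
  have hgSsurj : Function.Surjective gS := by
    rintro ⟨z, hz⟩
    have : z ∈ Submodule.map (S : X →ₗ[ℂ] Y) (RT N) := by
      rw [← hRS N, hstabS (N + 1) (by omega)]; exact hz
    obtain ⟨y, hy, hyz⟩ := this
    exact ⟨⟨y, hy⟩, Subtype.ext hyz⟩
  have hgTinj : Function.Injective gT := by
    have : Function.Surjective (gS ∘ₗ gT) := by
      rw [LinearMap.coe_comp]; exact hgSsurj.comp hgTsurj
    have hinj : Function.Injective (gS ∘ₗ gT) := LinearMap.injective_iff_surjective.mpr this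
    rw [LinearMap.coe_comp] at hinj
    exact Function.Injective.of_comp hinj
  have hgSinj : Function.Injective gS := by
    have : Function.Surjective (gT ∘ₗ gS) := by
      rw [LinearMap.coe_comp]; exact hgTsurj.comp hgSsurj
    have hinj : Function.Injective (gT ∘ₗ gS) := LinearMap.injective_iff_surjective.mpr this
    rw [LinearMap.coe_comp] at hinj
    exact Function.Injective.of_comp hinj
  have hbotS : RS N ⊓ LinearMap.ker (T : Y →ₗ[ℂ] X) = ⊥ := by
    rw [eq_bot_iff]
    rintro x ⟨hx1, hx2⟩
    have : gT ⟨x, hx1⟩ = 0 := by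
      apply Subtype.ext
      rw [hgT]
      simpa [LinearMap.restrict_apply] using hx2
    have := hgTinj (this.trans (map_zero gT).symm)
    simpa [Submodule.mem_bot] using congrArg Subtype.val this
  have hbotT : RT N ⊓ LinearMap.ker (S : X →ₗ[ℂ] Y) = ⊥ := by
    rw [eq_bot_iff]
    rintro x ⟨hx1, hx2⟩
    have : gS ⟨x, hx1⟩ = 0 := by
      apply Subtype.ext
      rw [hgS]
      simpa [LinearMap.restrict_apply] using hx2
    have := hgSinj (this.trans (map_zero gS).symm)
    simpa [Submodule.mem_bot] using congrArg Subtype.val this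
  -- compatible complements
  obtain ⟨FY, hFYle, hKFY, hYdec⟩ :=
    exists_chain_compl RS (fun n => (hmono n).1) (LinearMap.ker (T : Y →ₗ[ℂ] X)) N hstabS hbotS 1
  obtain ⟨FX, hFXle, hKFX, hXdec⟩ :=
    exists_chain_compl RT (fun n => (hmono n).2) (LinearMap.ker (S : X →ₗ[ℂ] Y)) N hstabT hbotT 1
  -- finite dimensionality of the complements
  have fdFX : FiniteDimensional ℂ ↥FX := by
    haveI := h.2.1
    have hle : FX ≤ LinearMap.range (T : Y →ₗ[ℂ] X) := hRT1 ▸ hFXle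
    set φ : ↥FX →ₗ[ℂ] relQuot (LinearMap.range (T : Y →ₗ[ℂ] X)) (LinearMap.ker (S : X →ₗ[ℂ] Y)) :=
      ((LinearMap.ker (S : X →ₗ[ℂ] Y)).comap (LinearMap.range (T : Y →ₗ[ℂ] X)).subtype).mkQ ∘ₗ Submodule.inclusion hle
        with hφ
    have hφinj : Function.Injective φ := by
      rw [← LinearMap.ker_eq_bot, eq_bot_iff]
      rintro ⟨x, hx⟩ hker
      simp only [hφ, LinearMap.mem_ker, LinearMap.comp_apply, Submodule.mkQ_apply,
        Submodule.Quotient.mk_eq_zero, Submodule.mem_comap] at hker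
      have : x ∈ LinearMap.ker (S : X →ₗ[ℂ] Y) ⊓ FX := ⟨hker, hx⟩
      rw [hKFX] at this
      simpa [Submodule.mem_bot] using this
    exact FiniteDimensional.of_injective φ hφinj
  have fdFY : FiniteDimensional ℂ ↥FY := by
    haveI := h.2.2.2
    have hle : FY ≤ LinearMap.range (S : X →ₗ[ℂ] Y) := hRS1 ▸ hFYle
    set φ : ↥FY →ₗ[ℂ] relQuot (LinearMap.range (S : X →ₗ[ℂ] Y)) (LinearMap.ker (T : Y →ₗ[ℂ] X)) :=
      ((LinearMap.ker (T : Y →ₗ[ℂ] X)).comap (LinearMap.range (S : X →ₗ[ℂ] Y)).subtype).mkQ ∘ₗ Submodule.inclusion hle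
        with hφ
    have hφinj : Function.Injective φ := by
      rw [← LinearMap.ker_eq_bot, eq_bot_iff]
      rintro ⟨x, hx⟩ hker
      simp only [hφ, LinearMap.mem_ker, LinearMap.comp_apply, Submodule.mkQ_apply,
        Submodule.Quotient.mk_eq_zero, Submodule.mem_comap] at hker
      have : x ∈ LinearMap.ker (T : Y →ₗ[ℂ] X) ⊓ FY := ⟨hker, hx⟩
      rw [hKFY] at this
      simpa [Submodule.mem_bot] using this
    exact FiniteDimensional.of_injective φ hφinj
  -- the subspaces
  refine ⟨fun n => RT n ⊓ FX, fun n => RS n ⊓ FY, fun n hn => ?_⟩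
  have hY1 : RS 1 ⊓ FY = FY := inf_eq_right.mpr hFYle
  have hX1 : RT 1 ⊓ FX = FX := inf_eq_right.mpr hFXle
  refine ⟨⟨?_, hYdec n hn, ?_, hXdec n hn⟩, ⟨?_, ?_, ?_, ?_⟩, ⟨?_, ?_⟩, ⟨?_, ?_, ?_⟩,
    ?_, ?_, ?_, ?_⟩
  · -- Disjoint (RS n ⊓ ker T) (RS n ⊓ FY)
    rw [disjoint_iff, eq_bot_iff, ← hKFY]
    exact le_inf (le_trans inf_le_left inf_le_right) (le_trans inf_le_right inf_le_right)
  · rw [disjoint_iff, eq_bot_iff, ← hKFX]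
    exact le_inf (le_trans inf_le_left inf_le_right) (le_trans inf_le_right inf_le_right)
  · exact Submodule.finiteDimensional_of_le (inf_le_right : RT n ⊓ FX ≤ FX)
  · exact Submodule.finiteDimensional_of_le (inf_le_right : RS n ⊓ FY ≤ FY)
  · exact inf_le_inf_right FX (hmono n).2
  · exact inf_le_inf_right FY (hmono n).1
  · show RS n ⊓ FY = RS n ⊓ (RS 1 ⊓ FY)
    rw [hY1]
  · show RT n ⊓ FX = RT n ⊓ (RT 1 ⊓ FX)
    rw [hX1]
  · exact inf_le_inf_right _ (hmono n).1
  · exact inf_le_inf_right _ (hmono n).2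
  · intro hn2
    haveI := fd2S; haveI := fd2T
    exact ⟨Submodule.finiteDimensional_of_le (le_trans inf_le_left (hRSa hn2)),
      Submodule.finiteDimensional_of_le (le_trans inf_le_left (hRTa hn2))⟩
  · -- map S (X2 n) = RS (n + 1)
    have hker : Submodule.map (S : X →ₗ[ℂ] Y) (RT n ⊓ LinearMap.ker (S : X →ₗ[ℂ] Y)) = ⊥ := by
      rw [eq_bot_iff]
      rintro y ⟨x, ⟨-, hx⟩, rfl⟩
      simpa [Submodule.mem_bot] using hx
    rw [hRS n, ← hXdec n hn, Submodule.map_sup, hker, bot_sup_eq]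
  · rw [disjoint_iff, eq_bot_iff, ← hKFX]
    exact le_inf inf_le_left (le_trans inf_le_right inf_le_right)
  · have hker : Submodule.map (T : Y →ₗ[ℂ] X) (RS n ⊓ LinearMap.ker (T : Y →ₗ[ℂ] X)) = ⊥ := by
      rw [eq_bot_iff]
      rintro y ⟨x, ⟨-, hx⟩, rfl⟩
      simpa [Submodule.mem_bot] using hx
    rw [hRT n, ← hYdec n hn, Submodule.map_sup, hker, bot_sup_eq]
  · rw [disjoint_iff, eq_bot_iff, ← hKFY]
    exact le_inf inf_le_left (le_trans inf_le_right inf_le_right)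
end

section
/- Let X and Y be Banach spaces over ℂ and let (S,T) be a regular Fredholm pair, S : X → Y, T : Y → X. Define R_{S,0} = Y, R_{T,0} = X, R_{S,n+1} = S(R_{T,n}), R_{T,n+1} = T(R_{S,n}), and suppose that R_{S,n} = R(S) and R_{T,n} = R(T) for all n ≥ 1 (i.e., the case of the pair is I-1). Then X and Y are finite-dimensional, N(S) ∩ R(T) = 0, N(T) ∩ R(S) = 0, X = N(S) ⊕ R(T), Y = N(T) ⊕ R(S), S restricts to a linear isomorphism from R(T) onto R(S), T restricts to a linear isomorphism from R(S) onto R(T), and ind(S,T) = dim N(S) − dim N(T). -/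
open Module

section Aux

/-- `B.comap A.subtype` is isomorphic to `A ⊓ B`. -/
noncomputable def auxInfEquiv {X : Type*} [AddCommGroup X] [Module ℂ X] (A B : Submodule ℂ X) :
    ↥(B.comap A.subtype) ≃ₗ[ℂ] ↥(A ⊓ B) :=
  (Submodule.equivMapOfInjective A.subtype A.injective_subtype _).trans
    (LinearEquiv.ofEq _ _ (Submodule.map_comap_subtype A B))

lemma auxComapBot {X : Type*} [AddCommGroup X] [Module ℂ X] {A B : Submodule ℂ X}
    (h : A ⊓ B = ⊥) : B.comap A.subtype = ⊥ := by
  rw [eq_bot_iff]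
  intro x hx
  have hm : (x : X) ∈ A ⊓ B := ⟨x.2, hx⟩
  rw [h, Submodule.mem_bot] at hm
  rw [Submodule.mem_bot]
  exact Subtype.ext hm

/-- The quotient `A/(A ∩ ker f)` is isomorphic to `f(A)`. -/
noncomputable def auxQuotEquiv {X Y : Type*} [AddCommGroup X] [Module ℂ X]
    [AddCommGroup Y] [Module ℂ Y] (f : X →ₗ[ℂ] Y) (A : Submodule ℂ X) :
    relQuot A (LinearMap.ker f) ≃ₗ[ℂ] ↥(Submodule.map f A) := by
  have hker : (LinearMap.ker f).comap A.subtype = LinearMap.ker (f ∘ₗ A.subtype) :=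
    (LinearMap.ker_comp _ _).symm
  have hrange : LinearMap.range (f ∘ₗ A.subtype) = Submodule.map f A := by
    rw [LinearMap.range_comp, Submodule.range_subtype]
  exact (Submodule.quotEquivOfEq _ _ hker).trans
    ((f ∘ₗ A.subtype).quotKerEquivRange.trans (LinearEquiv.ofEq _ _ hrange))

end Aux


set_option maxHeartbeats 1600000 in
/-- Case I-1 of the classification: if `R_{S,n} = R(S)` and `R_{T,n} = R(T)` for all
`n ≥ 1`, then `X` and `Y` are finite dimensional, `N(S) ∩ R(T) = 0`, `N(T) ∩ R(S) = 0`,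
`X = N(S) ⊕ R(T)`, `Y = N(T) ⊕ R(S)`, `S` and `T` restrict to mutually inverse
isomorphisms between `R(T)` and `R(S)`, and `ind (S,T) = dim N(S) - dim N(T)`. -/
theorem regularFredholmPair_case_I_1 {X Y : Type*}
    [NormedAddCommGroup X] [NormedSpace ℂ X] [CompleteSpace X]
    [NormedAddCommGroup Y] [NormedSpace ℂ Y] [CompleteSpace Y]
    (S : X →L[ℂ] Y) (T : Y →L[ℂ] X) (h : IsFredholmPair S T)
    (hS : IsRegularOp S) (hT : IsRegularOp T)
    (RS : ℕ → Submodule ℂ Y) (RT : ℕ → Submodule ℂ X)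
    (hRS0 : RS 0 = ⊤) (hRT0 : RT 0 = ⊤)
    (hRS : ∀ n, RS (n + 1) = Submodule.map (S : X →ₗ[ℂ] Y) (RT n))
    (hRT : ∀ n, RT (n + 1) = Submodule.map (T : Y →ₗ[ℂ] X) (RS n))
    (hcase : ∀ n, 1 ≤ n → RS n = LinearMap.range (S : X →ₗ[ℂ] Y) ∧ RT n = LinearMap.range (T : Y →ₗ[ℂ] X)) :
    FiniteDimensional ℂ X ∧ FiniteDimensional ℂ Y ∧
    LinearMap.ker (S : X →ₗ[ℂ] Y) ⊓ LinearMap.range (T : Y →ₗ[ℂ] X) = ⊥ ∧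
    LinearMap.ker (T : Y →ₗ[ℂ] X) ⊓ LinearMap.range (S : X →ₗ[ℂ] Y) = ⊥ ∧
    IsCompl (LinearMap.ker (S : X →ₗ[ℂ] Y)) (LinearMap.range (T : Y →ₗ[ℂ] X)) ∧
    IsCompl (LinearMap.ker (T : Y →ₗ[ℂ] X)) (LinearMap.range (S : X →ₗ[ℂ] Y)) ∧
    Submodule.map (S : X →ₗ[ℂ] Y) (LinearMap.range (T : Y →ₗ[ℂ] X)) = LinearMap.range (S : X →ₗ[ℂ] Y) ∧
    Submodule.map (T : Y →ₗ[ℂ] X) (LinearMap.range (S : X →ₗ[ℂ] Y)) = LinearMap.range (T : Y →ₗ[ℂ] X) ∧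
    fpIndex S T = (finrank ℂ ↥(LinearMap.ker (S : X →ₗ[ℂ] Y)) : ℤ) - (finrank ℂ ↥(LinearMap.ker (T : Y →ₗ[ℂ] X)) : ℤ) := by
  obtain ⟨h1, h2, h3, h4⟩ := h
  obtain ⟨S', hS'⟩ := hS
  obtain ⟨T', hT'⟩ := hT
  have hSS' : ∀ x : X, S (S' (S x)) = S x := fun x => by
    have := DFunLike.congr_fun hS' x
    simpa using this
  have hTT' : ∀ y : Y, T (T' (T y)) = T y := fun y => by
    have := DFunLike.congr_fun hT' y
    simpa using this
  -- Step 1: stability of ranges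
  have hmapS : Submodule.map (S : X →ₗ[ℂ] Y) (LinearMap.range (T : Y →ₗ[ℂ] X)) = LinearMap.range (S : X →ₗ[ℂ] Y) := by
    have e := hRS 1
    rw [(hcase 1 le_rfl).2] at e
    rw [← e]
    exact (hcase 2 one_le_two).1
  have hmapT : Submodule.map (T : Y →ₗ[ℂ] X) (LinearMap.range (S : X →ₗ[ℂ] Y)) = LinearMap.range (T : Y →ₗ[ℂ] X) := by
    have e := hRT 1
    rw [(hcase 1 le_rfl).1] at e
    rw [← e]
    exact (hcase 2 one_le_two).2
  -- Step 2: isomorphisms between relative quotients and ranges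
  have eS : relQuot (LinearMap.range (T : Y →ₗ[ℂ] X)) (LinearMap.ker (S : X →ₗ[ℂ] Y)) ≃ₗ[ℂ] ↥(LinearMap.range (S : X →ₗ[ℂ] Y)) :=
    (auxQuotEquiv (S : X →ₗ[ℂ] Y) (LinearMap.range (T : Y →ₗ[ℂ] X))).trans (LinearEquiv.ofEq _ _ hmapS)
  have eT : relQuot (LinearMap.range (S : X →ₗ[ℂ] Y)) (LinearMap.ker (T : Y →ₗ[ℂ] X)) ≃ₗ[ℂ] ↥(LinearMap.range (T : Y →ₗ[ℂ] X)) :=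
    (auxQuotEquiv (T : Y →ₗ[ℂ] X) (LinearMap.range (S : X →ₗ[ℂ] Y))).trans (LinearEquiv.ofEq _ _ hmapT)
  haveI finRS : FiniteDimensional ℂ ↥(LinearMap.range (S : X →ₗ[ℂ] Y)) := by
    haveI := h2; exact eS.finiteDimensional
  haveI finRT : FiniteDimensional ℂ ↥(LinearMap.range (T : Y →ₗ[ℂ] X)) := by
    haveI := h4; exact eT.finiteDimensional
  -- Step 3: kernels are finite dimensional
  haveI finKS : FiniteDimensional ℂ ↥(LinearMap.ker (S : X →ₗ[ℂ] Y)) := by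
    haveI finInf : FiniteDimensional ℂ ↥(LinearMap.ker (S : X →ₗ[ℂ] Y) ⊓ LinearMap.range (T : Y →ₗ[ℂ] X)) :=
      Submodule.finiteDimensional_of_le inf_le_right
    haveI finP : FiniteDimensional ℂ
        ↥((LinearMap.range (T : Y →ₗ[ℂ] X)).comap (LinearMap.ker (S : X →ₗ[ℂ] Y)).subtype) :=
      (auxInfEquiv (LinearMap.ker (S : X →ₗ[ℂ] Y)) (LinearMap.range (T : Y →ₗ[ℂ] X))).symm.finiteDimensional
    refine Module.finite_def.mpr ?_
    apply Submodule.fg_of_fg_map_of_fg_inf_ker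
      ((LinearMap.range (T : Y →ₗ[ℂ] X)).comap (LinearMap.ker (S : X →ₗ[ℂ] Y)).subtype).mkQ
    · rw [Submodule.map_top, Submodule.range_mkQ]
      exact Module.finite_def.mp h1
    · rw [top_inf_eq, Submodule.ker_mkQ]
      exact Module.Finite.iff_fg.mp finP
  haveI finKT : FiniteDimensional ℂ ↥(LinearMap.ker (T : Y →ₗ[ℂ] X)) := by
    haveI finInf : FiniteDimensional ℂ ↥(LinearMap.ker (T : Y →ₗ[ℂ] X) ⊓ LinearMap.range (S : X →ₗ[ℂ] Y)) :=
      Submodule.finiteDimensional_of_le inf_le_right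
    haveI finP : FiniteDimensional ℂ
        ↥((LinearMap.range (S : X →ₗ[ℂ] Y)).comap (LinearMap.ker (T : Y →ₗ[ℂ] X)).subtype) :=
      (auxInfEquiv (LinearMap.ker (T : Y →ₗ[ℂ] X)) (LinearMap.range (S : X →ₗ[ℂ] Y))).symm.finiteDimensional
    refine Module.finite_def.mpr ?_
    apply Submodule.fg_of_fg_map_of_fg_inf_ker
      ((LinearMap.range (S : X →ₗ[ℂ] Y)).comap (LinearMap.ker (T : Y →ₗ[ℂ] X)).subtype).mkQ
    · rw [Submodule.map_top, Submodule.range_mkQ]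
      exact Module.finite_def.mp h3
    · rw [top_inf_eq, Submodule.ker_mkQ]
      exact Module.Finite.iff_fg.mp finP
  -- Step 4: X and Y are finite dimensional
  haveI finX : FiniteDimensional ℂ X := by
    have hXtop : LinearMap.ker (S : X →ₗ[ℂ] Y) ⊔
        Submodule.map (S' : Y →ₗ[ℂ] X) (LinearMap.range (S : X →ₗ[ℂ] Y)) = ⊤ := by
      rw [eq_top_iff]
      intro x _
      have h1m : x - S' (S x) ∈ LinearMap.ker (S : X →ₗ[ℂ] Y) := by
        rw [LinearMap.mem_ker, map_sub, ContinuousLinearMap.coe_coe, hSS', sub_self]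
      have h2m : S' (S x) ∈ Submodule.map (S' : Y →ₗ[ℂ] X) (LinearMap.range (S : X →ₗ[ℂ] Y)) :=
        ⟨S x, ⟨x, rfl⟩, rfl⟩
      have := Submodule.add_mem_sup h1m h2m
      simpa using this
    haveI : FiniteDimensional ℂ ↥(⊤ : Submodule ℂ X) := hXtop ▸ inferInstance
    exact Submodule.topEquiv.finiteDimensional
  haveI finY : FiniteDimensional ℂ Y := by
    have hYtop : LinearMap.ker (T : Y →ₗ[ℂ] X) ⊔
        Submodule.map (T' : X →ₗ[ℂ] Y) (LinearMap.range (T : Y →ₗ[ℂ] X)) = ⊤ := by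
      rw [eq_top_iff]
      intro y _
      have h1m : y - T' (T y) ∈ LinearMap.ker (T : Y →ₗ[ℂ] X) := by
        rw [LinearMap.mem_ker, map_sub, ContinuousLinearMap.coe_coe, hTT', sub_self]
      have h2m : T' (T y) ∈ Submodule.map (T' : X →ₗ[ℂ] Y) (LinearMap.range (T : Y →ₗ[ℂ] X)) :=
        ⟨T y, ⟨y, rfl⟩, rfl⟩
      have := Submodule.add_mem_sup h1m h2m
      simpa using this
    haveI : FiniteDimensional ℂ ↥(⊤ : Submodule ℂ Y) := hYtop ▸ inferInstance
    exact Submodule.topEquiv.finiteDimensional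
  -- Step 5: dimension counting
  have hq1 : finrank ℂ (relQuot (LinearMap.range (T : Y →ₗ[ℂ] X)) (LinearMap.ker (S : X →ₗ[ℂ] Y)))
      + finrank ℂ ↥((LinearMap.ker (S : X →ₗ[ℂ] Y)).comap (LinearMap.range (T : Y →ₗ[ℂ] X)).subtype)
      = finrank ℂ ↥(LinearMap.range (T : Y →ₗ[ℂ] X)) :=
    Submodule.finrank_quotient_add_finrank _
  have hq2 : finrank ℂ (relQuot (LinearMap.range (S : X →ₗ[ℂ] Y)) (LinearMap.ker (T : Y →ₗ[ℂ] X)))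
      + finrank ℂ ↥((LinearMap.ker (T : Y →ₗ[ℂ] X)).comap (LinearMap.range (S : X →ₗ[ℂ] Y)).subtype)
      = finrank ℂ ↥(LinearMap.range (S : X →ₗ[ℂ] Y)) :=
    Submodule.finrank_quotient_add_finrank _
  have hi1 : finrank ℂ ↥((LinearMap.ker (S : X →ₗ[ℂ] Y)).comap (LinearMap.range (T : Y →ₗ[ℂ] X)).subtype)
      = finrank ℂ ↥(LinearMap.range (T : Y →ₗ[ℂ] X) ⊓ LinearMap.ker (S : X →ₗ[ℂ] Y)) :=
    (auxInfEquiv _ _).finrank_eq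
  have hi2 : finrank ℂ ↥((LinearMap.ker (T : Y →ₗ[ℂ] X)).comap (LinearMap.range (S : X →ₗ[ℂ] Y)).subtype)
      = finrank ℂ ↥(LinearMap.range (S : X →ₗ[ℂ] Y) ⊓ LinearMap.ker (T : Y →ₗ[ℂ] X)) :=
    (auxInfEquiv _ _).finrank_eq
  have heS : finrank ℂ (relQuot (LinearMap.range (T : Y →ₗ[ℂ] X)) (LinearMap.ker (S : X →ₗ[ℂ] Y)))
      = finrank ℂ ↥(LinearMap.range (S : X →ₗ[ℂ] Y)) := eS.finrank_eq
  have heT : finrank ℂ (relQuot (LinearMap.range (S : X →ₗ[ℂ] Y)) (LinearMap.ker (T : Y →ₗ[ℂ] X)))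
      = finrank ℂ ↥(LinearMap.range (T : Y →ₗ[ℂ] X)) := eT.finrank_eq
  have hz1 : finrank ℂ ↥(LinearMap.range (T : Y →ₗ[ℂ] X) ⊓ LinearMap.ker (S : X →ₗ[ℂ] Y)) = 0 := by omega
  have hz2 : finrank ℂ ↥(LinearMap.range (S : X →ₗ[ℂ] Y) ⊓ LinearMap.ker (T : Y →ₗ[ℂ] X)) = 0 := by omega
  have hrank : finrank ℂ ↥(LinearMap.range (S : X →ₗ[ℂ] Y)) = finrank ℂ ↥(LinearMap.range (T : Y →ₗ[ℂ] X)) := by omega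
  have hinf1' : LinearMap.range (T : Y →ₗ[ℂ] X) ⊓ LinearMap.ker (S : X →ₗ[ℂ] Y) = ⊥ := Submodule.finrank_eq_zero.mp hz1
  have hinf2' : LinearMap.range (S : X →ₗ[ℂ] Y) ⊓ LinearMap.ker (T : Y →ₗ[ℂ] X) = ⊥ := Submodule.finrank_eq_zero.mp hz2
  have hinf1 : LinearMap.ker (S : X →ₗ[ℂ] Y) ⊓ LinearMap.range (T : Y →ₗ[ℂ] X) = ⊥ := by rw [inf_comm]; exact hinf1'
  have hinf2 : LinearMap.ker (T : Y →ₗ[ℂ] X) ⊓ LinearMap.range (S : X →ₗ[ℂ] Y) = ⊥ := by rw [inf_comm]; exact hinf2'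
  -- Step 6: complements
  have hrnS : finrank ℂ ↥(LinearMap.range (S : X →ₗ[ℂ] Y)) + finrank ℂ ↥(LinearMap.ker (S : X →ₗ[ℂ] Y))
      = finrank ℂ X := LinearMap.finrank_range_add_finrank_ker (S : X →ₗ[ℂ] Y)
  have hrnT : finrank ℂ ↥(LinearMap.range (T : Y →ₗ[ℂ] X)) + finrank ℂ ↥(LinearMap.ker (T : Y →ₗ[ℂ] X))
      = finrank ℂ Y := LinearMap.finrank_range_add_finrank_ker (T : Y →ₗ[ℂ] X)
  have hsup1 : LinearMap.ker (S : X →ₗ[ℂ] Y) ⊔ LinearMap.range (T : Y →ₗ[ℂ] X) = ⊤ := by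
    apply Submodule.eq_top_of_finrank_eq
    have h5 := Submodule.finrank_sup_add_finrank_inf_eq (LinearMap.ker (S : X →ₗ[ℂ] Y)) (LinearMap.range (T : Y →ₗ[ℂ] X))
    rw [hinf1] at h5
    simp only [finrank_bot] at h5
    omega
  have hsup2 : LinearMap.ker (T : Y →ₗ[ℂ] X) ⊔ LinearMap.range (S : X →ₗ[ℂ] Y) = ⊤ := by
    apply Submodule.eq_top_of_finrank_eq
    have h5 := Submodule.finrank_sup_add_finrank_inf_eq (LinearMap.ker (T : Y →ₗ[ℂ] X)) (LinearMap.range (S : X →ₗ[ℂ] Y))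
    rw [hinf2] at h5
    simp only [finrank_bot] at h5
    omega
  -- Step 7: the index
  have d1 : relDim (LinearMap.ker (S : X →ₗ[ℂ] Y)) (LinearMap.range (T : Y →ₗ[ℂ] X)) = finrank ℂ ↥(LinearMap.ker (S : X →ₗ[ℂ] Y)) :=
    (Submodule.quotEquivOfEqBot _ (auxComapBot hinf1)).finrank_eq
  have d2 : relDim (LinearMap.range (T : Y →ₗ[ℂ] X)) (LinearMap.ker (S : X →ₗ[ℂ] Y)) = finrank ℂ ↥(LinearMap.range (T : Y →ₗ[ℂ] X)) :=
    (Submodule.quotEquivOfEqBot _ (auxComapBot hinf1')).finrank_eq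
  have d3 : relDim (LinearMap.ker (T : Y →ₗ[ℂ] X)) (LinearMap.range (S : X →ₗ[ℂ] Y)) = finrank ℂ ↥(LinearMap.ker (T : Y →ₗ[ℂ] X)) :=
    (Submodule.quotEquivOfEqBot _ (auxComapBot hinf2)).finrank_eq
  have d4 : relDim (LinearMap.range (S : X →ₗ[ℂ] Y)) (LinearMap.ker (T : Y →ₗ[ℂ] X)) = finrank ℂ ↥(LinearMap.range (S : X →ₗ[ℂ] Y)) :=
    (Submodule.quotEquivOfEqBot _ (auxComapBot hinf2')).finrank_eq
  refine ⟨finX, finY, hinf1, hinf2,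
    ⟨disjoint_iff.mpr hinf1, codisjoint_iff.mpr hsup1⟩,
    ⟨disjoint_iff.mpr hinf2, codisjoint_iff.mpr hsup2⟩,
    hmapS, hmapT, ?_⟩
  unfold fpIndex
  rw [d1, d2, d3, d4, hrank]
  ring
end

section
/- Let X and Y be Banach spaces over ℂ and let (S,T) be a regular Fredholm pair, S : X → Y, T : Y → X. Then ind(S,T) = [dim N(S)/(N(S)∩R(T)) + dim(N(S) ∩ R(T∘S))] − [dim N(T)/(N(T)∩R(S)) + dim R(S∘T) − dim R(S∘T∘S)], and also ind(S,T) = [dim N(S)/(N(S)∩R(T)) + dim R(T∘S) − dim R(T∘S∘T)] − [dim N(T)/(N(T)∩R(S)) + dim(N(T) ∩ R(S∘T))]. -/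
open Module

section Aux

variable {X Y : Type*} [AddCommGroup X] [Module ℂ X] [AddCommGroup Y] [Module ℂ Y]

/-- `A / (A ∩ ker f)` is isomorphic to `f(A)`. -/
noncomputable def relQuotKerEquivMap (f : X →ₗ[ℂ] Y) (A : Submodule ℂ X) :
    (↥A ⧸ ((LinearMap.ker f).comap A.subtype)) ≃ₗ[ℂ] ↥(A.map f) := by
  rw [show (LinearMap.ker f).comap A.subtype = LinearMap.ker (f ∘ₗ A.subtype) from
    (LinearMap.ker_comp _ _).symm]
  exact (f ∘ₗ A.subtype).quotKerEquivRange.trans (LinearEquiv.ofEq _ _ (by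
    rw [LinearMap.range_comp, Submodule.range_subtype]))

lemma relDim_ker_eq (f : X →ₗ[ℂ] Y) (A : Submodule ℂ X) :
    finrank ℂ (↥A ⧸ ((LinearMap.ker f).comap A.subtype)) = finrank ℂ (A.map f) :=
  (relQuotKerEquivMap f A).finrank_eq

lemma comap_subtype_ker_eq (f : X →ₗ[ℂ] Y) (A : Submodule ℂ X) :
    (LinearMap.ker f).comap A.subtype = (LinearMap.ker f ⊓ A).comap A.subtype := by
  rw [Submodule.comap_inf, Submodule.comap_subtype_self, inf_top_eq]

lemma finrank_map_add_inf (f : X →ₗ[ℂ] Y) (A : Submodule ℂ X) [FiniteDimensional ℂ A] :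
    finrank ℂ (A.map f) + finrank ℂ ↥(LinearMap.ker f ⊓ A) = finrank ℂ A := by
  have h := LinearMap.finrank_range_add_finrank_ker (f ∘ₗ A.subtype)
  rwa [LinearMap.range_comp, Submodule.range_subtype, LinearMap.ker_comp,
    comap_subtype_ker_eq,
    (Submodule.comapSubtypeEquivOfLe (inf_le_right : LinearMap.ker f ⊓ A ≤ A)).finrank_eq]
    at h

lemma clm_range_comp {X Y Z : Type*}
    [NormedAddCommGroup X] [NormedSpace ℂ X] [NormedAddCommGroup Y] [NormedSpace ℂ Y]
    [NormedAddCommGroup Z] [NormedSpace ℂ Z]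
    (S : Y →L[ℂ] Z) (T : X →L[ℂ] Y) :
    LinearMap.range (S.comp T : X →ₗ[ℂ] Z) = Submodule.map (S : Y →ₗ[ℂ] Z) (LinearMap.range (T : X →ₗ[ℂ] Y)) := by
  rw [show (LinearMap.range (S.comp T : X →ₗ[ℂ] Z))
      = LinearMap.range ((S : Y →ₗ[ℂ] Z) ∘ₗ (T : X →ₗ[ℂ] Y)) from rfl,
    LinearMap.range_comp]

end Aux

/-- Index formulas for a regular Fredholm pair (Theorem 4.1):
`ind (S,T) = [a + dim (N(S) ∩ R(T∘S))] - [c + dim R(S∘T) - dim R(S∘T∘S)]`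
and
`ind (S,T) = [a + dim R(T∘S) - dim R(T∘S∘T)] - [c + dim (N(T) ∩ R(S∘T))]`. -/
theorem regularFredholmPair_index_formula {X Y : Type*}
    [NormedAddCommGroup X] [NormedSpace ℂ X] [CompleteSpace X]
    [NormedAddCommGroup Y] [NormedSpace ℂ Y] [CompleteSpace Y]
    (S : X →L[ℂ] Y) (T : Y →L[ℂ] X) (h : IsFredholmPair S T)
    (hS : IsRegularOp S) (hT : IsRegularOp T) :
    fpIndex S T =
      ((relDim (LinearMap.ker (S : X →ₗ[ℂ] Y)) (LinearMap.range (T : Y →ₗ[ℂ] X)) : ℤ) +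
          (finrank ℂ ↥(LinearMap.ker (S : X →ₗ[ℂ] Y) ⊓ LinearMap.range (T.comp S : X →ₗ[ℂ] X)) : ℤ)) -
        ((relDim (LinearMap.ker (T : Y →ₗ[ℂ] X)) (LinearMap.range (S : X →ₗ[ℂ] Y)) : ℤ) +
          (finrank ℂ ↥(LinearMap.range (S.comp T : Y →ₗ[ℂ] Y)) : ℤ) -
          (finrank ℂ ↥(LinearMap.range (S.comp (T.comp S) : X →ₗ[ℂ] Y)) : ℤ)) ∧
    fpIndex S T =
      ((relDim (LinearMap.ker (S : X →ₗ[ℂ] Y)) (LinearMap.range (T : Y →ₗ[ℂ] X)) : ℤ) +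
          (finrank ℂ ↥(LinearMap.range (T.comp S : X →ₗ[ℂ] X)) : ℤ) -
          (finrank ℂ ↥(LinearMap.range (T.comp (S.comp T) : Y →ₗ[ℂ] X)) : ℤ)) -
        ((relDim (LinearMap.ker (T : Y →ₗ[ℂ] X)) (LinearMap.range (S : X →ₗ[ℂ] Y)) : ℤ) +
          (finrank ℂ ↥(LinearMap.ker (T : Y →ₗ[ℂ] X) ⊓ LinearMap.range (S.comp T : Y →ₗ[ℂ] Y)) : ℤ)) := by
  -- `dim R(S∘T) = b` and `dim R(T∘S) = d`
  have hb : relDim (LinearMap.range (T : Y →ₗ[ℂ] X)) (LinearMap.ker (S : X →ₗ[ℂ] Y))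
      = finrank ℂ ↥(LinearMap.range (S.comp T : Y →ₗ[ℂ] Y)) := by
    rw [clm_range_comp]
    exact relDim_ker_eq (S : X →ₗ[ℂ] Y) (LinearMap.range (T : Y →ₗ[ℂ] X))
  have hd : relDim (LinearMap.range (S : X →ₗ[ℂ] Y)) (LinearMap.ker (T : Y →ₗ[ℂ] X))
      = finrank ℂ ↥(LinearMap.range (T.comp S : X →ₗ[ℂ] X)) := by
    rw [clm_range_comp]
    exact relDim_ker_eq (T : Y →ₗ[ℂ] X) (LinearMap.range (S : X →ₗ[ℂ] Y))
  -- finite-dimensionality of `R(S∘T)` and `R(T∘S)`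
  haveI h1 : FiniteDimensional ℂ ↥(LinearMap.range (S.comp T : Y →ₗ[ℂ] Y)) := by
    rw [clm_range_comp]
    haveI : FiniteDimensional ℂ (↥(LinearMap.range (T : Y →ₗ[ℂ] X)) ⧸
        Submodule.comap (LinearMap.range (T : Y →ₗ[ℂ] X)).subtype (LinearMap.ker (S : X →ₗ[ℂ] Y))) := h.2.1
    exact LinearEquiv.finiteDimensional (relQuotKerEquivMap (S : X →ₗ[ℂ] Y) (LinearMap.range (T : Y →ₗ[ℂ] X)))
  haveI h2 : FiniteDimensional ℂ ↥(LinearMap.range (T.comp S : X →ₗ[ℂ] X)) := by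
    rw [clm_range_comp]
    haveI : FiniteDimensional ℂ (↥(LinearMap.range (S : X →ₗ[ℂ] Y)) ⧸
        Submodule.comap (LinearMap.range (S : X →ₗ[ℂ] Y)).subtype (LinearMap.ker (T : Y →ₗ[ℂ] X))) := h.2.2.2
    exact LinearEquiv.finiteDimensional (relQuotKerEquivMap (T : Y →ₗ[ℂ] X) (LinearMap.range (S : X →ₗ[ℂ] Y)))
  -- rank–nullity inside `R(T∘S)` and `R(S∘T)`
  have key1 : finrank ℂ ↥(LinearMap.range (S.comp (T.comp S) : X →ₗ[ℂ] Y))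
      + finrank ℂ ↥(LinearMap.ker (S : X →ₗ[ℂ] Y) ⊓ LinearMap.range (T.comp S : X →ₗ[ℂ] X))
      = finrank ℂ ↥(LinearMap.range (T.comp S : X →ₗ[ℂ] X)) := by
    rw [clm_range_comp S (T.comp S)]
    exact finrank_map_add_inf (S : X →ₗ[ℂ] Y) (LinearMap.range (T.comp S : X →ₗ[ℂ] X))
  have key2 : finrank ℂ ↥(LinearMap.range (T.comp (S.comp T) : Y →ₗ[ℂ] X))
      + finrank ℂ ↥(LinearMap.ker (T : Y →ₗ[ℂ] X) ⊓ LinearMap.range (S.comp T : Y →ₗ[ℂ] Y))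
      = finrank ℂ ↥(LinearMap.range (S.comp T : Y →ₗ[ℂ] Y)) := by
    rw [clm_range_comp T (S.comp T)]
    exact finrank_map_add_inf (T : Y →ₗ[ℂ] X) (LinearMap.range (S.comp T : Y →ₗ[ℂ] Y))
  rw [fpIndex, hb, hd]
  constructor <;> omega
end

section
/- Let X and Y be Banach spaces over ℂ and let (S,T) be a regular Fredholm pair, S : X → Y, T : Y → X. Define R_{S,0} = Y, R_{T,0} = X, R_{S,n+1} = S(R_{T,n}), R_{T,n+1} = T(R_{S,n}). Suppose that the number of the pair (S,T) is 1, i.e., R_{S,n} = R(S) for all n ≥ 1 or R_{T,n} = R(T) for all n ≥ 1. Then ind(S,T) = dim N(S)/(N(S)∩R(T)) − dim N(T)/(N(T)∩R(S)). -/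
open Module

noncomputable def relQuot_equiv_map {X Y : Type*} [AddCommGroup X] [Module ℂ X]
    [AddCommGroup Y] [Module ℂ Y] (S : X →ₗ[ℂ] Y) (A : Submodule ℂ X) :
    relQuot A (LinearMap.ker S) ≃ₗ[ℂ] ↥(A.map S) :=
  (Submodule.quotEquivOfEq _ _ (LinearMap.ker_domRestrict A S).symm).trans
    ((S.domRestrict A).quotKerEquivRange.trans
      (LinearEquiv.ofEq _ _ (LinearMap.range_domRestrict A S)))

lemma relDim_ker_eq_finrank_map {X Y : Type*} [AddCommGroup X] [Module ℂ X]
    [AddCommGroup Y] [Module ℂ Y] (S : X →ₗ[ℂ] Y) (A : Submodule ℂ X) :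
    relDim A (LinearMap.ker S) = finrank ℂ ↥(A.map S) :=
  (relQuot_equiv_map S A).finrank_eq

lemma key_relDim_eq {X Y : Type*} [AddCommGroup X] [Module ℂ X]
    [AddCommGroup Y] [Module ℂ Y] (S : X →ₗ[ℂ] Y) (T : Y →ₗ[ℂ] X)
    (hb : FiniteDimensional ℂ (relQuot (LinearMap.range T) (LinearMap.ker S)))
    (h1 : (LinearMap.range T).map S = LinearMap.range S)
    (h2 : ((LinearMap.range S).map T).map S = LinearMap.range S) :
    relDim (LinearMap.range T) (LinearMap.ker S)
      = relDim (LinearMap.range S) (LinearMap.ker T) := by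
  have hbS : relDim (LinearMap.range T) (LinearMap.ker S)
      = finrank ℂ ↥(LinearMap.range S) := by
    rw [relDim_ker_eq_finrank_map, h1]
  have hdT : relDim (LinearMap.range S) (LinearMap.ker T)
      = finrank ℂ ↥((LinearMap.range S).map T) :=
    relDim_ker_eq_finrank_map T (LinearMap.range S)
  -- `range S` is finite dimensional
  haveI hfin : FiniteDimensional ℂ ↥(LinearMap.range S) := by
    have e := (relQuot_equiv_map S (LinearMap.range T)).trans (LinearEquiv.ofEq _ _ h1)
    exact FiniteDimensional.of_injective e.symm.toLinearMap e.symm.injective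
  haveI : Module.Finite ℂ ↥((LinearMap.range S).map T) :=
    Module.Finite.map (LinearMap.range S) T
  have hle1 : finrank ℂ ↥((LinearMap.range S).map T) ≤ finrank ℂ ↥(LinearMap.range S) :=
    Submodule.finrank_map_le T (LinearMap.range S)
  have hle2 : finrank ℂ ↥(LinearMap.range S) ≤ finrank ℂ ↥((LinearMap.range S).map T) := by
    calc finrank ℂ ↥(LinearMap.range S)
        = finrank ℂ ↥(((LinearMap.range S).map T).map S) := by rw [h2]
      _ ≤ finrank ℂ ↥((LinearMap.range S).map T) :=
          Submodule.finrank_map_le S ((LinearMap.range S).map T)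
  rw [hbS, hdT]
  omega

/-- If the number of the regular Fredholm pair `(S,T)` is 1, i.e. `R_{S,n} = R(S)` for
all `n ≥ 1` or `R_{T,n} = R(T)` for all `n ≥ 1`, then
`ind (S,T) = dim N(S)/(N(S) ∩ R(T)) - dim N(T)/(N(T) ∩ R(S))`. -/
theorem regularFredholmPair_number_one_index {X Y : Type*}
    [NormedAddCommGroup X] [NormedSpace ℂ X] [CompleteSpace X]
    [NormedAddCommGroup Y] [NormedSpace ℂ Y] [CompleteSpace Y]
    (S : X →L[ℂ] Y) (T : Y →L[ℂ] X) (h : IsFredholmPair S T)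
    (hS : IsRegularOp S) (hT : IsRegularOp T)
    (RS : ℕ → Submodule ℂ Y) (RT : ℕ → Submodule ℂ X)
    (hRS0 : RS 0 = ⊤) (hRT0 : RT 0 = ⊤)
    (hRS : ∀ n, RS (n + 1) = Submodule.map (S : X →ₗ[ℂ] Y) (RT n))
    (hRT : ∀ n, RT (n + 1) = Submodule.map (T : Y →ₗ[ℂ] X) (RS n))
    (hnum : (∀ n, 1 ≤ n → RS n = LinearMap.range (S : X →ₗ[ℂ] Y)) ∨
      (∀ n, 1 ≤ n → RT n = LinearMap.range (T : Y →ₗ[ℂ] X))) :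
    fpIndex S T = (relDim (LinearMap.ker (S : X →ₗ[ℂ] Y)) (LinearMap.range (T : Y →ₗ[ℂ] X)) : ℤ) -
      (relDim (LinearMap.ker (T : Y →ₗ[ℂ] X)) (LinearMap.range (S : X →ₗ[ℂ] Y)) : ℤ) := by
  have hRS1 : RS 1 = LinearMap.range (S : X →ₗ[ℂ] Y) := by
    rw [hRS 0, hRT0, Submodule.map_top]
  have hRT1 : RT 1 = LinearMap.range (T : Y →ₗ[ℂ] X) := by
    rw [hRT 0, hRS0, Submodule.map_top]
  have hRS2 : RS 2 = (LinearMap.range (T : Y →ₗ[ℂ] X)).map (S : X →ₗ[ℂ] Y) := by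
    rw [hRS 1, hRT1]
  have hRT2 : RT 2 = (LinearMap.range (S : X →ₗ[ℂ] Y)).map (T : Y →ₗ[ℂ] X) := by
    rw [hRT 1, hRS1]
  have hRS3 : RS 3 = ((LinearMap.range (S : X →ₗ[ℂ] Y)).map (T : Y →ₗ[ℂ] X)).map (S : X →ₗ[ℂ] Y) := by
    rw [hRS 2, hRT2]
  have hRT3 : RT 3 = ((LinearMap.range (T : Y →ₗ[ℂ] X)).map (S : X →ₗ[ℂ] Y)).map (T : Y →ₗ[ℂ] X) := by
    rw [hRT 2, hRS2]
  have hbd : relDim (LinearMap.range (T : Y →ₗ[ℂ] X)) (LinearMap.ker (S : X →ₗ[ℂ] Y))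
      = relDim (LinearMap.range (S : X →ₗ[ℂ] Y)) (LinearMap.ker (T : Y →ₗ[ℂ] X)) := by
    rcases hnum with hA | hA
    · exact key_relDim_eq (S : X →ₗ[ℂ] Y) (T : Y →ₗ[ℂ] X) h.2.1
        (hRS2.symm.trans (hA 2 (by norm_num)))
        (hRS3.symm.trans (hA 3 (by norm_num)))
    · exact (key_relDim_eq (T : Y →ₗ[ℂ] X) (S : X →ₗ[ℂ] Y) h.2.2.2
        (hRT2.symm.trans (hA 2 (by norm_num)))
        (hRT3.symm.trans (hA 3 (by norm_num)))).symm
  unfold fpIndex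
  rw [hbd]
  ring
end

section
/- Let X and Y be Banach spaces over ℂ and let (S,T) be a regular Fredholm pair, S : X → Y, T : Y → X, with ind(S,T) = 0 (i.e., (S,T) is a regular Weyl pair). Then S and T are decomposably regular: there exist bounded linear bijections S' : Y → X and T' : X → Y (with bounded inverses) such that S = S S' S and T = T T' T. -/
set_option linter.unusedSectionVars false
set_option maxHeartbeats 2000000
open ContinuousLinearMap


open Module

section AuxiliaryLemmas

noncomputable section Helpers

variable {Z : Type*} [NormedAddCommGroup Z] [NormedSpace ℂ Z]

/-- Continuous linear equiv between equal submodules. -/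
def subEquivOfEq (p q : Submodule ℂ Z) (h : p = q) : ↥p ≃L[ℂ] ↥q := by
  subst h; exact ContinuousLinearEquiv.refl ℂ ↥p

variable [CompleteSpace Z]

theorem sumEquiv (p q A : Submodule ℂ Z) [CompleteSpace p] [CompleteSpace q] [CompleteSpace A]
    (hinf : p ⊓ q = ⊥) (hsup : p ⊔ q = A) : Nonempty ((↥p × ↥q) ≃L[ℂ] ↥A) := by
  have hmem : ∀ z : ↥p × ↥q, (p.subtypeL.coprod q.subtypeL) z ∈ A := by
    rintro ⟨x, y⟩
    have : (x : Z) + y ∈ p ⊔ q := Submodule.add_mem_sup x.2 y.2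
    rw [hsup] at this; simpa using this
  set f : (↥p × ↥q) →L[ℂ] ↥A := (p.subtypeL.coprod q.subtypeL).codRestrict A hmem with hf
  have hker : f.ker = ⊥ := by
    rw [LinearMap.ker_eq_bot']
    rintro ⟨x, y⟩ hxy
    have hxy' : (x : Z) + y = 0 := by
      have := congrArg (Subtype.val) hxy
      simpa [hf] using this
    have hx : (x : Z) ∈ p ⊓ q := ⟨x.2, by
      have hh : (x : Z) = -y := eq_neg_of_add_eq_zero_left hxy'
      rw [hh]; exact q.neg_mem y.2⟩
    rw [hinf] at hx
    have hx0 : (x : Z) = 0 := hx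
    have hy0 : (y : Z) = 0 := by simpa [hx0] using hxy'
    ext <;> simp [hx0, hy0]
  have hrange : f.range = ⊤ := by
    rw [LinearMap.range_eq_top]
    rintro ⟨a, ha⟩
    rw [← hsup] at ha
    rcases Submodule.mem_sup.1 ha with ⟨x, hxp, y, hyq, hxy⟩
    refine ⟨(⟨x, hxp⟩, ⟨y, hyq⟩), ?_⟩
    ext
    simpa [hf] using hxy
  exact ⟨ContinuousLinearEquiv.ofBijective f hker hrange⟩

/-- Two closed complements of the same closed submodule are continuously isomorphic. -/
theorem complEquiv (p A B : Submodule ℂ Z) (hp : IsClosed (p : Set Z)) (hA : IsClosed (A : Set Z))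
    (hB : IsClosed (B : Set Z)) (h1 : IsCompl p A) (h2 : IsCompl p B) :
    Nonempty (↥A ≃L[ℂ] ↥B) := by
  haveI := hp.completeSpace_coe
  haveI := hA.completeSpace_coe
  haveI := hB.completeSpace_coe
  set π : Z →L[ℂ] ↥B := B.linearProjOfClosedCompl p h2.symm hB hp with hπ
  have hπcoe : ∀ z : Z, π z = B.projectionOnto p h2.symm z := by
    intro z
    rw [hπ, Submodule.coe_continuous_linearProjOfClosedCompl']
  have hπ_right : ∀ z : Z, z ∈ p → π z = 0 := by
    intro z hz
    rw [hπcoe]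
    exact Submodule.projectionOnto_apply_right h2.symm ⟨z, hz⟩
  have hπ_left : ∀ z : ↥B, π (z : Z) = z := by
    intro z; rw [hπcoe]
    exact Submodule.projectionOnto_apply_left h2.symm z
  have hπ_sub : ∀ z : Z, z - (π z : Z) ∈ p := by
    intro z
    have := Submodule.projection_add_projection_eq_self h2 z
    rw [hπcoe]
    have : z - (B.projectionOnto p h2.symm z : Z)
        = (p.projectionOnto B h2 z : Z) := by
      have h : (p.projectionOnto B h2 z : Z) + (B.projectionOnto p h2.symm z : Z) = z :=
        Submodule.projection_add_projection_eq_self h2 z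
      linear_combination (norm := abel) -h
    rw [this]
    exact (p.projectionOnto B h2 z).2
  set f : ↥A →L[ℂ] ↥B := π.comp A.subtypeL with hfdef
  have hker : f.ker = ⊥ := by
    rw [LinearMap.ker_eq_bot']
    rintro a hfa
    have h0 : π (a : Z) = 0 := hfa
    have hain : (a : Z) ∈ p := by
      have := hπ_sub (a : Z)
      rw [h0] at this
      simpa using this
    have : (a : Z) ∈ p ⊓ A := ⟨hain, a.2⟩
    rw [h1.inf_eq_bot] at this
    exact Subtype.ext this
  have hrange : f.range = ⊤ := by
    rw [LinearMap.range_eq_top]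
    intro b
    set a := A.projectionOnto p h1.symm (b : Z) with hadef
    refine ⟨a, ?_⟩
    have hdiff : (b : Z) - (a : Z) ∈ p := by
      have : (b : Z) - (A.projectionOnto p h1.symm (b : Z) : Z)
          = (p.projectionOnto A h1 (b : Z) : Z) := by
        have h : (p.projectionOnto A h1 (b : Z) : Z) + (A.projectionOnto p h1.symm (b : Z) : Z)
            = (b : Z) := Submodule.projection_add_projection_eq_self h1 (b : Z)
        linear_combination (norm := abel) -h
      rw [hadef, this]
      exact (p.projectionOnto A h1 (b : Z)).2
    have : f a = π (a : Z) := rfl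
    rw [ContinuousLinearMap.coe_coe, this]
    have hsplit : (a : Z) = (b : Z) - ((b : Z) - (a : Z)) := by abel
    rw [hsplit, map_sub, hπ_left b, hπ_right _ hdiff, sub_zero]
  exact ⟨ContinuousLinearEquiv.ofBijective f hker hrange⟩

end Helpers


noncomputable section Helpers2

variable {Z : Type*} [NormedAddCommGroup Z] [NormedSpace ℂ Z]

/-- A finite dimensional submodule is continuously isomorphic to `ℂ^n`. -/
theorem findimEquivPi (q : Submodule ℂ Z) [FiniteDimensional ℂ q] :
    Nonempty (↥q ≃L[ℂ] (Fin (finrank ℂ q) → ℂ)) :=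
  ⟨(Module.finBasis ℂ q).equivFun.toContinuousLinearEquiv⟩

/-- The sup of a closed submodule and a finite dimensional one is closed. -/
theorem isClosed_sup_findim (p q : Submodule ℂ Z) (hp : IsClosed (p : Set Z))
    [FiniteDimensional ℂ q] : IsClosed ((p ⊔ q : Submodule ℂ Z) : Set Z) := by
  haveI : IsClosed (p : Set Z) := hp
  haveI : FiniteDimensional ℂ (q.map p.mkQ) := Module.Finite.map q p.mkQ
  have hcont : Continuous p.mkQ := by
    exact continuous_quot_mk
  have hset : ((p ⊔ q : Submodule ℂ Z) : Set Z)
      = p.mkQ ⁻¹' ((q.map p.mkQ : Submodule ℂ (Z ⧸ p)) : Set (Z ⧸ p)) := by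
    ext z
    constructor
    · intro hz
      have : z ∈ Submodule.comap p.mkQ (q.map p.mkQ) := by
        rw [Submodule.comap_map_mkQ]
        simpa [sup_comm] using hz
      exact this
    · intro hz
      have : z ∈ Submodule.comap p.mkQ (q.map p.mkQ) := hz
      rw [Submodule.comap_map_mkQ] at this
      simpa [sup_comm] using this
  rw [hset]
  exact IsClosed.preimage hcont (Submodule.closed_of_finiteDimensional _)

/-- Any submodule `A` has, relative to another submodule `p`, a complement of
`p ⊓ A` inside `A` which is isomorphic to `A ⧸ (p ⊓ A)`. -/
theorem exists_rel_compl {W : Type*} [AddCommGroup W] [Module ℂ W] (A p : Submodule ℂ W) :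
    ∃ q : Submodule ℂ W, q ≤ A ∧ (p ⊓ A) ⊓ q = ⊥ ∧ (p ⊓ A) ⊔ q = A ∧
      Nonempty (↥q ≃ₗ[ℂ] (↥A ⧸ (p.comap A.subtype))) := by
  set pA : Submodule ℂ ↥A := p.comap A.subtype with hpA
  obtain ⟨qA, hq⟩ := Submodule.exists_isCompl pA
  refine ⟨qA.map A.subtype, ?_, ?_, ?_, ?_⟩
  · exact Submodule.map_subtype_le A qA
  · have hmap : (p ⊓ A) = pA.map A.subtype := by
      ext x
      simp [hpA, Submodule.mem_map]
      constructor
      · rintro ⟨hxp, hxA⟩; exact ⟨hxA, hxp⟩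
      · rintro ⟨hxA, hxp⟩; exact ⟨hxp, hxA⟩
    rw [hmap, ← Submodule.map_inf _ (Submodule.injective_subtype A), hq.inf_eq_bot,
      Submodule.map_bot]
  · have hmap : (p ⊓ A) = pA.map A.subtype := by
      ext x
      simp [hpA, Submodule.mem_map]
      constructor
      · rintro ⟨hxp, hxA⟩; exact ⟨hxA, hxp⟩
      · rintro ⟨hxA, hxp⟩; exact ⟨hxp, hxA⟩
    rw [hmap, ← Submodule.map_sup, hq.sup_eq_top, Submodule.map_subtype_top]
  · refine ⟨?_⟩
    exact ((Submodule.equivMapOfInjective A.subtype (Submodule.injective_subtype A) qA).symm.trans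
      (Submodule.quotientEquivOfIsCompl pA qA hq).symm)

end Helpers2


noncomputable section Helpers3

/-- Continuous linear equiv between equal submodules. -/
def subEquivOfEq' {W : Type*} [NormedAddCommGroup W] [NormedSpace ℂ W]
    (p q : Submodule ℂ W) (h : p = q) : ↥p ≃L[ℂ] ↥q := by
  subst h; exact ContinuousLinearEquiv.refl ℂ ↥p

variable {Z U V : Type*} [NormedAddCommGroup Z] [NormedSpace ℂ Z]
  [NormedAddCommGroup U] [NormedSpace ℂ U] [NormedAddCommGroup V] [NormedSpace ℂ V]

/-- Splitting off one dimension from the kernel of a functional. -/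
def kerSplit (g h : Z →L[ℂ] ℂ) (a : Z) (hga : g a = 0) (hha : h a = 1) :
    ↥(g.ker) ≃L[ℂ] ↥(g.ker ⊓ h.ker) × ℂ := by
  set u : Z →L[ℂ] Z := ContinuousLinearMap.id ℂ Z - h.smulRight a with hu
  have humem : ∀ x : ↥(g.ker), (u.comp (g.ker).subtypeL) x ∈
      g.ker ⊓ h.ker := by
    rintro ⟨x, hx⟩
    have hx' : g x = 0 := hx
    constructor
    · show g (x - h x • a) = 0
      simp [hga, hx']
    · show h (x - h x • a) = 0
      simp [hha]
  set f₁ : ↥(g.ker) →L[ℂ] ↥(g.ker ⊓ h.ker) × ℂ :=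
    ((u.comp (g.ker).subtypeL).codRestrict _ humem).prod
      (h.comp (g.ker).subtypeL) with hf₁
  set f₂' : ↥(g.ker ⊓ h.ker) × ℂ →L[ℂ] Z :=
    (g.ker ⊓ h.ker).subtypeL.comp
        (fst ℂ (↥(g.ker ⊓ h.ker)) ℂ)
      + ((ContinuousLinearMap.id ℂ ℂ).smulRight a).comp
        (snd ℂ (↥(g.ker ⊓ h.ker)) ℂ) with hf₂'
  have hbmem : ∀ z : ↥(g.ker ⊓ h.ker) × ℂ,
      f₂' z ∈ g.ker := by
    rintro ⟨⟨m, hm⟩, c⟩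
    have hm' : g m = 0 := hm.1
    show g (m + c • a) = 0
    simp [hga, hm']
  set f₂ : ↥(g.ker ⊓ h.ker) × ℂ →L[ℂ] ↥(g.ker) :=
    f₂'.codRestrict _ hbmem with hf₂
  refine ContinuousLinearEquiv.equivOfInverse f₁ f₂ ?_ ?_
  · rintro ⟨x, hx⟩
    ext
    show (x - h x • a) + h x • a = x
    abel
  · rintro ⟨⟨m, hm⟩, c⟩
    have hm' : h m = 0 := hm.2
    refine Prod.ext ?_ ?_
    · ext
      show (m + c • a) - h (m + c • a) • a = m
      simp [hm', hha]
    · show h (m + c • a) = c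
      simp [hm', hha]

/-- Kernels of two nonzero functionals on a space are isomorphic. -/
theorem kerEquivKer (g h : Z →L[ℂ] ℂ) (hg : g ≠ 0) (hh : h ≠ 0) :
    Nonempty (↥(g.ker) ≃L[ℂ] ↥(h.ker)) := by
  -- helper to obtain a point with value 1
  have exval : ∀ (k : Z →L[ℂ] ℂ), k ≠ 0 → ∃ z, k z = 1 := by
    intro k hk
    have : ∃ z, k z ≠ 0 := by
      by_contra hcon
      push_neg at hcon
      exact hk (by ext z; simpa using hcon z)
    obtain ⟨z, hz⟩ := this
    exact ⟨(k z)⁻¹ • z, by simp [inv_mul_cancel₀ hz]⟩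
  by_cases hle : g.ker ≤ h.ker
  · -- then kernels are equal
    obtain ⟨z, hz⟩ := exval g hg
    have key : ∀ x, h x = g x * h z := by
      intro x
      have hxk : x - g x • z ∈ g.ker := by
        simp [LinearMap.mem_ker, hz]
      have := hle hxk
      have hzero : h x - g x * h z = 0 := by
        simpa [LinearMap.mem_ker, smul_eq_mul] using this
      exact sub_eq_zero.mp hzero
    have hzne : h z ≠ 0 := by
      intro h0
      apply hh
      ext x
      simp [key x, h0]
    have heq : g.ker = h.ker := by
      refine le_antisymm hle ?_
      intro x hx
      have hx' : h x = 0 := hx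
      have : g x * h z = 0 := by rw [← key x, hx']
      have : g x = 0 := by
        rcases mul_eq_zero.mp this with h1 | h2
        · exact h1
        · exact absurd h2 hzne
      exact this
    exact ⟨subEquivOfEq' _ _ heq⟩
  · by_cases hle' : h.ker ≤ g.ker
    · obtain ⟨z, hz⟩ := exval h hh
      have key : ∀ x, g x = h x * g z := by
        intro x
        have hxk : x - h x • z ∈ h.ker := by
          simp [LinearMap.mem_ker, hz]
        have := hle' hxk
        have hzero : g x - h x * g z = 0 := by
          simpa [LinearMap.mem_ker, smul_eq_mul] using this
        exact sub_eq_zero.mp hzero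
      have hzne : g z ≠ 0 := by
        intro h0
        apply hg
        ext x
        simp [key x, h0]
      have heq : g.ker = h.ker := by
        refine le_antisymm ?_ hle'
        intro x hx
        have hx' : g x = 0 := hx
        have : h x * g z = 0 := by rw [← key x, hx']
        have : h x = 0 := by
          rcases mul_eq_zero.mp this with h1 | h2
          · exact h1
          · exact absurd h2 hzne
        exact this
      exact ⟨subEquivOfEq' _ _ heq⟩
    · -- neither inclusion: pick crossing elements
      obtain ⟨a, hag, hah⟩ := SetLike.not_le_iff_exists.mp hle
      obtain ⟨b, hbh, hbg⟩ := SetLike.not_le_iff_exists.mp hle'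
      have hah' : h a ≠ 0 := hah
      have hbg' : g b ≠ 0 := hbg
      set a' := (h a)⁻¹ • a with ha'
      set b' := (g b)⁻¹ • b with hb'
      have e₁ := kerSplit g h a' (by simp [ha', (show g a = 0 from hag)])
        (by simp [ha', inv_mul_cancel₀ hah'])
      have e₂ := kerSplit h g b' (by simp [hb', (show h b = 0 from hbh)])
        (by simp [hb', inv_mul_cancel₀ hbg'])
      have ecomm : ↥(h.ker ⊓ g.ker) ≃L[ℂ]
          ↥(g.ker ⊓ h.ker) := subEquivOfEq' _ _ (inf_comm _ _)
      exact ⟨e₁.trans ((ecomm.prodCongr (ContinuousLinearEquiv.refl ℂ ℂ)).symm.trans e₂.symm)⟩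

end Helpers3


noncomputable section H4

variable {U V : Type*} [NormedAddCommGroup U] [NormedSpace ℂ U]
  [NormedAddCommGroup V] [NormedSpace ℂ V]


/-- One-dimensional cancellation. -/
theorem cancelOne (e : (U × ℂ) ≃L[ℂ] (V × ℂ)) : Nonempty (U ≃L[ℂ] V) := by
  set g : (V × ℂ) →L[ℂ] ℂ := (snd ℂ U ℂ).comp (e.symm : (V × ℂ) →L[ℂ] (U × ℂ)) with hg
  set h : (V × ℂ) →L[ℂ] ℂ := snd ℂ V ℂ with hh
  -- U ≃L ker g
  have hmemg : ∀ u : U, ((e : (U × ℂ) →L[ℂ] (V × ℂ)).comp (inl ℂ U ℂ)) u ∈ g.ker := by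
    intro u
    show g (e (u, 0)) = 0
    rw [hg]
    simp
  have eU : U ≃L[ℂ] ↥(g.ker) := by
    refine ContinuousLinearEquiv.equivOfInverse
      (((e : (U × ℂ) →L[ℂ] (V × ℂ)).comp (inl ℂ U ℂ)).codRestrict _ hmemg)
      ((fst ℂ U ℂ).comp ((e.symm : (V × ℂ) →L[ℂ] (U × ℂ)).comp (g.ker).subtypeL))
      ?_ ?_
    · intro u
      show (e.symm (e (u, 0))).1 = u
      simp
    · rintro ⟨z, hz⟩
      have hz' : (e.symm z).2 = 0 := hz
      refine Subtype.ext ?_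
      show e ((e.symm z).1, 0) = z
      have : ((e.symm z).1, (0 : ℂ)) = e.symm z := by
        exact Prod.ext rfl hz'.symm
      rw [this, e.apply_symm_apply]
  have eV : V ≃L[ℂ] ↥(h.ker) := by
    have hmemh : ∀ v : V, (inl ℂ V ℂ) v ∈ h.ker := by
      intro v; show ((v, (0:ℂ)) : V × ℂ).2 = 0; rfl
    refine ContinuousLinearEquiv.equivOfInverse
      ((inl ℂ V ℂ).codRestrict _ hmemh)
      ((fst ℂ V ℂ).comp (h.ker).subtypeL) ?_ ?_
    · intro v; rfl
    · rintro ⟨z, hz⟩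
      have hz' : z.2 = 0 := hz
      refine Subtype.ext ?_
      exact Prod.ext rfl hz'.symm
  have hgne : g ≠ 0 := by
    intro h0
    have : g (e (0, 1)) = (1 : ℂ) := by rw [hg]; simp
    rw [h0] at this
    simpa using this
  have hhne : h ≠ 0 := by
    intro h0
    have : h (0, 1) = (1 : ℂ) := rfl
    rw [h0] at this
    simpa using this
  obtain ⟨ek⟩ := kerEquivKer g h hgne hhne
  exact ⟨(eU.trans ek).trans eV.symm⟩

/-- `(Fin (n+1) → ℂ) ≃L (Fin n → ℂ) × ℂ`. -/
def piSuccEquiv (n : ℕ) : (Fin (n + 1) → ℂ) ≃L[ℂ] (Fin n → ℂ) × ℂ := by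
  have l1 : (Fin (n + 1) → ℂ) ≃ₗ[ℂ] (Fin n ⊕ Fin 1 → ℂ) :=
    LinearEquiv.funCongrLeft ℂ ℂ finSumFinEquiv
  have l2 : (Fin n ⊕ Fin 1 → ℂ) ≃ₗ[ℂ] (Fin n → ℂ) × (Fin 1 → ℂ) :=
    LinearEquiv.sumArrowLequivProdArrow _ _ ℂ ℂ
  have l3 : ((Fin n → ℂ) × (Fin 1 → ℂ)) ≃ₗ[ℂ] (Fin n → ℂ) × ℂ :=
    LinearEquiv.prodCongr (LinearEquiv.refl ℂ _) (LinearEquiv.funUnique (Fin 1) ℂ ℂ)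
  exact ((l1.trans l2).trans l3).toContinuousLinearEquiv

/-- Finite-dimensional cancellation. -/
theorem cancelFin : ∀ (n : ℕ) (U V : Type*) [NormedAddCommGroup U] [NormedSpace ℂ U]
    [NormedAddCommGroup V] [NormedSpace ℂ V],
    Nonempty ((U × (Fin n → ℂ)) ≃L[ℂ] (V × (Fin n → ℂ))) → Nonempty (U ≃L[ℂ] V) := by
  intro n
  induction n with
  | zero =>
    intro U V _ _ _ _ ⟨e⟩
    have e0U : (U × (Fin 0 → ℂ)) ≃L[ℂ] U := by
      refine ContinuousLinearEquiv.equivOfInverse (fst ℂ U (Fin 0 → ℂ))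
        ((ContinuousLinearMap.id ℂ U).prod 0) ?_ ?_
      · rintro ⟨w, z⟩
        refine Prod.ext rfl ?_
        exact Subsingleton.elim _ _
      · intro w; rfl
    have e0V : (V × (Fin 0 → ℂ)) ≃L[ℂ] V := by
      refine ContinuousLinearEquiv.equivOfInverse (fst ℂ V (Fin 0 → ℂ))
        ((ContinuousLinearMap.id ℂ V).prod 0) ?_ ?_
      · rintro ⟨w, z⟩
        refine Prod.ext rfl ?_
        exact Subsingleton.elim _ _
      · intro w; rfl
    exact ⟨(e0U.symm.trans e).trans e0V⟩
  | succ n ih =>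
    intro U V _ _ _ _ ⟨e⟩
    have assocU := (LinearIsometryEquiv.prodAssoc ℂ U (Fin n → ℂ) ℂ).toContinuousLinearEquiv.trans
        ((ContinuousLinearEquiv.refl ℂ U).prodCongr (piSuccEquiv n).symm)
    have assocV := (LinearIsometryEquiv.prodAssoc ℂ V (Fin n → ℂ) ℂ).toContinuousLinearEquiv.trans
        ((ContinuousLinearEquiv.refl ℂ V).prodCongr (piSuccEquiv n).symm)
    have e' := (assocU.trans e).trans assocV.symm
    obtain ⟨e''⟩ := cancelOne e'
    exact ih U V ⟨e''⟩

end H4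

/-- `ℂ^n × ℂ^m ≃ ℂ^(n+m)`. -/
noncomputable def piSumEquiv (n m : ℕ) : ((Fin n → ℂ) × (Fin m → ℂ)) ≃L[ℂ] (Fin (n + m) → ℂ) :=
  (((LinearEquiv.sumArrowLequivProdArrow (Fin n) (Fin m) ℂ ℂ).symm).trans
    (LinearEquiv.funCongrLeft ℂ ℂ finSumFinEquiv).symm).toContinuousLinearEquiv


noncomputable section MainAux

variable {X Y : Type*}
    [NormedAddCommGroup X] [NormedSpace ℂ X] [CompleteSpace X]
    [NormedAddCommGroup Y] [NormedSpace ℂ Y] [CompleteSpace Y]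


/-- cast equiv for powers of ℂ -/
def piCastEquiv {n m : ℕ} (h : n = m) : (Fin n → ℂ) ≃L[ℂ] (Fin m → ℂ) := by
  subst h; exact ContinuousLinearEquiv.refl ℂ _

/-- products with a finite-dimensional factor: prodAssoc as CLE -/
def prodAssocL (U V W : Type*) [NormedAddCommGroup U] [NormedSpace ℂ U]
    [NormedAddCommGroup V] [NormedSpace ℂ V] [NormedAddCommGroup W] [NormedSpace ℂ W] :
    ((U × V) × W) ≃L[ℂ] (U × (V × W)) :=
  (LinearIsometryEquiv.prodAssoc ℂ U V W).toContinuousLinearEquiv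

/-- The central isomorphism: for a regular Weyl pair, the kernel of `S` is isomorphic to the
canonical complement `ker (S ∘ S'')` of the range of `S`. -/
theorem mainIso (S : X →L[ℂ] Y) (T : Y →L[ℂ] X) (S'' : Y →L[ℂ] X) (T'' : X →L[ℂ] Y)
    (hS : S.comp (S''.comp S) = S) (hT : T.comp (T''.comp T) = T)
    (ha : FiniteDimensional ℂ (relQuot (S.ker) (T.range)))
    (hb : FiniteDimensional ℂ (relQuot (T.range) (S.ker)))
    (hc : FiniteDimensional ℂ (relQuot (T.ker) (S.range)))
    (hd : FiniteDimensional ℂ (relQuot (S.range) (T.ker)))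
    (hidx : relDim (S.ker) (T.range)
        + relDim (S.range) (T.ker)
      = relDim (T.range) (S.ker)
        + relDim (T.ker) (S.range)) :
    Nonempty (↥(S.ker) ≃L[ℂ] ↥((S.comp S'').ker)) := by
  -- pointwise versions of the regularity identities
  have hSpt : ∀ x, S (S'' (S x)) = S x := by
    intro x
    have := ContinuousLinearMap.ext_iff.1 hS x
    simpa using this
  have hTpt : ∀ y, T (T'' (T y)) = T y := by
    intro y
    have := ContinuousLinearMap.ext_iff.1 hT y
    simpa using this
  set N : Submodule ℂ X := S.ker with hN
  set RT : Submodule ℂ X := T.range with hRT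
  set K : Submodule ℂ Y := T.ker with hK
  set RS : Submodule ℂ Y := S.range with hRS
  set a := relDim N RT with hadim
  set b := relDim RT N with hbdim
  set c := relDim K RS with hcdim
  set d := relDim RS K with hddim
  set F : Submodule ℂ X := RT ⊓ N with hF
  set G : Submodule ℂ Y := RS ⊓ K with hG
  set N₁ : Submodule ℂ Y := (S.comp S'').ker with hN₁
  set M₂ : Submodule ℂ Y := (ContinuousLinearMap.id ℂ Y - T''.comp T).ker with hM₂
  -- closedness
  have hNcl : IsClosed (N : Set X) := ContinuousLinearMap.isClosed_ker S
  have hKcl : IsClosed (K : Set Y) := ContinuousLinearMap.isClosed_ker T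
  have hN₁cl : IsClosed (N₁ : Set Y) := ContinuousLinearMap.isClosed_ker _
  have hM₂cl : IsClosed (M₂ : Set Y) := ContinuousLinearMap.isClosed_ker _
  have hRSeq : RS = (ContinuousLinearMap.id ℂ Y - S.comp S'').ker := by
    ext y
    simp only [hRS, LinearMap.mem_range, LinearMap.mem_ker]
    constructor
    · rintro ⟨x, rfl⟩
      simp [hSpt x]
    · intro hy
      have hy' : y - S (S'' y) = 0 := by simpa using hy
      exact ⟨S'' y, (sub_eq_zero.mp hy').symm⟩
  have hRTeq : RT = (ContinuousLinearMap.id ℂ X - T.comp T'').ker := by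
    ext x
    simp only [hRT, LinearMap.mem_range, LinearMap.mem_ker]
    constructor
    · rintro ⟨y, rfl⟩
      simp [hTpt y]
    · intro hx
      have hx' : x - T (T'' x) = 0 := by simpa using hx
      exact ⟨T'' x, (sub_eq_zero.mp hx').symm⟩
  have hRScl : IsClosed (RS : Set Y) := by
    rw [hRSeq]; exact ContinuousLinearMap.isClosed_ker _
  have hRTcl : IsClosed (RT : Set X) := by
    rw [hRTeq]; exact ContinuousLinearMap.isClosed_ker _
  have hFcl : IsClosed (F : Set X) := by
    have : (F : Set X) = (RT : Set X) ∩ (N : Set X) := rfl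
    rw [this]; exact hRTcl.inter hNcl
  have hGcl : IsClosed (G : Set Y) := by
    have : (G : Set Y) = (RS : Set Y) ∩ (K : Set Y) := rfl
    rw [this]; exact hRScl.inter hKcl
  haveI := hNcl.completeSpace_coe
  haveI := hKcl.completeSpace_coe
  haveI := hN₁cl.completeSpace_coe
  haveI := hM₂cl.completeSpace_coe
  haveI := hRScl.completeSpace_coe
  haveI := hRTcl.completeSpace_coe
  haveI := hFcl.completeSpace_coe
  haveI := hGcl.completeSpace_coe
  -- relative complements
  obtain ⟨F', hF'le, hF'inf, hF'sup, ⟨lF'⟩⟩ := exists_rel_compl N RT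
  obtain ⟨F'', hF''le, hF''inf, hF''sup, ⟨lF''⟩⟩ := exists_rel_compl RT N
  obtain ⟨G', hG'le, hG'inf, hG'sup, ⟨lG'⟩⟩ := exists_rel_compl K RS
  obtain ⟨G'', hG''le, hG''inf, hG''sup, ⟨lG''⟩⟩ := exists_rel_compl RS K
  -- fix inf orders
  rw [show RT ⊓ N = F from rfl] at hF'inf hF'sup
  rw [show N ⊓ RT = F from (inf_comm N RT).trans rfl] at hF''inf hF''sup
  rw [show RS ⊓ K = G from rfl] at hG'inf hG'sup
  rw [show K ⊓ RS = G from (inf_comm K RS).trans rfl] at hG''inf hG''sup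
  -- finite dimensionality of the complements
  haveI : FiniteDimensional ℂ ↥F' := Module.Finite.equiv lF'.symm
  haveI : FiniteDimensional ℂ ↥F'' := Module.Finite.equiv lF''.symm
  haveI : FiniteDimensional ℂ ↥G' := Module.Finite.equiv lG'.symm
  haveI : FiniteDimensional ℂ ↥G'' := Module.Finite.equiv lG''.symm
  haveI := (F'.closed_of_finiteDimensional).completeSpace_coe
  haveI := (F''.closed_of_finiteDimensional).completeSpace_coe
  haveI := (G'.closed_of_finiteDimensional).completeSpace_coe
  haveI := (G''.closed_of_finiteDimensional).completeSpace_coe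
  have hrankF' : finrank ℂ ↥F' = a := lF'.finrank_eq
  have hrankF'' : finrank ℂ ↥F'' = b := lF''.finrank_eq
  have hrankG' : finrank ℂ ↥G' = c := lG'.finrank_eq
  have hrankG'' : finrank ℂ ↥G'' = d := lG''.finrank_eq
  -- basic decomposition facts in Y
  have hKM₂inf : K ⊓ M₂ = ⊥ := by
    rw [eq_bot_iff]
    rintro y ⟨hy1, hy2⟩
    have h1 : T y = 0 := hy1
    have h2 : y - T'' (T y) = 0 := by
      simpa using (show (ContinuousLinearMap.id ℂ Y - T''.comp T) y = 0 from hy2)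
    have : y = T'' (T y) := by rwa [sub_eq_zero] at h2
    simp only [Submodule.mem_bot]
    rw [this, h1]
    simp
  have hKM₂sup : K ⊔ M₂ = ⊤ := by
    rw [eq_top_iff]
    intro y _
    have hy1 : y - T'' (T y) ∈ K := by
      show T (y - T'' (T y)) = 0
      simp [hTpt y]
    have hy2 : T'' (T y) ∈ M₂ := by
      show (T'' (T y)) - T'' (T (T'' (T y))) = 0
      rw [hTpt y]
      simp
    have : y = (y - T'' (T y)) + T'' (T y) := by abel
    rw [this]
    exact Submodule.add_mem_sup hy1 hy2
  have hRSN₁inf : RS ⊓ N₁ = ⊥ := by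
    rw [eq_bot_iff]
    rintro y ⟨hy1, hy2⟩
    have h2 : S (S'' y) = 0 := hy2
    rcases hy1 with ⟨x, rfl⟩
    simp only [Submodule.mem_bot]
    rw [ContinuousLinearMap.coe_coe, ← hSpt x]
    exact h2
  have hRSN₁sup : RS ⊔ N₁ = ⊤ := by
    rw [eq_top_iff]
    intro y _
    have hy1 : S (S'' y) ∈ RS := ⟨S'' y, rfl⟩
    have hy2 : y - S (S'' y) ∈ N₁ := by
      show S (S'' (y - S (S'' y))) = 0
      rw [map_sub, map_sub, hSpt (S'' y), sub_self]
    have : y = S (S'' y) + (y - S (S'' y)) := by abel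
    rw [this]
    exact Submodule.add_mem_sup hy1 hy2
  -- the two complements of G in Y
  set A : Submodule ℂ Y := N₁ ⊔ G'' with hA
  set B : Submodule ℂ Y := M₂ ⊔ G' with hB
  have hAcl : IsClosed (A : Set Y) := isClosed_sup_findim N₁ G'' hN₁cl
  have hBcl : IsClosed (B : Set Y) := isClosed_sup_findim M₂ G' hM₂cl
  haveI := hAcl.completeSpace_coe
  haveI := hBcl.completeSpace_coe
  have hG''N₁inf : G'' ⊓ N₁ = ⊥ := by
    rw [eq_bot_iff]
    rintro y ⟨hy1, hy2⟩
    have : y ∈ RS ⊓ N₁ := ⟨hG''le hy1, hy2⟩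
    rw [hRSN₁inf] at this
    exact this
  have hG'M₂inf : G' ⊓ M₂ = ⊥ := by
    rw [eq_bot_iff]
    rintro y ⟨hy1, hy2⟩
    have : y ∈ K ⊓ M₂ := ⟨hG'le hy1, hy2⟩
    rw [hKM₂inf] at this
    exact this
  have hComplGA : IsCompl G A := by
    constructor
    · rw [disjoint_iff]
      rw [eq_bot_iff]
      rintro y ⟨hy1, hy2⟩
      rw [hA] at hy2
      rcases Submodule.mem_sup.1 hy2 with ⟨u, hu, v, hv, rfl⟩
      have huRS : u + v - v ∈ RS := by
        have h1 : u + v ∈ RS := hy1.1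
        have h2 : v ∈ RS := hG''le hv
        exact RS.sub_mem h1 h2
      have huN : u ∈ RS ⊓ N₁ := by
        constructor
        · simpa using huRS
        · exact hu
      rw [hRSN₁inf] at huN
      have hu0 : u = 0 := huN
      have : v ∈ G ⊓ G'' := by
        constructor
        · simpa [hu0] using hy1
        · exact hv
      rw [hG''inf] at this
      simp only [Submodule.mem_bot] at this ⊢
      simp [hu0, this]
    · rw [codisjoint_iff]
      rw [hA, ← sup_assoc, sup_comm G N₁, sup_assoc, hG''sup, sup_comm N₁ RS, hRSN₁sup]
  have hComplGB : IsCompl G B := by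
    constructor
    · rw [disjoint_iff]
      rw [eq_bot_iff]
      rintro y ⟨hy1, hy2⟩
      rw [hB] at hy2
      rcases Submodule.mem_sup.1 hy2 with ⟨u, hu, v, hv, rfl⟩
      have huK : u + v - v ∈ K := by
        have h1 : u + v ∈ K := hy1.2
        have h2 : v ∈ K := hG'le hv
        exact K.sub_mem h1 h2
      have huN : u ∈ K ⊓ M₂ := by
        constructor
        · simpa using huK
        · exact hu
      rw [hKM₂inf] at huN
      have hu0 : u = 0 := huN
      have : v ∈ G ⊓ G' := by
        constructor
        · simpa [hu0] using hy1
        · exact hv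
      rw [hG'inf] at this
      simp only [Submodule.mem_bot] at this ⊢
      simp [hu0, this]
    · rw [codisjoint_iff]
      rw [hB, ← sup_assoc, sup_comm G M₂, sup_assoc, hG'sup, sup_comm M₂ K, hKM₂sup]
  -- assemble the isomorphisms
  obtain ⟨eAB⟩ := complEquiv G A B hGcl hAcl hBcl hComplGA hComplGB
  obtain ⟨e1⟩ := sumEquiv G'' N₁ A hG''N₁inf (by rw [hA, sup_comm])
  obtain ⟨e2⟩ := sumEquiv G' M₂ B hG'M₂inf (by rw [hB, sup_comm])
  obtain ⟨e3⟩ := sumEquiv F F'' RT hF''inf hF''sup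
  obtain ⟨e4⟩ := sumEquiv F F' N hF'inf hF'sup
  -- M₂ ≃ RT via T
  have eM₂ : ↥M₂ ≃L[ℂ] ↥RT := by
    have hmem : ∀ m : ↥M₂, (T.comp M₂.subtypeL) m ∈ RT := by
      rintro ⟨m, hm⟩
      exact ⟨m, rfl⟩
    refine ContinuousLinearEquiv.ofBijective ((T.comp M₂.subtypeL).codRestrict RT hmem) ?_ ?_
    · rw [LinearMap.ker_eq_bot']
      rintro ⟨m, hm⟩ hTm
      have h1 : T m = 0 := by
        have := congrArg Subtype.val hTm
        simpa using this
      have h2 : m - T'' (T m) = 0 := by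
        simpa using (show (ContinuousLinearMap.id ℂ Y - T''.comp T) m = 0 from hm)
      rw [h1] at h2
      simp only [map_zero, sub_zero] at h2
      exact Subtype.ext h2
    · rw [LinearMap.range_eq_top]
      rintro ⟨x, hx⟩
      rcases hx with ⟨y, rfl⟩
      have hmm : T'' (T y) ∈ M₂ := by
        show (T'' (T y)) - T'' (T (T'' (T y))) = 0
        rw [hTpt y]
        simp
      refine ⟨⟨T'' (T y), hmm⟩, ?_⟩
      ext
      simpa using hTpt y
  -- finite-dimensional pieces
  obtain ⟨eF'0⟩ := findimEquivPi F'
  obtain ⟨eF''0⟩ := findimEquivPi F''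
  obtain ⟨eG'0⟩ := findimEquivPi G'
  obtain ⟨eG''0⟩ := findimEquivPi G''
  have eF' : ↥F' ≃L[ℂ] (Fin a → ℂ) := eF'0.trans (piCastEquiv hrankF')
  have eF'' : ↥F'' ≃L[ℂ] (Fin b → ℂ) := eF''0.trans (piCastEquiv hrankF'')
  have eG' : ↥G' ≃L[ℂ] (Fin c → ℂ) := eG'0.trans (piCastEquiv hrankG')
  have eG'' : ↥G'' ≃L[ℂ] (Fin d → ℂ) := eG''0.trans (piCastEquiv hrankG'')
  -- big chain : (N × ℂ^d) ≃L (N₁ × ℂ^d)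
  have eN : ↥N ≃L[ℂ] (↥F × (Fin a → ℂ)) :=
    e4.symm.trans ((ContinuousLinearEquiv.refl ℂ ↥F).prodCongr eF')
  have eRT : ↥RT ≃L[ℂ] (↥F × (Fin b → ℂ)) :=
    e3.symm.trans ((ContinuousLinearEquiv.refl ℂ ↥F).prodCongr eF'')
  have step1 : (↥N × (Fin d → ℂ)) ≃L[ℂ] (↥F × (Fin (a + d) → ℂ)) :=
    ((eN.prodCongr (ContinuousLinearEquiv.refl ℂ (Fin d → ℂ))).trans
      (prodAssocL ↥F (Fin a → ℂ) (Fin d → ℂ))).trans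
      ((ContinuousLinearEquiv.refl ℂ ↥F).prodCongr (piSumEquiv a d))
  have step2 : (↥F × (Fin (b + c) → ℂ)) ≃L[ℂ] (↥RT × (Fin c → ℂ)) :=
    (((ContinuousLinearEquiv.refl ℂ ↥F).prodCongr (piSumEquiv b c).symm).trans
      (prodAssocL ↥F (Fin b → ℂ) (Fin c → ℂ)).symm).trans
      (eRT.symm.prodCongr (ContinuousLinearEquiv.refl ℂ (Fin c → ℂ)))
  have step3 : (↥RT × (Fin c → ℂ)) ≃L[ℂ] ↥B :=
    ((eM₂.symm.prodCongr eG'.symm).trans (ContinuousLinearEquiv.prodComm ℂ ↥M₂ ↥G')).trans e2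
  have step4 : ↥A ≃L[ℂ] (↥N₁ × (Fin d → ℂ)) :=
    (e1.symm.trans (ContinuousLinearEquiv.prodComm ℂ ↥G'' ↥N₁)).trans
      ((ContinuousLinearEquiv.refl ℂ ↥N₁).prodCongr eG'')
  have bigE : (↥N × (Fin d → ℂ)) ≃L[ℂ] (↥N₁ × (Fin d → ℂ)) :=
    ((((step1.trans ((ContinuousLinearEquiv.refl ℂ ↥F).prodCongr (piCastEquiv hidx))).trans
      step2).trans step3).trans eAB.symm).trans step4
  obtain ⟨w⟩ := cancelFin d ↥N ↥N₁ ⟨bigE⟩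
  exact ⟨w⟩

end MainAux


noncomputable section H6

variable {X Y : Type*}
    [NormedAddCommGroup X] [NormedSpace ℂ X] [CompleteSpace X]
    [NormedAddCommGroup Y] [NormedSpace ℂ Y] [CompleteSpace Y]

/-- From a regular operator together with an isomorphism between `ker (S ∘ S'')` and `ker S`,
produce an invertible generalized inverse. -/
theorem constructEquiv (S : X →L[ℂ] Y) (S'' : Y →L[ℂ] X)
    (hS : S.comp (S''.comp S) = S)
    (e : ↥((S.comp S'').ker) ≃L[ℂ] ↥(S.ker)) :
    ∃ S' : Y ≃L[ℂ] X, S.comp ((S' : Y →L[ℂ] X).comp S) = S := by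
  have hSpt : ∀ x, S (S'' (S x)) = S x := by
    intro x
    have := ContinuousLinearMap.ext_iff.1 hS x
    simpa using this
  set Q : Y →L[ℂ] Y := S.comp S'' with hQ
  have hQQ : ∀ y, Q (Q y) = Q y := by
    intro y
    show S (S'' (S (S'' y))) = S (S'' y)
    exact hSpt (S'' y)
  have hρmem : ∀ y, (ContinuousLinearMap.id ℂ Y - Q) y ∈ (S.comp S'').ker := by
    intro y
    show (S.comp S'') (y - Q y) = 0
    have : Q (y - Q y) = 0 := by
      rw [map_sub, hQQ y, sub_self]
    exact this
  set ρ : Y →L[ℂ] ↥((S.comp S'').ker) :=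
    (ContinuousLinearMap.id ℂ Y - Q).codRestrict _ hρmem with hρ
  set W : Y →L[ℂ] X :=
    (S''.comp Q) + (S.ker).subtypeL.comp ((e : ↥((S.comp S'').ker) →L[ℂ] ↥(S.ker)).comp ρ) with hW
  have hWapp : ∀ y, W y = S'' (Q y) + ↑(e (ρ y)) := by
    intro y; rfl
  have hSW : ∀ y, S (W y) = Q y := by
    intro y
    rw [hWapp]
    have h1 : S (S'' (Q y)) = Q y := by
      show S (S'' (S (S'' y))) = S (S'' y)
      exact hSpt (S'' y)
    have h2 : S ((e (ρ y) : X)) = 0 := (e (ρ y)).2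
    rw [map_add, h1, h2, add_zero]
  have hker : W.ker = ⊥ := by
    rw [LinearMap.ker_eq_bot']
    intro y hy
    have hQy : Q y = 0 := by
      rw [← hSW y, show W y = 0 from hy, map_zero]
    have hρy : ((ρ y : Y)) = y := by
      show y - Q y = y
      rw [hQy, sub_zero]
    have : (↑(e (ρ y)) : X) = 0 := by
      have := hWapp y
      rw [show W y = 0 from hy, hQy, map_zero] at this
      -- this : 0 = S'' 0 + e (ρ y)
      have h0 : (0 : X) = 0 + ↑(e (ρ y)) := by simpa using this
      simpa using h0.symm
    have he0 : e (ρ y) = 0 := Subtype.ext this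
    have hρ0 : ρ y = 0 := by
      apply e.injective
      rw [he0, map_zero]
    have : y - Q y = 0 := congrArg Subtype.val hρ0
    rw [hQy, sub_zero] at this
    exact this
  have hrange : W.range = ⊤ := by
    rw [LinearMap.range_eq_top]
    intro x
    have hkmem : x - S'' (S x) ∈ S.ker := by
      show S (x - S'' (S x)) = 0
      rw [map_sub, hSpt x, sub_self]
    set k : ↥(S.ker) := ⟨x - S'' (S x), hkmem⟩ with hk
    set y : Y := S x + ↑(e.symm k) with hy
    refine ⟨y, ?_⟩
    have hQy : Q y = S x := by
      rw [hy, map_add]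
      have h1 : Q (S x) = S x := by
        show S (S'' (S x)) = S x
        exact hSpt x
      have h2 : Q ((e.symm k : Y)) = 0 := (e.symm k).2
      rw [h1, h2, add_zero]
    have hρy : ρ y = e.symm k := by
      apply Subtype.ext
      show y - Q y = (e.symm k : Y)
      rw [hQy, hy]
      abel
    rw [ContinuousLinearMap.coe_coe, hWapp, hQy, hρy, e.apply_symm_apply]
    show S'' (S x) + (x - S'' (S x)) = x
    abel
  refine ⟨ContinuousLinearEquiv.ofBijective W hker hrange, ?_⟩
  have hcoe : ((ContinuousLinearEquiv.ofBijective W hker hrange : Y ≃L[ℂ] X) : Y →L[ℂ] X) = W :=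
    ContinuousLinearEquiv.coe_ofBijective W hker hrange
  rw [hcoe]
  ext x
  show S (W (S x)) = S x
  rw [hSW (S x)]
  exact hSpt x

end H6

end AuxiliaryLemmas

/-- A regular Weyl pair (regular Fredholm pair of index 0) consists of decomposably
regular operators: `S` and `T` admit invertible generalized inverses. -/
theorem regularWeylPair_decomposablyRegular {X Y : Type*}
    [NormedAddCommGroup X] [NormedSpace ℂ X] [CompleteSpace X]
    [NormedAddCommGroup Y] [NormedSpace ℂ Y] [CompleteSpace Y]
    (S : X →L[ℂ] Y) (T : Y →L[ℂ] X) (h : IsFredholmPair S T)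
    (hS : IsRegularOp S) (hT : IsRegularOp T) (hW : fpIndex S T = 0) :
    ∃ (S' : Y ≃L[ℂ] X) (T' : X ≃L[ℂ] Y),
      S.comp ((S' : Y →L[ℂ] X).comp S) = S ∧
      T.comp ((T' : X →L[ℂ] Y).comp T) = T := by
  obtain ⟨S'', hS''⟩ := hS
  obtain ⟨T'', hT''⟩ := hT
  obtain ⟨ha, hb, hc, hd⟩ := h
  have hidx1 : relDim (S.ker) (T.range)
      + relDim (S.range) (T.ker)
    = relDim (T.range) (S.ker)
      + relDim (T.ker) (S.range) := by
    unfold fpIndex at hW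
    omega
  have hidx2 : relDim (T.ker) (S.range)
      + relDim (T.range) (S.ker)
    = relDim (S.range) (T.ker)
      + relDim (S.ker) (T.range) := by
    unfold fpIndex at hW
    omega
  obtain ⟨e₁⟩ := mainIso S T S'' T'' hS'' hT'' ha hb hc hd hidx1
  obtain ⟨e₂⟩ := mainIso T S T'' S'' hT'' hS'' hc hd ha hb hidx2
  obtain ⟨S', hS'⟩ := constructEquiv S S'' hS'' e₁.symm
  obtain ⟨T', hT'⟩ := constructEquiv T T'' hT'' e₂.symm
  exact ⟨S', T', hS', hT'⟩
end
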